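/- arXiv:1709.07760 — 6 statements merged into one kernel-verified Lean document; each statement's English description precedes it below -/
import Mathlib

section
/- Let μ > 0 and let S, Z : (0,∞) → ℝ be twice continuously differentiable functions solving the reduced soliton-star system S''(ξ) + (2/ξ)S'(ξ) − S(ξ) = S(ξ)Z(ξ) and Z''(ξ) + (2/ξ)Z'(ξ) = μ S(ξ)² on (0,∞). Assume ∫₀^∞ ξ²(S(ξ)² + S'(ξ)²) dξ < ∞ and Z(ξ) → 0 as ξ → ∞. Then for every α ∈ (0,1) there exists a constant C > 0 such that |S(ξ)| ≤ C e^{−αξ} for all ξ ≥ 1. -/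
open MeasureTheory Filter Set


/-- Core convexity lemma: if `w'' > 0` wherever `w > 0` on `[c,∞)`, and
`w c > 0`, `w' c > 0`, then `w ≥ w c` on `[c,∞)`. -/
lemma soliton_core (w w1 w2 : ℝ → ℝ) (c : ℝ)
    (hw : ∀ ξ ∈ Set.Ici c, HasDerivAt w (w1 ξ) ξ)
    (hw1 : ∀ ξ ∈ Set.Ici c, HasDerivAt w1 (w2 ξ) ξ)
    (hpos : ∀ ξ ∈ Set.Ici c, 0 < w ξ → 0 < w2 ξ)
    (hc : 0 < w c) (hc1 : 0 < w1 c) :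
    ∀ ξ ∈ Set.Ici c, w c ≤ w ξ := by
  by_contra hcon
  push_neg at hcon
  obtain ⟨ξ₀, hξ₀, hlt⟩ := hcon
  set F : Set ℝ := {ξ | ξ ∈ Set.Ici c ∧ w ξ < w c} with hF
  have hFne : F.Nonempty := ⟨ξ₀, hξ₀, hlt⟩
  have hFbdd : BddBelow F := ⟨c, fun x hx => hx.1⟩
  set d := sInf F with hd
  have hdc : c ≤ d := le_csInf hFne fun x hx => hx.1
  have hge : ∀ ξ, c ≤ ξ → ξ < d → w c ≤ w ξ := by
    intro ξ h1 h2
    by_contra hh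
    push_neg at hh
    exact absurd (csInf_le hFbdd ⟨h1, hh⟩) (not_le.2 h2)
  have hwd : w d ≤ w c := by
    obtain ⟨x, hx, hxd⟩ := mem_closure_iff_seq_limit.1 (csInf_mem_closure hFne hFbdd)
    have ht : Filter.Tendsto (fun n => w (x n)) Filter.atTop (nhds (w d)) :=
      ((hw d hdc).continuousAt.tendsto.comp hxd)
    exact le_of_tendsto ht (Filter.Eventually.of_forall fun n => (hx n).2.le)
  rcases eq_or_lt_of_le hdc with hdc' | hdc'
  · -- d = c : w1 > 0 on a right-neighborhood of c, so w increases past c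
    have hev : ∀ᶠ ξ in nhds c, 0 < w1 ξ :=
      (hw1 c Set.self_mem_Ici).continuousAt.tendsto.eventually_const_lt hc1
    obtain ⟨ε, hε, hball⟩ := Metric.eventually_nhds_iff.1 hev
    set b := c + ε / 2 with hb
    have hmono : StrictMonoOn w (Set.Icc c b) := by
      apply strictMonoOn_of_deriv_pos (convex_Icc c b)
      · intro x hx
        exact (hw x (Set.mem_Ici.2 hx.1)).continuousAt.continuousWithinAt
      · intro x hx
        rw [interior_Icc] at hx
        obtain ⟨hx1, hx2⟩ := hx
        rw [hb] at hx2
        rw [(hw x (Set.mem_Ici.2 hx1.le)).deriv]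
        apply hball
        rw [Real.dist_eq, abs_of_pos (by linarith)]
        linarith
    have hlb : ∀ x ∈ F, b ≤ x := by
      intro x hx
      by_contra hxb
      push_neg at hxb
      rcases eq_or_lt_of_le (Set.mem_Ici.1 hx.1) with h | h
      · exact absurd hx.2 (by rw [← h]; exact lt_irrefl _)
      · have : w c < w x := hmono ⟨le_rfl, by linarith⟩ ⟨hx.1, hxb.le⟩ h
        linarith [hx.2]
    have hbd : b ≤ d := le_csInf hFne hlb
    rw [← hdc', hb] at hbd
    linarith
  · -- c < d : w ≥ w c > 0 on [c,d), so w'' > 0 there, so w strictly increases to d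
    have hwpos : ∀ x ∈ Set.Ico c d, 0 < w x := fun x hx => lt_of_lt_of_le hc (hge x hx.1 hx.2)
    have hmono1 : StrictMonoOn w1 (Set.Icc c d) := by
      apply strictMonoOn_of_deriv_pos (convex_Icc c d)
      · intro x hx
        exact (hw1 x (Set.mem_Ici.2 hx.1)).continuousAt.continuousWithinAt
      · intro x hx
        rw [interior_Icc] at hx
        rw [(hw1 x (Set.mem_Ici.2 hx.1.le)).deriv]
        exact hpos x (Set.mem_Ici.2 hx.1.le) (hwpos x ⟨hx.1.le, hx.2⟩)
    have hw1pos : ∀ x ∈ Set.Ioo c d, 0 < w1 x := by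
      intro x hx
      have := hmono1 (Set.left_mem_Icc.2 hdc) ⟨hx.1.le, hx.2.le⟩ hx.1
      linarith
    have hmonow : StrictMonoOn w (Set.Icc c d) := by
      apply strictMonoOn_of_deriv_pos (convex_Icc c d)
      · intro x hx
        exact (hw x (Set.mem_Ici.2 hx.1)).continuousAt.continuousWithinAt
      · intro x hx
        rw [interior_Icc] at hx
        rw [(hw x (Set.mem_Ici.2 hx.1.le)).deriv]
        exact hw1pos x hx
    have : w c < w d := hmonow (Set.left_mem_Icc.2 hdc) (Set.right_mem_Icc.2 hdc) hdc'
    linarith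

/-- Barrier argument: a solution of `u'' = q u` with `q ≥ α² > 0` on `[R,∞)` whose
square is integrable satisfies `u ≤ (|u R|+1) e^{αR} e^{-αξ}` on `[R,∞)`. -/
lemma soliton_upper (α R : ℝ) (hα0 : 0 < α) (u u1 q : ℝ → ℝ)
    (hu : ∀ ξ ∈ Set.Ici R, HasDerivAt u (u1 ξ) ξ)
    (hu1 : ∀ ξ ∈ Set.Ici R, HasDerivAt u1 (q ξ * u ξ) ξ)
    (hq : ∀ ξ ∈ Set.Ici R, α ^ 2 ≤ q ξ)
    (hint : IntegrableOn (fun ξ => (u ξ) ^ 2) (Set.Ici R)) :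
    ∀ ξ ∈ Set.Ici R, u ξ ≤ (|u R| + 1) * Real.exp (α * R) * Real.exp (-α * ξ) := by
  set M : ℝ := (|u R| + 1) * Real.exp (α * R) with hM
  set φ : ℝ → ℝ := fun ξ => M * Real.exp (-α * ξ) with hφ
  have hφpos : ∀ ξ, 0 < φ ξ := by
    intro ξ
    apply mul_pos _ (Real.exp_pos _)
    positivity
  have hφd : ∀ ξ : ℝ, HasDerivAt φ (-(α * φ ξ)) ξ := by
    intro ξ
    have h1 : HasDerivAt (fun t : ℝ => -α * t) (-α) ξ := by
      simpa using (hasDerivAt_id ξ).const_mul (-α)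
    have h2 := (Real.hasDerivAt_exp (-α * ξ)).comp ξ h1
    have h3 := h2.const_mul M
    exact h3.congr_deriv (by simp only [hφ]; ring)
  have hφd2 : ∀ ξ : ℝ, HasDerivAt (fun t => -(α * φ t)) (α ^ 2 * φ ξ) ξ := by
    intro ξ
    have := ((hφd ξ).const_mul α).neg
    exact this.congr_deriv (by ring)
  by_contra hcon
  push_neg at hcon
  obtain ⟨ξ₁, hξ₁, hbig⟩ := hcon
  set w : ℝ → ℝ := fun ξ => u ξ - φ ξ with hw
  set w1 : ℝ → ℝ := fun ξ => u1 ξ - -(α * φ ξ) with hw1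
  set w2 : ℝ → ℝ := fun ξ => q ξ * u ξ - α ^ 2 * φ ξ with hw2
  have hwd : ∀ ξ ∈ Set.Ici R, HasDerivAt w (w1 ξ) ξ := fun ξ hξ => (hu ξ hξ).sub (hφd ξ)
  have hwd1 : ∀ ξ ∈ Set.Ici R, HasDerivAt w1 (w2 ξ) ξ := fun ξ hξ => (hu1 ξ hξ).sub (hφd2 ξ)
  have hwR : w R < 0 := by
    have h1 : φ R = |u R| + 1 := by
      have he : Real.exp (α * R) * Real.exp (-α * R) = 1 := by
        rw [← Real.exp_add]; simp
      simp only [hφ, hM]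
      rw [mul_assoc, he, mul_one]
    have h2 : u R ≤ |u R| := le_abs_self _
    simp only [hw]
    rw [h1]
    linarith
  have hwξ₁ : 0 < w ξ₁ := by
    simp only [hw, hφ]
    linarith [hbig]
  have hRξ₁ : R < ξ₁ := by
    rcases eq_or_lt_of_le (Set.mem_Ici.1 hξ₁) with h | h
    · exfalso; rw [← h] at hwξ₁; linarith
    · exact h
  -- last zero crossing before ξ₁
  set A : Set ℝ := {t | t ∈ Set.Icc R ξ₁ ∧ w t ≤ 0} with hA
  have hAne : A.Nonempty := ⟨R, ⟨le_rfl, hRξ₁.le⟩, hwR.le⟩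
  have hAbdd : BddAbove A := ⟨ξ₁, fun x hx => hx.1.2⟩
  set a := sSup A with ha
  have haR : R ≤ a := le_csSup hAbdd ⟨⟨le_rfl, hRξ₁.le⟩, hwR.le⟩
  have haξ₁ : a ≤ ξ₁ := csSup_le hAne fun x hx => hx.1.2
  have hwa : w a ≤ 0 := by
    obtain ⟨x, hx, hxa⟩ := mem_closure_iff_seq_limit.1 (csSup_mem_closure hAne hAbdd)
    have ht : Filter.Tendsto (fun n => w (x n)) Filter.atTop (nhds (w a)) :=
      ((hwd a haR).continuousAt.tendsto.comp hxa)
    exact le_of_tendsto ht (Filter.Eventually.of_forall fun n => (hx n).2)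
  have haξ₁' : a < ξ₁ := by
    rcases eq_or_lt_of_le haξ₁ with h | h
    · exfalso; rw [h] at hwa; linarith
    · exact h
  have hwpos : ∀ t, a < t → t ≤ ξ₁ → 0 < w t := by
    intro t h1 h2
    by_contra hh
    push_neg at hh
    have : t ≤ a := le_csSup hAbdd ⟨⟨le_trans haR h1.le, h2⟩, hh⟩
    linarith
  -- mean value theorem on [a, ξ₁]
  obtain ⟨c, hc, hslope⟩ := exists_hasDerivAt_eq_slope w w1 haξ₁'
    (fun x hx => (hwd x (Set.mem_Ici.2 (le_trans haR hx.1))).continuousAt.continuousWithinAt)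
    (fun x hx => hwd x (Set.mem_Ici.2 (le_trans haR hx.1.le)))
  have hcR : R ≤ c := le_trans haR hc.1.le
  have hw1c : 0 < w1 c := by
    rw [hslope]
    apply div_pos _ (by linarith [hc.2])
    have := hwpos ξ₁ haξ₁' le_rfl
    linarith
  have hwc : 0 < w c := hwpos c hc.1 hc.2.le
  -- apply core lemma on [c, ∞)
  have hcore := soliton_core w w1 w2 c
    (fun ξ hξ => hwd ξ (Set.mem_Ici.2 (le_trans hcR hξ)))
    (fun ξ hξ => hwd1 ξ (Set.mem_Ici.2 (le_trans hcR hξ)))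
    (fun ξ hξ hwξ => by
      have hξR : ξ ∈ Set.Ici R := Set.mem_Ici.2 (le_trans hcR hξ)
      have h1 := hq ξ hξR
      have h2 : φ ξ < u ξ := by simp only [hw] at hwξ; linarith
      have h3 := hφpos ξ
      simp only [hw2]
      nlinarith [mul_nonneg (sub_nonneg.2 h1) (le_of_lt (lt_trans h3 h2)),
        mul_pos (pow_pos hα0 2) (sub_pos.2 h2)])
    hwc hw1c
  -- u ≥ w c > 0 on [c, ∞), contradicting integrability
  have hulb : ∀ ξ ∈ Set.Ici c, w c ≤ u ξ := by
    intro ξ hξ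
    have h1 := hcore ξ hξ
    have h2 := hφpos ξ
    simp only [hw] at h1 ⊢
    linarith
  have hconst : Integrable (fun _ : ℝ => (w c) ^ 2) (volume.restrict (Set.Ici c)) := by
    refine Integrable.mono' (hint.mono_set (Set.Ici_subset_Ici.2 hcR)) aestronglyMeasurable_const ?_
    rw [ae_restrict_iff' measurableSet_Ici]
    refine Filter.Eventually.of_forall fun ξ hξ => ?_
    have h1 := hulb ξ hξ
    have h2 : (0:ℝ) < w c := hwc
    rw [Real.norm_eq_abs, abs_of_nonneg (by positivity)]
    nlinarith
  rcases integrable_const_iff.1 hconst with h | h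
  · exact absurd h (by positivity)
  · rw [isFiniteMeasure_restrict, Real.volume_Ici] at h
    exact absurd h (by simp)

/-- Exponential decay of the scalar field profile (first part of Theorem 3):
any solution of the reduced soliton-star system with finite H¹-type energy and
`Z → 0` at infinity decays like `e^{-αξ}` for every `α < 1`. -/
theorem soliton_star_exponential_decay
    (μ : ℝ) (hμ : 0 < μ) (S Z : ℝ → ℝ)
    (hS : ContDiffOn ℝ 2 S (Set.Ioi 0))
    (hZ : ContDiffOn ℝ 2 Z (Set.Ioi 0))
    (heqS : ∀ ξ ∈ Set.Ioi (0:ℝ),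
      deriv (deriv S) ξ + (2/ξ) * deriv S ξ - S ξ = S ξ * Z ξ)
    (heqZ : ∀ ξ ∈ Set.Ioi (0:ℝ),
      deriv (deriv Z) ξ + (2/ξ) * deriv Z ξ = μ * S ξ ^ 2)
    (hint : IntegrableOn (fun ξ => ξ ^ 2 * (S ξ ^ 2 + (deriv S ξ) ^ 2)) (Set.Ioi 0))
    (hZ0 : Tendsto Z atTop (nhds 0)) :
    ∀ α ∈ Set.Ioo (0:ℝ) 1, ∃ C > 0, ∀ ξ ≥ (1:ℝ), |S ξ| ≤ C * Real.exp (-α * ξ) := by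
  intro α hα
  obtain ⟨hα0, hα1⟩ := hα
  -- basic differentiability facts
  have hSd : DifferentiableOn ℝ S (Set.Ioi 0) := hS.differentiableOn (by norm_num)
  have hSd2 : DifferentiableOn ℝ (deriv S) (Set.Ioi 0) :=
    (hS.deriv_of_isOpen (m := 1) isOpen_Ioi (by norm_num)).differentiableOn one_ne_zero
  have hdS : ∀ ξ ∈ Set.Ioi (0:ℝ), HasDerivAt S (deriv S ξ) ξ := fun ξ hξ =>
    (hSd.differentiableAt (isOpen_Ioi.mem_nhds hξ)).hasDerivAt
  have hdS2 : ∀ ξ ∈ Set.Ioi (0:ℝ), HasDerivAt (deriv S) (deriv (deriv S) ξ) ξ := fun ξ hξ =>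
    (hSd2.differentiableAt (isOpen_Ioi.mem_nhds hξ)).hasDerivAt
  -- the substituted function u = ξ S and its derivatives
  set u : ℝ → ℝ := fun ξ => ξ * S ξ with hu_def
  set u1 : ℝ → ℝ := fun ξ => S ξ + ξ * deriv S ξ with hu1_def
  set q : ℝ → ℝ := fun ξ => 1 + Z ξ with hq_def
  have hud : ∀ ξ ∈ Set.Ioi (0:ℝ), HasDerivAt u (u1 ξ) ξ := by
    intro ξ hξ
    have := (hasDerivAt_id ξ).mul (hdS ξ hξ)
    exact this.congr_deriv (by simp only [hu1_def, id_eq]; ring)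
  have hud1 : ∀ ξ ∈ Set.Ioi (0:ℝ), HasDerivAt u1 (q ξ * u ξ) ξ := by
    intro ξ hξ
    have h1 := (hdS ξ hξ).add ((hasDerivAt_id ξ).mul (hdS2 ξ hξ))
    have hξ0 : ξ ≠ 0 := ne_of_gt hξ
    have h := heqS ξ hξ
    field_simp at h
    refine h1.congr_deriv ?_
    simp only [id_eq, hq_def, hu_def]
    first
      | linear_combination h
      | linear_combination -h
      | linear_combination ξ * h
      | linear_combination -(ξ * h)
  -- choose R so that q ≥ α² on [R, ∞)
  have hε : (0:ℝ) < 1 - α ^ 2 := by nlinarith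
  obtain ⟨N, hN⟩ := Metric.tendsto_atTop.1 hZ0 (1 - α ^ 2) hε
  set R : ℝ := max N 1 with hR_def
  have hR1 : (1:ℝ) ≤ R := le_max_right _ _
  have hR0 : (0:ℝ) < R := lt_of_lt_of_le zero_lt_one hR1
  have hsub : Set.Ici R ⊆ Set.Ioi (0:ℝ) := fun x hx =>
    lt_of_lt_of_le hR0 (Set.mem_Ici.1 hx)
  have hq2 : ∀ ξ ∈ Set.Ici R, α ^ 2 ≤ q ξ := by
    intro ξ hξ
    have h := hN ξ (le_trans (le_max_left _ _) (Set.mem_Ici.1 hξ))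
    rw [Real.dist_eq, sub_zero] at h
    have := abs_lt.1 h
    simp only [hq_def]
    linarith [this.1]
  -- integrability of u²
  have hucont : ContinuousOn u (Set.Ici R) :=
    continuous_id.continuousOn.mul (hS.continuousOn.mono hsub)
  have hintu : IntegrableOn (fun ξ => (u ξ) ^ 2) (Set.Ici R) := by
    refine Integrable.mono' (hint.mono_set hsub) ?_ ?_
    · exact ((hucont.pow 2).aestronglyMeasurable measurableSet_Ici)
    · rw [ae_restrict_iff' measurableSet_Ici]
      refine Filter.Eventually.of_forall fun ξ hξ => ?_
      rw [Real.norm_eq_abs, abs_of_nonneg (by positivity)]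
      simp only [hu_def]
      nlinarith [sq_nonneg (ξ * deriv S ξ), sq_nonneg (deriv S ξ), sq_nonneg ξ]
  -- apply the barrier lemma to u and -u
  have hub := soliton_upper α R hα0 u u1 q
    (fun ξ hξ => hud ξ (hsub hξ)) (fun ξ hξ => hud1 ξ (hsub hξ)) hq2 hintu
  have hlb := soliton_upper α R hα0 (fun ξ => -(u ξ)) (fun ξ => -(u1 ξ)) q
    (fun ξ hξ => (hud ξ (hsub hξ)).neg)
    (fun ξ hξ => by
      have := (hud1 ξ (hsub hξ)).neg
      exact this.congr_deriv (by show _ = q ξ * -(u ξ); ring))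
    hq2
    (by simpa using hintu)
  set M : ℝ := (|u R| + 1) * Real.exp (α * R) with hM_def
  have hMpos : 0 < M := by positivity
  have habs : ∀ ξ ∈ Set.Ici R, |u ξ| ≤ M * Real.exp (-α * ξ) := by
    intro ξ hξ
    have h1 := hub ξ hξ
    have h2 := hlb ξ hξ
    simp only [abs_neg] at h2
    have hMe : (|u R| + 1) * Real.exp (α * R) * Real.exp (-α * ξ) = M * Real.exp (-α * ξ) := by
      rw [hM_def]
    rw [hMe] at h2
    rw [abs_le]
    constructor <;> linarith
  -- bound on the compact part [1, R]
  obtain ⟨K, hK⟩ := (isCompact_Icc (a := (1:ℝ)) (b := R)).exists_bound_of_continuousOn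
    (hS.continuousOn.mono fun x hx => lt_of_lt_of_le zero_lt_one hx.1)
  have hK0 : 0 ≤ K := le_trans (norm_nonneg (S 1)) (hK 1 ⟨le_rfl, hR1⟩)
  set C : ℝ := max M ((K + 1) * Real.exp (α * R)) with hC_def
  refine ⟨C, lt_of_lt_of_le hMpos (le_max_left _ _), ?_⟩
  intro ξ hξ
  rcases le_total ξ R with hcase | hcase
  · -- 1 ≤ ξ ≤ R
    have h1 : |S ξ| ≤ K := by
      have := hK ξ ⟨hξ, hcase⟩
      rwa [Real.norm_eq_abs] at this
    have h2 : (1:ℝ) ≤ Real.exp (α * R) * Real.exp (-α * ξ) := by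
      rw [← Real.exp_add]
      apply Real.one_le_exp
      nlinarith
    have h3 : K ≤ (K + 1) * (Real.exp (α * R) * Real.exp (-α * ξ)) := by
      nlinarith
    calc |S ξ| ≤ K := h1
      _ ≤ (K + 1) * (Real.exp (α * R) * Real.exp (-α * ξ)) := h3
      _ = (K + 1) * Real.exp (α * R) * Real.exp (-α * ξ) := by ring
      _ ≤ C * Real.exp (-α * ξ) :=
        mul_le_mul_of_nonneg_right (le_max_right _ _) (Real.exp_pos _).le
  · -- ξ ≥ R
    have h1 := habs ξ (Set.mem_Ici.2 hcase)
    have hξ1 : (1:ℝ) ≤ ξ := le_trans hR1 hcase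
    have h2 : |S ξ| ≤ |u ξ| := by
      simp only [hu_def]
      rw [abs_mul, abs_of_pos (lt_of_lt_of_le zero_lt_one hξ1)]
      nlinarith [abs_nonneg (S ξ)]
    calc |S ξ| ≤ |u ξ| := h2
      _ ≤ M * Real.exp (-α * ξ) := h1
      _ ≤ C * Real.exp (-α * ξ) :=
        mul_le_mul_of_nonneg_right (le_max_left _ _) (Real.exp_pos _).le
end

section
/- Let β > 0, R ∈ ℝ, and let w : [R,∞) → ℝ be twice continuously differentiable with w(ξ) ≥ 0 for all ξ ≥ R, ∫_R^∞ w(ξ) dξ < ∞, ∫_R^∞ |w'(ξ)| dξ < ∞, and w''(ξ) − β² w(ξ) ≥ 0 for all ξ ≥ R. Then w(ξ) ≤ w(R) e^{−β(ξ−R)} for all ξ ≥ R. -/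
open MeasureTheory Filter Set

/-- Comparison lemma for the exponential decay (key step in Theorem 3):
if `w ≥ 0` is integrable on `[R,∞)` together with `|w'|`, and satisfies
`w'' - β² w ≥ 0`, then `w(ξ) ≤ w(R) e^{-β(ξ-R)}`. -/
theorem comparison_exponential_decay
    (β R : ℝ) (hβ : 0 < β) (w : ℝ → ℝ)
    (hw : ContDiffOn ℝ 2 w (Set.Ici R))
    (hpos : ∀ ξ ∈ Set.Ici R, 0 ≤ w ξ)
    (hint : IntegrableOn w (Set.Ici R))
    (hint' : IntegrableOn (fun ξ => |derivWithin w (Set.Ici R) ξ|) (Set.Ici R))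
    (hineq : ∀ ξ ∈ Set.Ici R,
      β ^ 2 * w ξ ≤ derivWithin (derivWithin w (Set.Ici R)) (Set.Ici R) ξ) :
    ∀ ξ ∈ Set.Ici R, w ξ ≤ w R * Real.exp (-β * (ξ - R)) := by
  set f : ℝ → ℝ := derivWithin w (Set.Ici R) with hf_def
  set f' : ℝ → ℝ := derivWithin f (Set.Ici R) with hf'_def
  have huniq : UniqueDiffOn ℝ (Set.Ici R) := uniqueDiffOn_Ici R
  have hw1 : ContDiffOn ℝ 1 f (Set.Ici R) := hw.derivWithin huniq (by norm_num)
  have hwd : DifferentiableOn ℝ w (Set.Ici R) := hw.differentiableOn two_ne_zero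
  have hfd : DifferentiableOn ℝ f (Set.Ici R) := hw1.differentiableOn one_ne_zero
  have hwc : ContinuousOn w (Set.Ici R) := hw.continuousOn
  have hfc : ContinuousOn f (Set.Ici R) := hw1.continuousOn
  -- derivatives at interior points
  have hwd' : ∀ ξ ∈ Set.Ioi R, HasDerivAt w (f ξ) ξ := fun ξ hξ =>
    ((hwd ξ (Set.Ioi_subset_Ici_self hξ)).hasDerivWithinAt).hasDerivAt (Ici_mem_nhds hξ)
  have hfd' : ∀ ξ ∈ Set.Ioi R, HasDerivAt f (f' ξ) ξ := fun ξ hξ =>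
    ((hfd ξ (Set.Ioi_subset_Ici_self hξ)).hasDerivWithinAt).hasDerivAt (Ici_mem_nhds hξ)
  set ψ : ℝ → ℝ := fun ξ => (f ξ + β * w ξ) * Real.exp (-β * ξ) with hψ_def
  have hexpd : ∀ c ξ : ℝ, HasDerivAt (fun x => Real.exp (c * x)) (c * Real.exp (c * ξ)) ξ := by
    intro c ξ
    have h1 : HasDerivAt (fun x : ℝ => c * x) c ξ := by
      simpa using (hasDerivAt_id ξ).const_mul c
    simpa [mul_comm] using h1.exp
  have hψd : ∀ ξ ∈ Set.Ioi R,
      HasDerivAt ψ ((f' ξ - β ^ 2 * w ξ) * Real.exp (-β * ξ)) ξ := by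
    intro ξ hξ
    have h1 : HasDerivAt (fun x => f x + β * w x) (f' ξ + β * f ξ) ξ :=
      (hfd' ξ hξ).add ((hwd' ξ hξ).const_mul β)
    have h2 := hexpd (-β) ξ
    have h3 : HasDerivAt (fun x => (f x + β * w x) * Real.exp (-β * x)) _ ξ := h1.mul h2
    convert h3 using 1
    ring
  -- ψ is monotone on Ici R
  have hψc : ContinuousOn ψ (Set.Ici R) :=
    (hfc.add (continuousOn_const.mul hwc)).mul
      (Real.continuous_exp.comp (continuous_const.mul continuous_id)).continuousOn
  have hψmono : MonotoneOn ψ (Set.Ici R) := by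
    apply monotoneOn_of_hasDerivWithinAt_nonneg (convex_Ici R) hψc
      (f' := fun ξ => (f' ξ - β ^ 2 * w ξ) * Real.exp (-β * ξ))
    · intro x hx
      rw [interior_Ici] at hx
      exact (hψd x hx).hasDerivWithinAt
    · intro x hx
      rw [interior_Ici] at hx
      have h := hineq x (Set.Ioi_subset_Ici_self hx)
      have : 0 ≤ f' x - β ^ 2 * w x := by linarith
      positivity
  -- integrability of f + β w
  have hfmeas : AEStronglyMeasurable f (volume.restrict (Set.Ici R)) :=
    hfc.aestronglyMeasurable measurableSet_Ici
  have hfint : IntegrableOn f (Set.Ici R) :=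
    hint'.mono' hfmeas (Filter.Eventually.of_forall fun ξ => le_of_eq (Real.norm_eq_abs _))
  have hhint : IntegrableOn (fun ξ => f ξ + β * w ξ) (Set.Ici R) :=
    hfint.add (hint.const_mul β)
  -- ψ ≤ 0 everywhere on Ici R
  have hψle : ∀ ξ ∈ Set.Ici R, ψ ξ ≤ 0 := by
    by_contra hcon
    push_neg at hcon
    obtain ⟨ξ₀, hξ₀, hc⟩ := hcon
    set c := ψ ξ₀ with hc_def
    set m := max ξ₀ 0 with hm_def
    have hmR : R ≤ m := le_trans hξ₀ (le_max_left _ _)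
    have hbound : ∀ ξ ∈ Set.Ici m, c ≤ f ξ + β * w ξ := by
      intro ξ hξ
      have hξ₀ξ : ξ₀ ≤ ξ := le_trans (le_max_left _ _) hξ
      have hξR : R ≤ ξ := le_trans hmR hξ
      have h1 : c ≤ ψ ξ := hψmono hξ₀ hξR hξ₀ξ
      have h2 : (0:ℝ) ≤ ξ := le_trans (le_max_right _ _) hξ
      have h3 : (1:ℝ) ≤ Real.exp (β * ξ) := Real.one_le_exp (by positivity)
      have h4 : f ξ + β * w ξ = ψ ξ * Real.exp (β * ξ) := by
        rw [hψ_def]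
        simp only
        rw [mul_assoc, ← Real.exp_add]
        ring_nf
        simp
      rw [h4]
      calc c = c * 1 := (mul_one c).symm
        _ ≤ ψ ξ * Real.exp (β * ξ) := by
            apply mul_le_mul h1 h3 zero_le_one (le_trans (le_of_lt hc) h1)
    have hconst : IntegrableOn (fun _ : ℝ => c) (Set.Ici m) := by
      apply Integrable.mono' (hhint.mono_set (Ici_subset_Ici.mpr hmR))
        aestronglyMeasurable_const
      rw [ae_restrict_iff' measurableSet_Ici]
      filter_upwards with ξ hξ
      rw [Real.norm_eq_abs, abs_of_pos hc]
      exact hbound ξ hξ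
    rw [integrableOn_const_iff] at hconst
    rcases hconst with h | h
    · exact absurd (enorm_eq_zero.mp h) (ne_of_gt hc)
    · rw [Real.volume_Ici] at h
      exact absurd h (by simp)
  -- g := w ξ * exp (β ξ) is antitone on Ici R
  set g : ℝ → ℝ := fun ξ => w ξ * Real.exp (β * ξ) with hg_def
  have hgc : ContinuousOn g (Set.Ici R) :=
    hwc.mul (Real.continuous_exp.comp (continuous_const.mul continuous_id)).continuousOn
  have hgd : ∀ ξ ∈ Set.Ioi R,
      HasDerivAt g ((f ξ + β * w ξ) * Real.exp (β * ξ)) ξ := by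
    intro ξ hξ
    have h3 : HasDerivAt (fun x => w x * Real.exp (β * x)) _ ξ := (hwd' ξ hξ).mul (hexpd β ξ)
    convert h3 using 1
    ring
  have hganti : AntitoneOn g (Set.Ici R) := by
    apply antitoneOn_of_hasDerivWithinAt_nonpos (convex_Ici R) hgc
      (f' := fun ξ => (f ξ + β * w ξ) * Real.exp (β * ξ))
    · intro x hx
      rw [interior_Ici] at hx
      exact (hgd x hx).hasDerivWithinAt
    · intro x hx
      rw [interior_Ici] at hx
      have h1 : ψ x ≤ 0 := hψle x (Set.Ioi_subset_Ici_self hx)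
      have h2 : f x + β * w x = ψ x * Real.exp (β * x) := by
        rw [hψ_def]
        simp only
        rw [mul_assoc, ← Real.exp_add]
        ring_nf
        simp
      rw [h2]
      have h3 : ψ x * Real.exp (β * x) ≤ 0 :=
        mul_nonpos_of_nonpos_of_nonneg h1 (Real.exp_nonneg _)
      exact mul_nonpos_of_nonpos_of_nonneg h3 (Real.exp_nonneg _)
  -- conclude
  intro ξ hξ
  have key : w ξ * Real.exp (β * ξ) ≤ w R * Real.exp (β * R) :=
    hganti (le_refl R : R ∈ Set.Ici R) hξ hξ
  have hexp_pos : (0:ℝ) < Real.exp (β * ξ) := Real.exp_pos _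
  calc w ξ = w ξ * Real.exp (β * ξ) * Real.exp (-(β * ξ)) := by
        rw [mul_assoc, ← Real.exp_add]; simp
    _ ≤ w R * Real.exp (β * R) * Real.exp (-(β * ξ)) :=
        mul_le_mul_of_nonneg_right key (Real.exp_nonneg _)
    _ = w R * Real.exp (-β * (ξ - R)) := by
        rw [mul_assoc, ← Real.exp_add]; ring_nf
end

section
/- Let μ > 0, let S : (0,∞) → ℝ be continuous with |S(ξ)| ≤ C e^{−aξ} for some constants C, a > 0 and all ξ > 0, and with ∫₀^1 y² S(y)² dy < ∞. Let Z : (0,∞) → ℝ be such that ξ ↦ ξZ(ξ) is twice continuously differentiable and satisfies (ξZ(ξ))'' = μ ξ S(ξ)² on (0,∞), with ξZ(ξ) → 0 as ξ → 0⁺ and Z(ξ) → 0 as ξ → ∞. Then ξZ(ξ) → −M as ξ → ∞, where M = μ ∫₀^∞ y² S(y)² dy. -/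
open MeasureTheory Filter Set Topology

private lemma aux_int_inf (S : ℝ → ℝ) (C a : ℝ) (ha : 0 < a)
    (hScont : ContinuousOn S (Set.Ioi 0))
    (hb : ∀ ξ ∈ Set.Ioi (0:ℝ), |S ξ| ≤ C * Real.exp (-a * ξ)) :
    IntegrableOn (fun y => y ^ 2 * S y ^ 2) (Set.Ioi 1) := by
  have hmeas : AEStronglyMeasurable (fun y => y ^ 2 * S y ^ 2)
      (volume.restrict (Set.Ioi (1:ℝ))) := by
    apply ContinuousOn.aestronglyMeasurable _ measurableSet_Ioi
    exact (continuousOn_id.pow 2).mul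
      ((hScont.mono (Set.Ioi_subset_Ioi zero_le_one)).pow 2)
  refine ((exp_neg_integrableOn_Ioi 1 ha).const_mul (4*C^2/a^2)).mono' hmeas ?_
  filter_upwards [ae_restrict_mem measurableSet_Ioi] with y hy
  have hy0 : (0:ℝ) < y := lt_trans one_pos hy
  have h1 : |S y| ≤ C * Real.exp (-a * y) := hb y hy0
  have hS0 : (0:ℝ) ≤ |S y| := abs_nonneg _
  have hexp : (0:ℝ) < Real.exp (-a*y) := Real.exp_pos _
  have hy2 : y ≤ 2/a * Real.exp (a/2 * y) := by
    have h := Real.add_one_le_exp (a/2 * y)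
    have := Real.exp_pos (a/2*y)
    rw [div_mul_eq_mul_div, le_div_iff₀ ha]
    nlinarith
  have hysq : y^2 ≤ 4/a^2 * Real.exp (a*y) := by
    have h2 : (2/a * Real.exp (a/2*y))^2 = 4/a^2 * Real.exp (a*y) := by
      rw [mul_pow, ← Real.exp_nat_mul]
      norm_num
      ring_nf
    calc y^2 ≤ (2/a * Real.exp (a/2*y))^2 := by
          exact pow_le_pow_left₀ (le_of_lt hy0) hy2 2
      _ = 4/a^2 * Real.exp (a*y) := h2
  have hfinal : y^2 * (C * Real.exp (-a*y))^2 ≤ 4*C^2/a^2 * Real.exp (-a*y) := by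
    have e1 : (C * Real.exp (-a*y))^2 = C^2 * Real.exp (-a*y) * Real.exp (-a*y) := by ring
    have e2 : Real.exp (a*y) * Real.exp (-a*y) = 1 := by
      rw [← Real.exp_add]; norm_num
    calc y^2 * (C * Real.exp (-a*y))^2
        ≤ (4/a^2 * Real.exp (a*y)) * (C^2 * Real.exp (-a*y) * Real.exp (-a*y)) := by
          rw [e1]
          apply mul_le_mul hysq le_rfl (by positivity) (by positivity)
      _ = 4*C^2/a^2 * Real.exp (-a*y) := by
          rw [show (4/a^2 * Real.exp (a*y)) * (C^2 * Real.exp (-a*y) * Real.exp (-a*y))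
            = 4*C^2/a^2 * ((Real.exp (a*y) * Real.exp (-a*y)) * Real.exp (-a*y)) by ring, e2]
          ring
  calc ‖y ^ 2 * S y ^ 2‖ = y^2 * |S y|^2 := by
        rw [Real.norm_eq_abs, abs_mul, abs_pow, abs_pow, abs_of_pos hy0, sq_abs]
    _ ≤ y^2 * (C * Real.exp (-a*y))^2 := by
        apply mul_le_mul_of_nonneg_left _ (by positivity)
        exact pow_le_pow_left₀ hS0 h1 2
    _ ≤ 4*C^2/a^2 * Real.exp (-a*y) := hfinal

private lemma aux_int_lin (S : ℝ → ℝ)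
    (hScont : ContinuousOn S (Set.Ioi 0))
    (hfI1 : IntegrableOn (fun y => y ^ 2 * S y ^ 2) (Set.Ioi 1)) :
    IntegrableOn (fun y => y * S y ^ 2) (Set.Ioi 1) := by
  have hmeas : AEStronglyMeasurable (fun y => y * S y ^ 2)
      (volume.restrict (Set.Ioi (1:ℝ))) := by
    apply ContinuousOn.aestronglyMeasurable _ measurableSet_Ioi
    exact continuousOn_id.mul
      ((hScont.mono (Set.Ioi_subset_Ioi zero_le_one)).pow 2)
  refine hfI1.mono' hmeas ?_
  filter_upwards [ae_restrict_mem measurableSet_Ioi] with y hy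
  have hy1 : (1:ℝ) ≤ y := le_of_lt hy
  have hy0 : (0:ℝ) < y := lt_of_lt_of_le one_pos hy1
  rw [Real.norm_eq_abs, abs_mul, abs_of_pos hy0, abs_pow, sq_abs]
  have : y * S y ^ 2 ≤ y^2 * S y ^2 := by nlinarith [sq_nonneg (S y), mul_le_mul_of_nonneg_right hy1 (mul_nonneg (le_of_lt hy0) (sq_nonneg (S y)))]
  exact this

/-- Newtonian behavior of `Z` at infinity (second part of Theorem 3):
`ξ Z(ξ) → -M` as `ξ → ∞`, where `M = μ ∫₀^∞ y² S(y)² dy`. -/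
theorem soliton_star_newtonian_limit
    (μ : ℝ) (hμ : 0 < μ) (S Z : ℝ → ℝ)
    (hScont : ContinuousOn S (Set.Ioi 0))
    (hSdec : ∃ C > 0, ∃ a > 0, ∀ ξ ∈ Set.Ioi (0:ℝ), |S ξ| ≤ C * Real.exp (-a * ξ))
    (hSint : IntegrableOn (fun y => y ^ 2 * S y ^ 2) (Set.Ioc 0 1))
    (hZsmooth : ContDiffOn ℝ 2 (fun ξ => ξ * Z ξ) (Set.Ioi 0))
    (hZeq : ∀ ξ ∈ Set.Ioi (0:ℝ),
      deriv (deriv (fun η => η * Z η)) ξ = μ * ξ * S ξ ^ 2)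
    (hZ0 : Tendsto (fun ξ => ξ * Z ξ) (nhdsWithin 0 (Set.Ioi 0)) (nhds 0))
    (hZinf : Tendsto Z atTop (nhds 0)) :
    Tendsto (fun ξ => ξ * Z ξ) atTop
      (nhds (-(μ * ∫ y in Set.Ioi (0:ℝ), y ^ 2 * S y ^ 2))) := by
  obtain ⟨C, hC, a, ha, hSb⟩ := hSdec
  set f : ℝ → ℝ := fun y => y ^ 2 * S y ^ 2 with hfdef
  set W : ℝ → ℝ := fun ξ => ξ * Z ξ with hWdef
  have hfcont : ContinuousOn f (Ioi 0) := (continuousOn_id.pow 2).mul (hScont.pow 2)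
  have hfI1 : IntegrableOn f (Ioi 1) := aux_int_inf S C a ha hScont hSb
  have hIoi : Ioi (0:ℝ) = Ioc 0 1 ∪ Ioi 1 := (Ioc_union_Ioi_eq_Ioi zero_le_one).symm
  have hfI : IntegrableOn f (Ioi 0) := by rw [hIoi]; exact hSint.union hfI1
  have hgI1 : IntegrableOn (fun y => y * S y ^ 2) (Ioi 1) := aux_int_lin S hScont hfI1
  -- derivatives of W
  have hWc1 : ContDiffOn ℝ 1 (deriv W) (Ioi 0) :=
    hZsmooth.deriv_of_isOpen isOpen_Ioi (by norm_num)
  have hWd : ∀ ξ ∈ Ioi (0:ℝ), HasDerivAt W (deriv W ξ) ξ := by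
    intro ξ hξ
    exact ((hZsmooth.contDiffAt (isOpen_Ioi.mem_nhds hξ)).differentiableAt
      (by norm_num)).hasDerivAt
  have hW'd : ∀ ξ ∈ Ioi (0:ℝ), HasDerivAt (deriv W) (μ * ξ * S ξ ^ 2) ξ := by
    intro ξ hξ
    have h := ((hWc1.contDiffAt (isOpen_Ioi.mem_nhds hξ)).differentiableAt
      (by norm_num)).hasDerivAt
    rwa [hZeq ξ hξ] at h
  have hW'cont : ContinuousOn (deriv W) (Ioi 0) := hWc1.continuousOn
  set g : ℝ → ℝ := fun ξ => W ξ - ξ * deriv W ξ with hgdef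
  have hgd : ∀ ξ ∈ Ioi (0:ℝ), HasDerivAt g ((-μ) * f ξ) ξ := by
    intro ξ hξ
    have h2 := (hasDerivAt_id ξ).mul (hW'd ξ hξ)
    have h3 := (hWd ξ hξ).sub h2
    refine h3.congr_deriv ?_
    simp [hfdef]; ring
  have hsubIoi : ∀ p q : ℝ, 0 < p → p ≤ q → uIcc p q ⊆ Ioi (0:ℝ) := by
    intro p q hp hpq x hx
    rw [uIcc_of_le hpq] at hx
    exact lt_of_lt_of_le hp hx.1
  have hgFTC : ∀ p q : ℝ, 0 < p → p ≤ q →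
      (∫ x in p..q, (-μ) * f x) = g q - g p := by
    intro p q hp hpq
    apply intervalIntegral.integral_eq_sub_of_hasDerivAt
    · intro x hx
      exact hgd x (hsubIoi p q hp hpq hx)
    · exact ((hfcont.mono (hsubIoi p q hp hpq)).const_smul (-μ)).intervalIntegrable
  have hW'FTC : ∀ p q : ℝ, 0 < p → p ≤ q →
      (∫ x in p..q, μ * (x * S x ^ 2)) = deriv W q - deriv W p := by
    intro p q hp hpq
    apply intervalIntegral.integral_eq_sub_of_hasDerivAt
    · intro x hx
      have h := hW'd x (hsubIoi p q hp hpq hx)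
      exact h.congr_deriv (by ring)
    · apply ContinuousOn.intervalIntegrable
      exact ((continuousOn_id.mul (hScont.pow 2)).mono
        (hsubIoi p q hp hpq)).const_smul μ
  -- limits of integrals at infinity
  have hIf : Tendsto (fun t => ∫ x in (1:ℝ)..t, f x) atTop
      (𝓝 (∫ x in Ioi (1:ℝ), f x)) :=
    intervalIntegral_tendsto_integral_Ioi 1 hfI1 tendsto_id
  have hIg : Tendsto (fun t => ∫ x in (1:ℝ)..t, x * S x ^ 2) atTop
      (𝓝 (∫ x in Ioi (1:ℝ), x * S x ^ 2)) :=
    intervalIntegral_tendsto_integral_Ioi 1 hgI1 tendsto_id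
  set G : ℝ := g 1 + (-μ) * ∫ x in Ioi (1:ℝ), f x with hGdef
  have hgtop : Tendsto g atTop (𝓝 G) := by
    have h1 : Tendsto (fun t => g 1 + (-μ) * ∫ x in (1:ℝ)..t, f x) atTop (𝓝 G) :=
      tendsto_const_nhds.add (hIf.const_mul (-μ))
    apply h1.congr'
    filter_upwards [eventually_ge_atTop (1:ℝ)] with t ht
    have := hgFTC 1 t one_pos ht
    rw [intervalIntegral.integral_const_mul] at this
    linarith [this]
  set L : ℝ := deriv W 1 + μ * ∫ x in Ioi (1:ℝ), x * S x ^ 2 with hLdef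
  have hW'top : Tendsto (deriv W) atTop (𝓝 L) := by
    have h1 : Tendsto (fun t => deriv W 1 + μ * ∫ x in (1:ℝ)..t, x * S x ^ 2)
        atTop (𝓝 L) := tendsto_const_nhds.add (hIg.const_mul μ)
    apply h1.congr'
    filter_upwards [eventually_ge_atTop (1:ℝ)] with t ht
    have := hW'FTC 1 t one_pos ht
    rw [intervalIntegral.integral_const_mul] at this
    linarith [this]
  -- tail identity for deriv W
  have htail_id : ∀ ξ : ℝ, 1 ≤ ξ →
      L - deriv W ξ = μ * ∫ x in Ioi ξ, x * S x ^ 2 := by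
    intro ξ hξ
    have hsplit : (∫ x in Ioi (1:ℝ), x * S x ^ 2)
        = (∫ x in Ioc 1 ξ, x * S x ^ 2) + ∫ x in Ioi ξ, x * S x ^ 2 := by
      rw [← setIntegral_union (Ioc_disjoint_Ioi le_rfl) measurableSet_Ioi
        (hgI1.mono_set Ioc_subset_Ioi_self)
        (hgI1.mono_set (Ioi_subset_Ioi hξ)), Ioc_union_Ioi_eq_Ioi hξ]
    have hFTC := hW'FTC 1 ξ one_pos hξ
    rw [intervalIntegral.integral_const_mul] at hFTC
    rw [intervalIntegral.integral_of_le hξ] at hFTC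
    rw [hLdef]
    rw [hsplit]
    ring_nf
    linarith [hFTC]
  have htailf : Tendsto (fun ξ => ∫ x in Ioi ξ, f x) atTop (𝓝 0) := by
    have h1 : Tendsto (fun ξ => (∫ x in Ioi (1:ℝ), f x) - ∫ x in (1:ℝ)..ξ, f x)
        atTop (𝓝 ((∫ x in Ioi (1:ℝ), f x) - ∫ x in Ioi (1:ℝ), f x)) :=
      tendsto_const_nhds.sub hIf
    rw [sub_self] at h1
    apply h1.congr'
    filter_upwards [eventually_ge_atTop (1:ℝ)] with ξ hξ
    have hsplit : (∫ x in Ioi (1:ℝ), f x)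
        = (∫ x in Ioc 1 ξ, f x) + ∫ x in Ioi ξ, f x := by
      rw [← setIntegral_union (Ioc_disjoint_Ioi le_rfl) measurableSet_Ioi
        (hfI1.mono_set Ioc_subset_Ioi_self)
        (hfI1.mono_set (Ioi_subset_Ioi hξ)), Ioc_union_Ioi_eq_Ioi hξ]
    rw [intervalIntegral.integral_of_le hξ]
    linarith [hsplit]
  -- ξ * (L - deriv W ξ) → 0
  have hxW' : Tendsto (fun ξ => ξ * (L - deriv W ξ)) atTop (𝓝 0) := by
    have hup : ∀ᶠ ξ in atTop, ξ * (L - deriv W ξ) ≤ μ * ∫ x in Ioi ξ, f x := by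
      filter_upwards [eventually_ge_atTop (1:ℝ)] with ξ hξ
      rw [htail_id ξ hξ, ← mul_assoc, mul_comm ξ μ, mul_assoc]
      apply mul_le_mul_of_nonneg_left _ (le_of_lt hμ)
      rw [← integral_const_mul]
      apply setIntegral_mono_on
      · exact (hgI1.mono_set (Ioi_subset_Ioi hξ)).const_mul ξ
      · exact hfI1.mono_set (Ioi_subset_Ioi hξ)
      · exact measurableSet_Ioi
      · intro x hx
        have hx1 : (1:ℝ) ≤ ξ := hξ
        have hxξ : ξ ≤ x := le_of_lt hx
        have hx0 : (0:ℝ) < x := lt_of_lt_of_le (lt_of_lt_of_le one_pos hξ) hxξ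
        have : ξ * (x * S x ^ 2) ≤ x * (x * S x ^ 2) :=
          mul_le_mul_of_nonneg_right hxξ (mul_nonneg (le_of_lt hx0) (sq_nonneg _))
        simpa [hfdef, sq, mul_assoc, mul_comm, mul_left_comm] using this
    have hlo : ∀ᶠ ξ in atTop, (0:ℝ) ≤ ξ * (L - deriv W ξ) := by
      filter_upwards [eventually_ge_atTop (1:ℝ)] with ξ hξ
      rw [htail_id ξ hξ, ← mul_assoc, mul_comm ξ μ, mul_assoc]
      apply mul_nonneg (le_of_lt hμ)
      apply mul_nonneg (le_trans zero_le_one hξ)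
      apply setIntegral_nonneg measurableSet_Ioi
      intro x hx
      have hx0 : (0:ℝ) < x := lt_of_lt_of_le (lt_of_lt_of_le one_pos hξ) (le_of_lt hx)
      exact mul_nonneg (le_of_lt hx0) (sq_nonneg _)
    have hμtail : Tendsto (fun ξ => μ * ∫ x in Ioi ξ, f x) atTop (𝓝 0) := by
      have := htailf.const_mul μ
      simpa using this
    exact tendsto_of_tendsto_of_tendsto_of_le_of_le' tendsto_const_nhds hμtail hlo hup
  -- W(ξ) - L ξ → G
  have hWlin : Tendsto (fun ξ => W ξ - L * ξ) atTop (𝓝 G) := by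
    have h1 : Tendsto (fun ξ => g ξ - ξ * (L - deriv W ξ)) atTop (𝓝 (G - 0)) :=
      hgtop.sub hxW'
    rw [sub_zero] at h1
    apply h1.congr
    intro ξ
    rw [hgdef]
    ring
  -- Z → L, hence L = 0
  have hZtoL : Tendsto Z atTop (𝓝 L) := by
    have h1 : Tendsto (fun ξ => (W ξ - L * ξ) * ξ⁻¹ + L) atTop (𝓝 (G * 0 + L)) :=
      (hWlin.mul tendsto_inv_atTop_zero).add tendsto_const_nhds
    rw [mul_zero, zero_add] at h1
    apply h1.congr'
    filter_upwards [eventually_gt_atTop (0:ℝ)] with ξ hξ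
    have hξ' : ξ ≠ 0 := ne_of_gt hξ
    rw [hWdef]
    field_simp
    ring
  have hL0 : L = 0 := tendsto_nhds_unique hZtoL hZinf
  have hWtop : Tendsto W atTop (𝓝 G) := by
    apply hWlin.congr
    intro ξ
    rw [hL0]
    ring
  -- behavior at 0+
  have hmem01 : Ioc (0:ℝ) 1 ∈ 𝓝[>] (0:ℝ) := Ioc_mem_nhdsGT_of_mem (Set.mem_Ico.mpr ⟨le_refl 0, one_pos⟩)
  have hmeas0 : Tendsto (fun ε => (volume.restrict (Ioc (0:ℝ) 1)) (Ioc 0 ε))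
      (𝓝[>] (0:ℝ)) (𝓝 0) := by
    have hub : ∀ ε : ℝ, (volume.restrict (Ioc (0:ℝ) 1)) (Ioc 0 ε) ≤ ENNReal.ofReal ε := by
      intro ε
      calc (volume.restrict (Ioc (0:ℝ) 1)) (Ioc 0 ε) ≤ volume (Ioc (0:ℝ) ε) :=
            Measure.restrict_apply_le _ _
        _ = ENNReal.ofReal ε := by rw [Real.volume_Ioc, sub_zero]
    have hof : Tendsto (fun ε : ℝ => ENNReal.ofReal ε) (𝓝[>] (0:ℝ)) (𝓝 0) := by
      have h : Tendsto (fun ε : ℝ => ε) (𝓝[>] (0:ℝ)) (𝓝 0) :=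
        tendsto_id.mono_left nhdsWithin_le_nhds
      simpa using (ENNReal.tendsto_ofReal h)
    exact tendsto_of_tendsto_of_tendsto_of_le_of_le tendsto_const_nhds hof
      (fun ε => zero_le) hub
  have h0small : Tendsto (fun ε => ∫ x in Ioc (0:ℝ) ε, f x) (𝓝[>] (0:ℝ)) (𝓝 0) := by
    have h := hSint.tendsto_setIntegral_nhds_zero (s := fun ε : ℝ => Ioc (0:ℝ) ε) hmeas0
    apply h.congr'
    filter_upwards [hmem01] with ε hε
    rw [Measure.restrict_restrict measurableSet_Ioc,
      inter_eq_left.mpr (Ioc_subset_Ioc_right hε.2)]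
  have h0int : Tendsto (fun ε => ∫ x in ε..1, f x) (𝓝[>] (0:ℝ))
      (𝓝 (∫ x in Ioc (0:ℝ) 1, f x)) := by
    have h1 : Tendsto (fun ε => (∫ x in Ioc (0:ℝ) 1, f x) - ∫ x in Ioc (0:ℝ) ε, f x)
        (𝓝[>] (0:ℝ)) (𝓝 ((∫ x in Ioc (0:ℝ) 1, f x) - 0)) :=
      tendsto_const_nhds.sub h0small
    rw [sub_zero] at h1
    apply h1.congr'
    filter_upwards [hmem01] with ε hε
    rw [intervalIntegral.integral_of_le hε.2]
    have hsplit : (∫ x in Ioc (0:ℝ) 1, f x)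
        = (∫ x in Ioc (0:ℝ) ε, f x) + ∫ x in Ioc ε 1, f x := by
      rw [← setIntegral_union (Ioc_disjoint_Ioc_of_le le_rfl) measurableSet_Ioc
        (hSint.mono_set (Ioc_subset_Ioc_right hε.2))
        (hSint.mono_set (Ioc_subset_Ioc_left (le_of_lt hε.1))),
        Ioc_union_Ioc_eq_Ioc (le_of_lt hε.1) hε.2]
    linarith [hsplit]
  set G0 : ℝ := g 1 + μ * ∫ x in Ioc (0:ℝ) 1, f x with hG0def
  have hg0 : Tendsto g (𝓝[>] (0:ℝ)) (𝓝 G0) := by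
    have h1 : Tendsto (fun ε => g 1 + μ * ∫ x in ε..1, f x) (𝓝[>] (0:ℝ)) (𝓝 G0) :=
      tendsto_const_nhds.add (h0int.const_mul μ)
    apply h1.congr'
    filter_upwards [hmem01] with ε hε
    have h2 := hgFTC ε 1 hε.1 hε.2
    rw [intervalIntegral.integral_const_mul] at h2
    linarith [h2]
  have hxW'0 : Tendsto (fun ξ => ξ * deriv W ξ) (𝓝[>] (0:ℝ)) (𝓝 (-G0)) := by
    have h1 : Tendsto (fun ξ => W ξ - g ξ) (𝓝[>] (0:ℝ)) (𝓝 (0 - G0)) := hZ0.sub hg0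
    rw [zero_sub] at h1
    apply h1.congr
    intro ξ; rw [hgdef]; ring
  have hG00 : G0 = 0 := by
    by_contra hne
    have hc : 0 < |G0| := abs_pos.mpr hne
    have hev1 : ∀ᶠ ξ in 𝓝[>] (0:ℝ), |ξ * deriv W ξ + G0| ≤ |G0|/2 := by
      have h2 := Metric.tendsto_nhds.mp hxW'0 (|G0|/2) (by positivity)
      filter_upwards [h2] with ξ hξ
      rw [Real.dist_eq, sub_neg_eq_add] at hξ
      exact le_of_lt hξ
    have hev2 : ∀ᶠ ξ in 𝓝[>] (0:ℝ), |W ξ| ≤ 1 := by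
      have h2 := Metric.tendsto_nhds.mp hZ0 1 one_pos
      filter_upwards [h2] with ξ hξ
      rw [Real.dist_eq, sub_zero] at hξ
      exact le_of_lt hξ
    obtain ⟨δ, hδmem, hδsub⟩ :=
      mem_nhdsGT_iff_exists_Ioc_subset.mp (hev1.and hev2)
    have hδpos : (0:ℝ) < δ := hδmem
    set ε : ℝ := δ * Real.exp (-(8/|G0|)) with hεdef
    have hεpos : 0 < ε := mul_pos hδpos (Real.exp_pos _)
    have hεδ : ε < δ := by
      have h1 : Real.exp (-(8/|G0|)) < 1 := Real.exp_lt_one_iff.mpr (neg_lt_zero.mpr (by positivity))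
      calc ε < δ * 1 := by
            exact mul_lt_mul_of_pos_left h1 hδpos
        _ = δ := mul_one δ
    have hεδ' : ε ≤ δ := le_of_lt hεδ
    have hlogs : Real.log δ - Real.log ε = 8/|G0| := by
      rw [hεdef, Real.log_mul (ne_of_gt hδpos) (ne_of_gt (Real.exp_pos _)), Real.log_exp]
      ring
    have hlogpos : 0 < Real.log δ - Real.log ε := by rw [hlogs]; positivity
    -- FTC for W on [ε, δ]
    have hFTCW : (∫ x in ε..δ, deriv W x) = W δ - W ε := by
      apply intervalIntegral.integral_eq_sub_of_hasDerivAt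
      · intro x hx; exact hWd x (hsubIoi ε δ hεpos hεδ' hx)
      · exact (hW'cont.mono (hsubIoi ε δ hεpos hεδ')).intervalIntegrable
    have hint1 : IntervalIntegrable (deriv W) volume ε δ :=
      (hW'cont.mono (hsubIoi ε δ hεpos hεδ')).intervalIntegrable
    have hinvcont : ContinuousOn (fun x : ℝ => x⁻¹) (uIcc ε δ) := by
      apply ContinuousOn.inv₀ continuousOn_id
      intro x hx
      exact ne_of_gt (hsubIoi ε δ hεpos hεδ' hx)
    have hint2 : IntervalIntegrable (fun x => G0 * x⁻¹) volume ε δ :=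
      (hinvcont.const_smul G0).intervalIntegrable
    have hIlog : (∫ x in ε..δ, G0 * x⁻¹) = G0 * (Real.log δ - Real.log ε) := by
      rw [intervalIntegral.integral_const_mul, integral_inv_of_pos hεpos hδpos,
        Real.log_div (ne_of_gt hδpos) (ne_of_gt hεpos)]
    have hIadd : (∫ x in ε..δ, (deriv W x + G0 * x⁻¹))
        = (W δ - W ε) + G0 * (Real.log δ - Real.log ε) := by
      rw [intervalIntegral.integral_add hint1 hint2, hFTCW, hIlog]
    have hIbnd : (∫ x in ε..δ, |G0|/2 * x⁻¹) = |G0|/2 * (Real.log δ - Real.log ε) := by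
      rw [intervalIntegral.integral_const_mul, integral_inv_of_pos hεpos hδpos,
        Real.log_div (ne_of_gt hδpos) (ne_of_gt hεpos)]
    have hbd : |(W δ - W ε) + G0 * (Real.log δ - Real.log ε)|
        ≤ |G0|/2 * (Real.log δ - Real.log ε) := by
      rw [← hIadd]
      have h := intervalIntegral.norm_integral_le_of_norm_le
        (f := fun x => deriv W x + G0 * x⁻¹) (g := fun x => |G0|/2 * x⁻¹)
        (μ := volume) (a := ε) (b := δ) hεδ' ?_ ?_
      · rw [hIbnd] at h
        rw [Real.norm_eq_abs] at h
        exact h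
      · rw [← ae_restrict_iff' measurableSet_Ioc]
        filter_upwards [ae_restrict_mem measurableSet_Ioc] with t ht
        have ht0 : 0 < t := lt_trans hεpos ht.1
        have htmem : t ∈ Ioc (0:ℝ) δ := ⟨ht0, ht.2⟩
        have hprop := hδsub htmem
        have heq : deriv W t + G0 * t⁻¹ = (t * deriv W t + G0) * t⁻¹ := by
          field_simp
        rw [Real.norm_eq_abs, heq, abs_mul, abs_inv, abs_of_pos ht0]
        apply mul_le_mul_of_nonneg_right hprop.1
        exact inv_nonneg.mpr (le_of_lt ht0)
      · exact ((hinvcont.const_smul (|G0|/2)).intervalIntegrable)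
    have hWδ : |W δ| ≤ 1 := (hδsub ⟨hδpos, le_refl δ⟩).2
    have hWε : |W ε| ≤ 1 := (hδsub ⟨hεpos, hεδ'⟩).2
    have h8 : |G0| * (Real.log δ - Real.log ε) = 8 := by
      rw [hlogs]; field_simp
    have habs1 : |G0 * (Real.log δ - Real.log ε)|
        ≤ |(W δ - W ε) + G0 * (Real.log δ - Real.log ε)| + |W δ - W ε| := by
      calc |G0 * (Real.log δ - Real.log ε)|
          = |((W δ - W ε) + G0 * (Real.log δ - Real.log ε)) + (-(W δ - W ε))| := by
            congr 1
            ring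
        _ ≤ |(W δ - W ε) + G0 * (Real.log δ - Real.log ε)| + |-(W δ - W ε)| :=
            abs_add_le _ _
        _ = |(W δ - W ε) + G0 * (Real.log δ - Real.log ε)| + |W δ - W ε| := by
            rw [abs_neg]
    have habs2 : |G0 * (Real.log δ - Real.log ε)| = 8 := by
      rw [abs_mul, abs_of_pos hlogpos, h8]
    have habs3 : |W δ - W ε| ≤ 2 := le_trans (abs_sub _ _) (by linarith)
    have hhalf : |G0|/2 * (Real.log δ - Real.log ε) = 4 := by
      field_simp at h8 ⊢
      linarith
    linarith
  -- conclusion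
  have hGval : G = -(μ * ∫ y in Ioi (0:ℝ), f y) := by
    have hsplit : (∫ y in Ioi (0:ℝ), f y)
        = (∫ y in Ioc (0:ℝ) 1, f y) + ∫ y in Ioi (1:ℝ), f y := by
      rw [hIoi]
      exact setIntegral_union (Ioc_disjoint_Ioi le_rfl) measurableSet_Ioi hSint hfI1
    have hg1 : g 1 = -(μ * ∫ x in Ioc (0:ℝ) 1, f x) := by
      rw [hG0def] at hG00; linarith
    rw [hGdef, hg1, hsplit]
    ring
  rw [← hGval]
  exact hWtop
end

section
/- Let μ > 0 and let S, Z : (0,∞) → ℝ be continuously differentiable, with S not identically zero, S(ξ) → 0 and Z(ξ) → 0 as ξ → ∞, and such that the integrals ∫₀^∞ ξ²(S'² + S²) dξ, ∫₀^∞ ξ² Z'² dξ, ∫₀^∞ ξ² S⁶ dξ, ∫₀^∞ ξ² |Z|⁶ dξ, and ∫₀^∞ ξ² S²|Z| dξ are all finite. Assume the identities ∫₀^∞ ξ²(S'(ξ)² + S(ξ)²) dξ = −∫₀^∞ ξ² S(ξ)² Z(ξ) dξ and ∫₀^∞ ξ² Z'(ξ)² dξ = −μ ∫₀^∞ ξ²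 S(ξ)² Z(ξ) dξ hold. Then M := μ ∫₀^∞ ξ² S(ξ)² dξ ≥ (3/8)π√3. -/
open MeasureTheory Filter Set

/-- integral over expanding Ioc's tends to integral over Ioi 0 -/
lemma tendsto_setIntegral_Ioc_base {h : ℝ → ℝ} (hint : IntegrableOn h (Ioi 0))
    {ε R : ℕ → ℝ} (hε0 : ∀ n, 0 ≤ ε n) (hε : Tendsto ε atTop (nhds 0))
    (hR : Tendsto R atTop atTop) :
    Tendsto (fun n => ∫ x in Ioc (ε n) (R n), h x) atTop
      (nhds (∫ x in Ioi 0, h x)) := by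
  have hcov : AECover (volume.restrict (Ioi 0)) atTop (fun n => Ioc (ε n) (R n)) := by
    constructor
    · rw [ae_restrict_iff' measurableSet_Ioi]
      refine ae_of_all _ fun x hx => ?_
      have h1 : ∀ᶠ n in atTop, ε n < x := hε.eventually (eventually_lt_nhds hx)
      have h2 : ∀ᶠ n in atTop, x ≤ R n := hR.eventually (eventually_ge_atTop x)
      filter_upwards [h1, h2] with n hn1 hn2
      exact ⟨hn1, hn2⟩
    · exact fun n => measurableSet_Ioc
  have := hcov.integral_tendsto_of_countably_generated hint
  refine this.congr fun n => ?_
  rw [Measure.restrict_restrict measurableSet_Ioc,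
    show Ioc (ε n) (R n) ∩ Ioi 0 = Ioc (ε n) (R n) from
      inter_eq_left.mpr (fun x hx => lt_of_le_of_lt (hε0 n) hx.1)]

/-- positivity of an integral of a continuous nonnegative function positive somewhere -/
lemma setIntegral_pos_of_cont {f : ℝ → ℝ} (hf : ContinuousOn f (Ioi 0))
    (hnn : ∀ x ∈ Ioi (0:ℝ), 0 ≤ f x) {x₀ : ℝ} (hx₀ : x₀ ∈ Ioi (0:ℝ)) (hfx₀ : 0 < f x₀)
    (hint : IntegrableOn f (Ioi 0)) : 0 < ∫ x in Ioi (0:ℝ), f x := by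
  have hcont : ContinuousWithinAt f (Ioi 0) x₀ := hf x₀ hx₀
  have hev : ∀ᶠ x in nhdsWithin x₀ (Ioi 0), f x > f x₀ / 2 :=
    hcont.eventually (eventually_gt_nhds (by linarith))
  have hmem : Ioi (0:ℝ) ∈ nhds x₀ := Ioi_mem_nhds hx₀
  have hev' : ∀ᶠ x in nhds x₀, f x > f x₀ / 2 := by
    rw [nhdsWithin_eq_nhds.2 hmem] at hev; exact hev
  obtain ⟨δ, hδ, hball⟩ := Metric.eventually_nhds_iff_ball.1 hev'
  set a := max (x₀ - δ/2) (x₀/2) with ha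
  set b := x₀ + δ/2 with hb
  have hx0 : 0 < x₀ := hx₀.out
  have hax : a < x₀ := by apply max_lt <;> linarith
  have hab : a < b := lt_trans hax (by simp only [hb]; linarith)
  have hsub : Ioc a b ⊆ Metric.ball x₀ δ := by
    intro x hx
    rw [Metric.mem_ball, Real.dist_eq, abs_lt]
    have h1 : x₀ - δ/2 ≤ a := le_max_left _ _
    have h2 := hx.1
    have h3 := hx.2
    constructor <;> simp only [hb] at h3 <;> linarith
  have hIoc : ∀ x ∈ Ioc a b, f x₀ / 2 ≤ f x := fun x hx => le_of_lt (hball x (hsub hx))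
  have hIocIoi : Ioc a b ⊆ Ioi 0 := fun x hx =>
    lt_trans (lt_of_lt_of_le (by linarith : (0:ℝ) < x₀/2) (le_max_right _ _)) hx.1
  have hvol : volume (Ioc a b) ≠ ⊤ := by
    rw [Real.volume_Ioc]; exact ENNReal.ofReal_ne_top
  have key := setIntegral_ge_of_const_le (μ := volume) (c := f x₀ / 2)
      measurableSet_Ioc hvol hIoc (hint.mono_set hIocIoi)
  have hvol2 : (volume (Ioc a b)).toReal = b - a := by
    rw [Real.volume_Ioc, ENNReal.toReal_ofReal (by linarith)]
  rw [measureReal_def, hvol2, smul_eq_mul, mul_comm (b - a)] at key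
  have h1 : (0:ℝ) < f x₀ / 2 * (b - a) := mul_pos (by linarith) (by linarith)
  calc (0:ℝ) < f x₀ / 2 * (b - a) := h1
    _ ≤ ∫ x in Ioc a b, f x := key
    _ ≤ ∫ x in Ioi 0, f x := by
        apply setIntegral_mono_set hint
        · filter_upwards [ae_restrict_mem measurableSet_Ioi] with x hx
          exact hnn x hx
        · exact HasSubset.Subset.eventuallyLE hIocIoi

lemma integral_rpow_mul_rpow_le {μ : Measure ℝ} {f g : ℝ → ℝ} {p q : ℝ}
    (hp : 0 < p) (hq : 0 < q) (hpq : p + q = 1)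
    (hfm : AEMeasurable f μ) (hgm : AEMeasurable g μ)
    (hf0 : 0 ≤ᵐ[μ] f) (hg0 : 0 ≤ᵐ[μ] g)
    (hfi : Integrable f μ) (hgi : Integrable g μ)
    (hprod : Integrable (fun x => f x ^ p * g x ^ q) μ) :
    ∫ x, f x ^ p * g x ^ q ∂μ ≤ (∫ x, f x ∂μ) ^ p * (∫ x, g x ∂μ) ^ q := by
  have hIf : 0 ≤ ∫ x, f x ∂μ := integral_nonneg_of_ae hf0
  have hIg : 0 ≤ ∫ x, g x ∂μ := integral_nonneg_of_ae hg0
  have hRHS : 0 ≤ (∫ x, f x ∂μ) ^ p * (∫ x, g x ∂μ) ^ q :=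
    mul_nonneg (Real.rpow_nonneg hIf p) (Real.rpow_nonneg hIg q)
  rw [← ENNReal.ofReal_le_ofReal_iff hRHS]
  have h0 : 0 ≤ᵐ[μ] fun x => f x ^ p * g x ^ q := by
    filter_upwards [hf0, hg0] with x hf hg
    exact mul_nonneg (Real.rpow_nonneg hf p) (Real.rpow_nonneg hg q)
  rw [ofReal_integral_eq_lintegral_ofReal hprod h0]
  have key : ∫⁻ x, ENNReal.ofReal (f x ^ p * g x ^ q) ∂μ
      ≤ (∫⁻ x, ENNReal.ofReal (f x) ∂μ) ^ p * (∫⁻ x, ENNReal.ofReal (g x) ∂μ) ^ q := by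
    have hcongr : ∀ᵐ x ∂μ, ENNReal.ofReal (f x ^ p * g x ^ q)
        = ENNReal.ofReal (f x) ^ p * ENNReal.ofReal (g x) ^ q := by
      filter_upwards [hf0, hg0] with x hf hg
      rw [ENNReal.ofReal_mul (Real.rpow_nonneg hf p),
        ENNReal.ofReal_rpow_of_nonneg hf hp.le, ENNReal.ofReal_rpow_of_nonneg hg hq.le]
    rw [lintegral_congr_ae hcongr]
    have := ENNReal.lintegral_prod_norm_pow_le (μ := μ) (Finset.univ : Finset (Fin 2))
      (f := fun i => if i = 0 then (fun x => ENNReal.ofReal (f x)) else (fun x => ENNReal.ofReal (g x)))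
      (p := fun i => if i = 0 then p else q) ?_ ?_ ?_
    · simpa [Fin.prod_univ_two] using this
    · intro i _
      by_cases h : i = 0 <;> simp [h] <;> [exact hfm.ennreal_ofReal; exact hgm.ennreal_ofReal]
    · simp [Fin.sum_univ_two, hpq]
    · intro i _; by_cases h : i = 0 <;> simp [h, hp.le, hq.le]
  refine le_trans key (le_of_eq ?_)
  rw [← ofReal_integral_eq_lintegral_ofReal hfi hf0, ← ofReal_integral_eq_lintegral_ofReal hgi hg0,
    ENNReal.ofReal_rpow_of_nonneg hIf hp.le, ENNReal.ofReal_rpow_of_nonneg hIg hq.le,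
    ← ENNReal.ofReal_mul (Real.rpow_nonneg hIf p)]

lemma integral_rpow3_le {μ : Measure ℝ} {f g h : ℝ → ℝ} {p q r : ℝ}
    (hp : 0 < p) (hq : 0 < q) (hr : 0 < r) (hpq : p + q + r = 1)
    (hfm : AEMeasurable f μ) (hgm : AEMeasurable g μ) (hhm : AEMeasurable h μ)
    (hf0 : 0 ≤ᵐ[μ] f) (hg0 : 0 ≤ᵐ[μ] g) (hh0 : 0 ≤ᵐ[μ] h)
    (hfi : Integrable f μ) (hgi : Integrable g μ) (hhi : Integrable h μ)
    (hprod : Integrable (fun x => f x ^ p * g x ^ q * h x ^ r) μ) :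
    ∫ x, f x ^ p * g x ^ q * h x ^ r ∂μ
      ≤ (∫ x, f x ∂μ) ^ p * (∫ x, g x ∂μ) ^ q * (∫ x, h x ∂μ) ^ r := by
  have hIf : 0 ≤ ∫ x, f x ∂μ := integral_nonneg_of_ae hf0
  have hIg : 0 ≤ ∫ x, g x ∂μ := integral_nonneg_of_ae hg0
  have hIh : 0 ≤ ∫ x, h x ∂μ := integral_nonneg_of_ae hh0
  have hRHS : 0 ≤ (∫ x, f x ∂μ) ^ p * (∫ x, g x ∂μ) ^ q * (∫ x, h x ∂μ) ^ r :=
    mul_nonneg (mul_nonneg (Real.rpow_nonneg hIf p) (Real.rpow_nonneg hIg q)) (Real.rpow_nonneg hIh r)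
  rw [← ENNReal.ofReal_le_ofReal_iff hRHS]
  have h0 : 0 ≤ᵐ[μ] fun x => f x ^ p * g x ^ q * h x ^ r := by
    filter_upwards [hf0, hg0, hh0] with x h1 h2 h3
    exact mul_nonneg (mul_nonneg (Real.rpow_nonneg h1 p) (Real.rpow_nonneg h2 q)) (Real.rpow_nonneg h3 r)
  rw [ofReal_integral_eq_lintegral_ofReal hprod h0]
  have key : ∫⁻ x, ENNReal.ofReal (f x ^ p * g x ^ q * h x ^ r) ∂μ
      ≤ (∫⁻ x, ENNReal.ofReal (f x) ∂μ) ^ p * (∫⁻ x, ENNReal.ofReal (g x) ∂μ) ^ q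
        * (∫⁻ x, ENNReal.ofReal (h x) ∂μ) ^ r := by
    have hcongr : ∀ᵐ x ∂μ, ENNReal.ofReal (f x ^ p * g x ^ q * h x ^ r)
        = ENNReal.ofReal (f x) ^ p * ENNReal.ofReal (g x) ^ q * ENNReal.ofReal (h x) ^ r := by
      filter_upwards [hf0, hg0, hh0] with x h1 h2 h3
      rw [ENNReal.ofReal_mul (mul_nonneg (Real.rpow_nonneg h1 p) (Real.rpow_nonneg h2 q)),
        ENNReal.ofReal_mul (Real.rpow_nonneg h1 p),
        ENNReal.ofReal_rpow_of_nonneg h1 hp.le, ENNReal.ofReal_rpow_of_nonneg h2 hq.le,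
        ENNReal.ofReal_rpow_of_nonneg h3 hr.le]
    rw [lintegral_congr_ae hcongr]
    have := ENNReal.lintegral_prod_norm_pow_le (μ := μ) (Finset.univ : Finset (Fin 3))
      (f := fun i => if i = 0 then (fun x => ENNReal.ofReal (f x)) else
        (if i = 1 then (fun x => ENNReal.ofReal (g x)) else (fun x => ENNReal.ofReal (h x))))
      (p := fun i => if i = 0 then p else (if i = 1 then q else r)) ?_ ?_ ?_
    · simpa [Fin.prod_univ_three] using this
    · intro i _
      fin_cases i <;> simp <;> [exact hfm.ennreal_ofReal; exact hgm.ennreal_ofReal; exact hhm.ennreal_ofReal]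
    · simp [Fin.sum_univ_three]; linarith
    · intro i _; fin_cases i <;> simp [hp.le, hq.le, hr.le]
  refine le_trans key (le_of_eq ?_)
  rw [← ofReal_integral_eq_lintegral_ofReal hfi hf0, ← ofReal_integral_eq_lintegral_ofReal hgi hg0,
    ← ofReal_integral_eq_lintegral_ofReal hhi hh0,
    ENNReal.ofReal_rpow_of_nonneg hIf hp.le, ENNReal.ofReal_rpow_of_nonneg hIg hq.le,
    ENNReal.ofReal_rpow_of_nonneg hIh hr.le,
    ← ENNReal.ofReal_mul (Real.rpow_nonneg hIf p),
    ← ENNReal.ofReal_mul (mul_nonneg (Real.rpow_nonneg hIf p) (Real.rpow_nonneg hIg q))]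

lemma integral_mul_le_sqrt_mul_sqrt {μ : Measure ℝ} {F G : ℝ → ℝ}
    (hFm : AEMeasurable F μ) (hGm : AEMeasurable G μ)
    (hF2 : Integrable (fun x => F x ^ 2) μ) (hG2 : Integrable (fun x => G x ^ 2) μ)
    (hFG : Integrable (fun x => |F x * G x|) μ) :
    ∫ x, |F x * G x| ∂μ ≤ Real.sqrt (∫ x, F x ^ 2 ∂μ) * Real.sqrt (∫ x, G x ^ 2 ∂μ) := by
  have hkey : ∀ x : ℝ, |F x * G x| = (F x ^ 2) ^ (1/2:ℝ) * (G x ^ 2) ^ (1/2:ℝ) := by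
    intro x
    rw [← Real.sqrt_eq_rpow, ← Real.sqrt_eq_rpow, Real.sqrt_sq_eq_abs, Real.sqrt_sq_eq_abs, abs_mul]
  have h := integral_rpow_mul_rpow_le (μ := μ) (f := fun x => F x ^ 2) (g := fun x => G x ^ 2)
    (p := 1/2) (q := 1/2) (by norm_num) (by norm_num) (by norm_num)
    (hFm.pow_const 2) (hGm.pow_const 2)
    (ae_of_all _ fun x => sq_nonneg _) (ae_of_all _ fun x => sq_nonneg _) hF2 hG2
    (by simpa only [← hkey] using hFG)
  rw [Real.sqrt_eq_rpow, Real.sqrt_eq_rpow]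
  calc ∫ x, |F x * G x| ∂μ = ∫ x, (F x ^ 2) ^ (1/2:ℝ) * (G x ^ 2) ^ (1/2:ℝ) ∂μ := by
        simp_rw [hkey]
    _ ≤ _ := h

lemma setIntegral_mono_Ioi {h : ℝ → ℝ} {s : Set ℝ} {r : ℝ} (hs : s ⊆ Ioi r)
    (hint : IntegrableOn h (Ioi r)) (hnn : ∀ x ∈ Ioi r, 0 ≤ h x) :
    ∫ x in s, h x ≤ ∫ x in Ioi r, h x := by
  apply setIntegral_mono_set hint
  · filter_upwards [ae_restrict_mem measurableSet_Ioi] with x hx; exact hnn x hx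
  · exact HasSubset.Subset.eventuallyLE hs

section Sobolev

variable {u : ℝ → ℝ}

lemma hasDerivAt_of_cdo (hu : ContDiffOn ℝ 1 u (Ioi 0)) {r : ℝ} (hr : 0 < r) :
    HasDerivAt u (deriv u r) r :=
  ((hu.differentiableOn one_ne_zero).differentiableAt (Ioi_mem_nhds hr)).hasDerivAt

lemma continuousOn_deriv_of_cdo (hu : ContDiffOn ℝ 1 u (Ioi 0)) :
    ContinuousOn (deriv u) (Ioi 0) := by
  have h := hu.continuousOn_derivWithin (uniqueDiffOn_Ioi 0) le_rfl
  exact h.congr fun x hx => (derivWithin_of_isOpen isOpen_Ioi hx).symm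

/-- integral of x^(-2) over Ioc a b is at most 1/a -/
lemma integral_inv_sq_Ioc_le {a b : ℝ} (ha : 0 < a) :
    ∫ x in Ioc a b, (x ^ (-1:ℝ)) ^ 2 ≤ 1 / a := by
  have hcongr : ∀ x ∈ Ioi a, (x ^ (-1:ℝ)) ^ 2 = x ^ (-2:ℝ) := by
    intro x hx
    have hx0 : (0:ℝ) ≤ x := le_of_lt (lt_trans ha hx)
    rw [← Real.rpow_natCast (x ^ (-1:ℝ)) 2, ← Real.rpow_mul hx0]
    norm_num
  have hint : IntegrableOn (fun x => x ^ (-2:ℝ)) (Ioi a) := integrableOn_Ioi_rpow_of_lt (by norm_num) ha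
  have hint' : IntegrableOn (fun x => (x ^ (-1:ℝ)) ^ 2) (Ioi a) :=
    hint.congr_fun (fun x hx => (hcongr x hx).symm) measurableSet_Ioi
  calc ∫ x in Ioc a b, (x ^ (-1:ℝ)) ^ 2 ≤ ∫ x in Ioi a, (x ^ (-1:ℝ)) ^ 2 :=
        setIntegral_mono_Ioi Ioc_subset_Ioi_self hint' (fun x _ => sq_nonneg _)
    _ = ∫ x in Ioi a, x ^ (-2:ℝ) := setIntegral_congr_fun measurableSet_Ioi hcongr
    _ = -a ^ (-2 + 1:ℝ) / (-2 + 1) := integral_Ioi_rpow_of_lt (by norm_num) ha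
    _ = 1 / a := by
        norm_num [Real.rpow_neg_one]

/-- Cauchy-Schwarz bound for the integral of |deriv u| -/
lemma integral_abs_deriv_le (hu : ContDiffOn ℝ 1 u (Ioi 0))
    {a b : ℝ} (ha : 0 < a) :
    ∫ x in Ioc a b, |deriv u x|
      ≤ Real.sqrt (∫ x in Ioc a b, x^2 * (deriv u x)^2) * Real.sqrt (1/a) := by
  have hIocIoi' : Ioc a b ⊆ Ioi 0 := fun x hx => lt_trans ha hx.1
  set F : ℝ → ℝ := fun x => x * deriv u x with hF
  set G : ℝ → ℝ := fun x => x ^ (-1:ℝ) with hG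
  have hFm : AEMeasurable F (volume.restrict (Ioc a b)) :=
    (measurable_id.mul (measurable_deriv u)).aemeasurable
  have hGm : AEMeasurable G (volume.restrict (Ioc a b)) :=
    (measurable_id.pow_const _).aemeasurable
  have hEloc : IntegrableOn (fun x => x^2 * (deriv u x)^2) (Ioc a b) := by
    have hcont : ContinuousOn (fun x => x^2 * (deriv u x)^2) (Icc a b) := by
      apply ContinuousOn.mul (by fun_prop)
      exact (((continuousOn_deriv_of_cdo hu).mono
        (fun x hx => lt_of_lt_of_le ha hx.1)).pow 2)
    exact hcont.integrableOn_Icc.mono_set Ioc_subset_Icc_self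
  have hF2 : IntegrableOn (fun x => F x ^ 2) (Ioc a b) :=
    hEloc.congr_fun (fun x _ => by simp [hF, mul_pow]) measurableSet_Ioc
  have hG2 : IntegrableOn (fun x => G x ^ 2) (Ioc a b) := by
    have hint : IntegrableOn (fun x => x ^ (-2:ℝ)) (Ioi a) := integrableOn_Ioi_rpow_of_lt (by norm_num) ha
    refine (hint.mono_set Ioc_subset_Ioi_self).congr_fun (fun x hx => ?_) measurableSet_Ioc
    have hx0 : (0:ℝ) ≤ x := le_of_lt (lt_trans ha hx.1)
    rw [hG, ← Real.rpow_natCast (x ^ (-1:ℝ)) 2, ← Real.rpow_mul hx0]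
    norm_num
  have habs : ∀ x ∈ Ioc a b, |deriv u x| = |F x * G x| := by
    intro x hx
    have hx0 : x ≠ 0 := ne_of_gt (lt_trans ha hx.1)
    simp only [hF, hG, Real.rpow_neg_one]
    rw [show x * deriv u x * x⁻¹ = deriv u x * (x * x⁻¹) by ring, mul_inv_cancel₀ hx0, mul_one]
  have hFG : IntegrableOn (fun x => |F x * G x|) (Ioc a b) := by
    have : IntegrableOn (fun x => |deriv u x|) (Ioc a b) := by
      have hc' : ContinuousOn (fun x => |deriv u x|) (Icc a b) :=
        ((continuousOn_deriv_of_cdo hu).mono (fun x hx => lt_of_lt_of_le ha hx.1)).abs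
      exact (hc'.integrableOn_Icc).mono_set Ioc_subset_Icc_self
    exact this.congr_fun (fun x hx => habs x hx) measurableSet_Ioc
  have key := integral_mul_le_sqrt_mul_sqrt hFm hGm hF2 hG2 hFG
  calc ∫ x in Ioc a b, |deriv u x| = ∫ x in Ioc a b, |F x * G x| :=
        setIntegral_congr_fun measurableSet_Ioc habs
    _ ≤ Real.sqrt (∫ x in Ioc a b, F x ^ 2) * Real.sqrt (∫ x in Ioc a b, G x ^ 2) := key
    _ ≤ Real.sqrt (∫ x in Ioc a b, x^2 * (deriv u x)^2) * Real.sqrt (1/a) := by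
        apply mul_le_mul
        · apply Real.sqrt_le_sqrt
          exact le_of_eq (setIntegral_congr_fun measurableSet_Ioc (fun x _ => by simp [hF, mul_pow]))
        · exact Real.sqrt_le_sqrt (integral_inv_sq_Ioc_le ha)
        · exact Real.sqrt_nonneg _
        · exact Real.sqrt_nonneg _

/-- key tail bound: `r u(r)² ≤ ∫_{Ioi r} s² u'(s)²` -/
lemma tail_bound (hu : ContDiffOn ℝ 1 u (Ioi 0)) (hlim : Tendsto u atTop (nhds 0))
    (hE : IntegrableOn (fun x => x^2 * (deriv u x)^2) (Ioi 0))
    {r : ℝ} (hr : 0 < r) :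
    r * u r ^ 2 ≤ ∫ s in Ioi r, s^2 * (deriv u s)^2 := by
  set B := ∫ s in Ioi r, s^2 * (deriv u s)^2 with hBdef
  have hEr : IntegrableOn (fun x => x^2 * (deriv u x)^2) (Ioi r) :=
    hE.mono_set (Ioi_subset_Ioi hr.le)
  have hB0 : 0 ≤ B := setIntegral_nonneg measurableSet_Ioi (fun x _ => by positivity)
  have key : ∀ R, r ≤ R → |u R - u r| ≤ Real.sqrt B * Real.sqrt (1/r) := by
    intro R hvR
    have hftc : ∫ x in r..R, deriv u x = u R - u r := by
      apply intervalIntegral.integral_eq_sub_of_hasDerivAt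
      · intro x hx
        rw [uIcc_of_le hvR] at hx
        exact hasDerivAt_of_cdo hu (lt_of_lt_of_le hr hx.1)
      · apply ContinuousOn.intervalIntegrable
        apply (continuousOn_deriv_of_cdo hu).mono
        rw [uIcc_of_le hvR]
        exact fun x hx => lt_of_lt_of_le hr hx.1
    rw [← hftc]
    calc |∫ x in r..R, deriv u x| ≤ ∫ x in r..R, |deriv u x| :=
          intervalIntegral.abs_integral_le_integral_abs hvR
      _ = ∫ x in Ioc r R, |deriv u x| := intervalIntegral.integral_of_le hvR
      _ ≤ Real.sqrt (∫ x in Ioc r R, x^2 * (deriv u x)^2) * Real.sqrt (1/r) :=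
          integral_abs_deriv_le hu hr
      _ ≤ Real.sqrt B * Real.sqrt (1/r) := by
          apply mul_le_mul_of_nonneg_right _ (Real.sqrt_nonneg _)
          apply Real.sqrt_le_sqrt
          exact setIntegral_mono_Ioi Ioc_subset_Ioi_self hEr (fun x _ => by positivity)
  have hlim2 : Tendsto (fun R => |u R - u r|) atTop (nhds |0 - u r|) :=
    ((hlim.sub_const (u r)).abs)
  have hle : |0 - u r| ≤ Real.sqrt B * Real.sqrt (1/r) := by
    apply le_of_tendsto hlim2
    filter_upwards [eventually_ge_atTop r] with R hR using key R hR
  rw [zero_sub, abs_neg] at hle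
  have h2 : u r ^ 2 ≤ B * (1/r) := by
    have := mul_self_le_mul_self (abs_nonneg (u r)) hle
    calc u r ^ 2 = |u r| * |u r| := by rw [← abs_mul, abs_mul_self]; ring
      _ ≤ (Real.sqrt B * Real.sqrt (1/r)) * (Real.sqrt B * Real.sqrt (1/r)) := this
      _ = B * (1/r) := by
          rw [show (Real.sqrt B * Real.sqrt (1/r)) * (Real.sqrt B * Real.sqrt (1/r))
            = (Real.sqrt B * Real.sqrt B) * (Real.sqrt (1/r) * Real.sqrt (1/r)) by ring,
            Real.mul_self_sqrt hB0, Real.mul_self_sqrt (by positivity)]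
  calc r * u r ^ 2 ≤ r * (B * (1/r)) := by nlinarith
    _ = B := by field_simp

/-- the tail integral tends to zero -/
lemma tail_tendsto_zero {h : ℝ → ℝ} (hint : IntegrableOn h (Ioi 0))
    (hnn : ∀ x ∈ Ioi (0:ℝ), 0 ≤ h x) :
    Tendsto (fun r : ℝ => ∫ x in Ioi r, h x) atTop (nhds 0) := by
  have hseq : Tendsto (fun n : ℕ => ∫ x in Ioc (0:ℝ) (n+1:ℝ), h x) atTop
      (nhds (∫ x in Ioi 0, h x)) := by
    apply tendsto_setIntegral_Ioc_base hint (fun n => le_rfl) tendsto_const_nhds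
    exact tendsto_atTop_add_const_right _ _ (tendsto_natCast_atTop_atTop)
  rw [Metric.tendsto_atTop]
  intro ε hε
  rw [Metric.tendsto_atTop] at hseq
  obtain ⟨N, hN⟩ := hseq ε hε
  refine ⟨(N:ℝ) + 1, fun r hr => ?_⟩
  have hr0 : (0:ℝ) < r := lt_of_lt_of_le (by positivity) hr
  have hsplit : ∫ x in Ioi (0:ℝ), h x = (∫ x in Ioc (0:ℝ) r, h x) + ∫ x in Ioi r, h x := by
    rw [← setIntegral_union (Ioc_disjoint_Ioi le_rfl) measurableSet_Ioi
      (hint.mono_set Ioc_subset_Ioi_self) (hint.mono_set (Ioi_subset_Ioi hr0.le)),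
      Ioc_union_Ioi_eq_Ioi hr0.le]
  have hmono : (∫ x in Ioc (0:ℝ) ((N:ℝ)+1), h x) ≤ ∫ x in Ioc (0:ℝ) r, h x := by
    apply setIntegral_mono_set (hint.mono_set Ioc_subset_Ioi_self)
    · filter_upwards [ae_restrict_mem measurableSet_Ioc] with x hx
      exact hnn x hx.1
    · exact HasSubset.Subset.eventuallyLE (Ioc_subset_Ioc le_rfl hr)
  have htail_nn : 0 ≤ ∫ x in Ioi r, h x :=
    setIntegral_nonneg measurableSet_Ioi (fun x hx => hnn x (lt_trans hr0 hx))
  have hNbound := hN N le_rfl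
  rw [Real.dist_eq, abs_lt] at hNbound
  rw [Real.dist_eq, abs_lt]
  constructor
  · linarith
  · push_cast at hNbound
    have : ∫ x in Ioi r, h x = (∫ x in Ioi (0:ℝ), h x) - ∫ x in Ioc (0:ℝ) r, h x := by
      linarith [hsplit]
    rw [this, sub_zero]
    linarith

/-- small head integrals: for any η>0 there is δ>0 with `∫_{Ioc 0 δ} h < η`. -/
lemma head_small {h : ℝ → ℝ} (hint : IntegrableOn h (Ioi 0))
    (hnn : ∀ x ∈ Ioi (0:ℝ), 0 ≤ h x) {η : ℝ} (hη : 0 < η) :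
    ∃ δ : ℝ, 0 < δ ∧ δ ≤ 1 ∧ ∫ x in Ioc (0:ℝ) δ, h x < η := by
  have hseq : Tendsto (fun n : ℕ => ∫ x in Ioc ((n+1:ℝ))⁻¹ ((n:ℝ)+1), h x) atTop
      (nhds (∫ x in Ioi 0, h x)) := by
    apply tendsto_setIntegral_Ioc_base hint (fun n => by positivity)
    · exact tendsto_one_div_add_atTop_nhds_zero_nat.congr (fun n => by rw [one_div])
    · exact tendsto_atTop_add_const_right _ _ (tendsto_natCast_atTop_atTop)
  rw [Metric.tendsto_atTop] at hseq
  obtain ⟨N, hN⟩ := hseq η hη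
  set δ : ℝ := ((N:ℝ)+1)⁻¹ with hδdef
  have hδ0 : 0 < δ := by positivity
  refine ⟨δ, hδ0, by rw [hδdef]; rw [inv_le_one_iff₀]; right; linarith [Nat.cast_nonneg (α := ℝ) N], ?_⟩
  have hNb := hN N le_rfl
  rw [Real.dist_eq, abs_lt] at hNb
  have hsplit : ∫ x in Ioi (0:ℝ), h x = (∫ x in Ioc (0:ℝ) δ, h x) + ∫ x in Ioi δ, h x := by
    rw [← setIntegral_union (Ioc_disjoint_Ioi le_rfl) measurableSet_Ioi
      (hint.mono_set Ioc_subset_Ioi_self) (hint.mono_set (Ioi_subset_Ioi hδ0.le)),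
      Ioc_union_Ioi_eq_Ioi hδ0.le]
  have hmono : (∫ x in Ioc δ ((N:ℝ)+1), h x) ≤ ∫ x in Ioi δ, h x := by
    apply setIntegral_mono_Ioi Ioc_subset_Ioi_self (hint.mono_set (Ioi_subset_Ioi hδ0.le))
    exact fun x hx => hnn x (lt_trans hδ0 hx)
  linarith [hsplit, hmono, hNb.1]

/-- `√r · u(r) → 0` as `r → 0⁺` -/
lemma sqrt_mul_tendsto_zero (hu : ContDiffOn ℝ 1 u (Ioi 0))
    (hE : IntegrableOn (fun x => x^2 * (deriv u x)^2) (Ioi 0)) :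
    Tendsto (fun r => Real.sqrt r * u r) (nhdsWithin 0 (Ioi 0)) (nhds 0) := by
  rw [Metric.tendsto_nhdsWithin_nhds]
  intro ε hε
  obtain ⟨δ, hδ0, hδ1, hδ⟩ := head_small hE (fun x _ => by positivity)
    (show (0:ℝ) < (ε/2)^2 by positivity)
  set C := |u δ| + 1 with hC
  have hC0 : 0 < C := by positivity
  have huδC : |u δ| ≤ C := by rw [hC]; linarith
  refine ⟨min δ ((ε/(2*C))^2), by positivity, fun r hr hdist => ?_⟩
  have hr0 : 0 < r := hr
  rw [Real.dist_eq, sub_zero, abs_of_pos hr0] at hdist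
  have hrδ : r < δ := lt_of_lt_of_le hdist (min_le_left _ _)
  have hrε : r < (ε/(2*C))^2 := lt_of_lt_of_le hdist (min_le_right _ _)
  set T := ∫ x in Ioc (0:ℝ) δ, x^2 * (deriv u x)^2 with hT
  have hT0 : 0 ≤ T := setIntegral_nonneg measurableSet_Ioc (fun x _ => by positivity)
  have hEδ : IntegrableOn (fun x => x^2*(deriv u x)^2) (Ioc 0 δ) :=
    hE.mono_set Ioc_subset_Ioi_self
  -- FTC on [r, δ]
  have hftc : ∫ x in r..δ, deriv u x = u δ - u r := by
    apply intervalIntegral.integral_eq_sub_of_hasDerivAt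
    · intro x hx
      rw [uIcc_of_le hrδ.le] at hx
      exact hasDerivAt_of_cdo hu (lt_of_lt_of_le hr0 hx.1)
    · apply ContinuousOn.intervalIntegrable
      apply (continuousOn_deriv_of_cdo hu).mono
      rw [uIcc_of_le hrδ.le]
      exact fun x hx => lt_of_lt_of_le hr0 hx.1
  have hd : |u δ - u r| ≤ Real.sqrt T * Real.sqrt (1/r) := by
    rw [← hftc]
    calc |∫ x in r..δ, deriv u x| ≤ ∫ x in r..δ, |deriv u x| :=
          intervalIntegral.abs_integral_le_integral_abs hrδ.le
      _ = ∫ x in Ioc r δ, |deriv u x| := intervalIntegral.integral_of_le hrδ.le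
      _ ≤ Real.sqrt (∫ x in Ioc r δ, x^2 * (deriv u x)^2) * Real.sqrt (1/r) :=
          integral_abs_deriv_le hu hr0
      _ ≤ Real.sqrt T * Real.sqrt (1/r) := by
          apply mul_le_mul_of_nonneg_right _ (Real.sqrt_nonneg _)
          apply Real.sqrt_le_sqrt
          apply setIntegral_mono_set hEδ
          · filter_upwards [ae_restrict_mem measurableSet_Ioc] with x hx
            positivity
          · exact HasSubset.Subset.eventuallyLE (Ioc_subset_Ioc hr0.le le_rfl)
  have hsq : Real.sqrt r * Real.sqrt (1/r) = 1 := by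
    rw [← Real.sqrt_mul hr0.le, mul_one_div, div_self hr0.ne', Real.sqrt_one]
  have hrabs : |u r| ≤ |u δ| + Real.sqrt T * Real.sqrt (1/r) := by
    have : |u r| - |u δ| ≤ |u δ - u r| := by
      rw [abs_sub_comm]
      exact abs_sub_abs_le_abs_sub _ _
    linarith
  have hbound : Real.sqrt r * |u r| ≤ Real.sqrt r * |u δ| + Real.sqrt T := by
    calc Real.sqrt r * |u r| ≤ Real.sqrt r * (|u δ| + Real.sqrt T * Real.sqrt (1/r)) :=
          mul_le_mul_of_nonneg_left hrabs (Real.sqrt_nonneg r)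
      _ = Real.sqrt r * |u δ| + Real.sqrt T * (Real.sqrt r * Real.sqrt (1/r)) := by ring
      _ = Real.sqrt r * |u δ| + Real.sqrt T := by rw [hsq, mul_one]
  have h1 : Real.sqrt T < ε/2 := by
    have : Real.sqrt T < Real.sqrt ((ε/2)^2) := Real.sqrt_lt_sqrt hT0 hδ
    rwa [Real.sqrt_sq (by positivity)] at this
  have h2 : Real.sqrt r * |u δ| < ε/2 := by
    have hs : Real.sqrt r < ε/(2*C) := by
      have := Real.sqrt_lt_sqrt hr0.le hrε
      rwa [Real.sqrt_sq (by positivity)] at this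
    calc Real.sqrt r * |u δ| ≤ Real.sqrt r * C :=
          mul_le_mul_of_nonneg_left huδC (Real.sqrt_nonneg r)
      _ < (ε/(2*C)) * C := by
          apply mul_lt_mul_of_pos_right hs hC0
      _ = ε/2 := by field_simp
  rw [Real.dist_eq, sub_zero, abs_mul, abs_of_nonneg (Real.sqrt_nonneg r)]
  linarith

/-- derivative of x ↦ x * u(x)² -/
lemma hasDerivAt_xu2 (hu : ContDiffOn ℝ 1 u (Ioi 0)) {x : ℝ} (hx : 0 < x) :
    HasDerivAt (fun y => y * u y ^ 2) (u x ^ 2 + 2 * x * u x * deriv u x) x := by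
  have h1 : HasDerivAt (fun y => u y ^ 2) (2 * u x ^ 1 * deriv u x) x :=
    (hasDerivAt_of_cdo hu hx).pow 2
  have h2 := (hasDerivAt_id x).mul h1
  refine h2.congr_deriv ?_
  simp only [id_eq]
  ring

lemma cont_integrableOn {f : ℝ → ℝ} {a b : ℝ} (ha : 0 < a)
    (hf : ContinuousOn f (Ioi 0)) : IntegrableOn f (Ioc a b) := by
  rcases le_or_gt a b with hab | hab
  · exact ((hf.mono (fun x (hx : x ∈ Icc a b) => lt_of_lt_of_le ha hx.1)).integrableOn_Icc).mono_set
      Ioc_subset_Icc_self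
  · rw [Ioc_eq_empty (by exact not_lt.mpr hab.le)]
    simp

lemma sq_integrable (hu : ContDiffOn ℝ 1 u (Ioi 0)) (hlim : Tendsto u atTop (nhds 0))
    (hE : IntegrableOn (fun x => x^2 * (deriv u x)^2) (Ioi 0)) :
    IntegrableOn (fun x => u x ^ 2) (Ioi 0) := by
  set E := ∫ x in Ioi (0:ℝ), x^2 * (deriv u x)^2 with hEdef
  have hE0 : 0 ≤ E := setIntegral_nonneg measurableSet_Ioi (fun x _ => by positivity)
  have hucont : ContinuousOn u (Ioi 0) := hu.continuousOn
  have hu'cont : ContinuousOn (deriv u) (Ioi 0) := continuousOn_deriv_of_cdo hu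
  have hu2cont : ContinuousOn (fun x => u x ^ 2) (Ioi 0) := hucont.pow 2
  -- main bound on compact pieces
  have key : ∀ a b : ℝ, 0 < a → a ≤ b → ∫ x in Ioc a b, u x ^ 2 ≤ 7 * E := by
    intro a b ha hab
    have hIoi : Ioc a b ⊆ Ioi 0 := fun x hx => lt_trans ha hx.1
    have hu2 : IntegrableOn (fun x => u x ^ 2) (Ioc a b) := cont_integrableOn ha hu2cont
    have hxuu' : IntegrableOn (fun x => 2 * x * u x * deriv u x) (Ioc a b) := by
      apply cont_integrableOn ha
      exact (((continuousOn_const.mul (continuousOn_id' _)).mul hucont).mul hu'cont)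
    have hx2u'2 : IntegrableOn (fun x => x^2 * (deriv u x)^2) (Ioc a b) := by
      apply cont_integrableOn ha
      exact (continuousOn_pow 2).mul (hu'cont.pow 2)
    -- FTC
    have hftc : ∫ x in a..b, (u x ^ 2 + 2 * x * u x * deriv u x)
        = b * u b ^ 2 - a * u a ^ 2 := by
      apply intervalIntegral.integral_eq_sub_of_hasDerivAt
      · intro x hx
        rw [uIcc_of_le hab] at hx
        exact hasDerivAt_xu2 hu (lt_of_lt_of_le ha hx.1)
      · apply ContinuousOn.intervalIntegrable
        apply ContinuousOn.mono (s := Ioi 0)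
        · exact hu2cont.add (((continuousOn_const.mul (continuousOn_id' _)).mul hucont).mul hu'cont)
        · rw [uIcc_of_le hab]; exact fun x hx => lt_of_lt_of_le ha hx.1
    rw [intervalIntegral.integral_of_le hab] at hftc
    have hsum : ∫ x in Ioc a b, (u x ^ 2 + 2 * x * u x * deriv u x)
        = (∫ x in Ioc a b, u x ^ 2) + ∫ x in Ioc a b, 2 * x * u x * deriv u x :=
      integral_add hu2 hxuu'
    -- boundary bound
    have hbB : b * u b ^ 2 ≤ E := by
      calc b * u b ^ 2 ≤ ∫ s in Ioi b, s^2 * (deriv u s)^2 :=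
            tail_bound hu hlim hE (lt_of_lt_of_le ha hab)
        _ ≤ E := setIntegral_mono_Ioi (Ioi_subset_Ioi (le_of_lt (lt_of_lt_of_le ha hab)))
            hE (fun x _ => by positivity)
    have haB : 0 ≤ a * u a ^ 2 := by positivity
    -- Cauchy-Schwarz for the cross term
    set X := ∫ x in Ioc a b, u x ^ 2 with hXdef
    have hX0 : 0 ≤ X := setIntegral_nonneg measurableSet_Ioc (fun x _ => sq_nonneg _)
    have hcs : |∫ x in Ioc a b, x * u x * deriv u x| ≤ Real.sqrt E * Real.sqrt X := by
      have h1 : |∫ x in Ioc a b, x * u x * deriv u x|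
          ≤ ∫ x in Ioc a b, |(x * deriv u x) * u x| := by
        calc |∫ x in Ioc a b, x * u x * deriv u x|
            ≤ ∫ x in Ioc a b, |x * u x * deriv u x| := by
              rw [← Real.norm_eq_abs]
              exact (norm_integral_le_integral_norm _).trans (le_of_eq (by simp only [Real.norm_eq_abs]))
          _ = ∫ x in Ioc a b, |(x * deriv u x) * u x| := by
              apply setIntegral_congr_fun measurableSet_Ioc
              intro x _; congr 1; ring
      have h2 := integral_mul_le_sqrt_mul_sqrt (μ := volume.restrict (Ioc a b))
        (F := fun x => x * deriv u x) (G := u)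
        ((measurable_id.mul (measurable_deriv u)).aemeasurable)
        ((hucont.mono hIoi).aemeasurable measurableSet_Ioc)
        (hx2u'2.congr_fun (fun x _ => by rw [mul_pow]) measurableSet_Ioc)
        hu2
        (by
          apply (cont_integrableOn ha ?_)
          exact (((continuousOn_id' _).mul hu'cont).mul hucont).abs)
      refine le_trans h1 (le_trans h2 ?_)
      apply mul_le_mul_of_nonneg_right _ (Real.sqrt_nonneg _)
      apply Real.sqrt_le_sqrt
      calc ∫ x in Ioc a b, (x * deriv u x)^2 = ∫ x in Ioc a b, x^2*(deriv u x)^2 :=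
            setIntegral_congr_fun measurableSet_Ioc (fun x _ => by rw [mul_pow])
        _ ≤ E := setIntegral_mono_Ioi hIoi hE (fun x _ => by positivity)
    -- assemble quadratic inequality
    have hXbound : X ≤ E + 2 * (Real.sqrt E * Real.sqrt X) := by
      have hEq : X = (b * u b ^ 2 - a * u a ^ 2) - ∫ x in Ioc a b, 2 * x * u x * deriv u x := by
        rw [← hftc, hsum]; ring
      have h3 : ∫ x in Ioc a b, 2 * x * u x * deriv u x
          = 2 * ∫ x in Ioc a b, x * u x * deriv u x := by
        rw [← integral_const_mul]
        apply setIntegral_congr_fun measurableSet_Ioc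
        intro x _; ring
      have hna := neg_abs_le (∫ x in Ioc a b, x * u x * deriv u x)
      have hX2 : X = (b * u b ^ 2 - a * u a ^ 2)
          - 2 * ∫ x in Ioc a b, x * u x * deriv u x := by
        rw [hEq, h3]
      linarith [hcs]
    nlinarith [Real.sq_sqrt hE0, Real.sq_sqrt hX0, Real.sqrt_nonneg E, Real.sqrt_nonneg X,
      sq_nonneg (2*Real.sqrt E - Real.sqrt X / 2)]
  -- conclude integrability
  have hnorm : ∀ a b : ℝ, 0 < a → (∫ x in Ioc a b, ‖u x ^ 2‖) = ∫ x in Ioc a b, u x ^ 2 :=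
    fun a b ha => setIntegral_congr_fun measurableSet_Ioc
      (fun x _ => by rw [Real.norm_eq_abs, abs_of_nonneg (sq_nonneg _)])
  have hpart1 : IntegrableOn (fun x => u x ^ 2) (Ioc (0:ℝ) 1) := by
    apply integrableOn_Ioc_of_intervalIntegral_norm_bounded_left
      (a := fun n : ℕ => ((n:ℝ)+1)⁻¹) (I := 7*E) (b := 1)
      (fun n => cont_integrableOn (by positivity) hu2cont)
      (tendsto_one_div_add_atTop_nhds_zero_nat.congr (fun n => by rw [one_div]))
    filter_upwards with n
    rw [hnorm _ _ (by positivity)]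
    rcases le_or_gt ((n:ℝ)+1)⁻¹ 1 with h | h
    · exact key _ _ (by positivity) h
    · rw [Ioc_eq_empty (by exact not_lt.mpr h.le)]
      simp [setIntegral_empty]
      positivity
  have hpart2 : IntegrableOn (fun x => u x ^ 2) (Ioi (1:ℝ)) := by
    apply integrableOn_Ioi_of_intervalIntegral_norm_bounded (I := 7*E) (a := 1)
      (b := fun n : ℕ => (n:ℝ)+1) (fun n => cont_integrableOn one_pos hu2cont)
      (tendsto_atTop_add_const_right _ _ tendsto_natCast_atTop_atTop)
    filter_upwards with n
    have h1 : (1:ℝ) ≤ (n:ℝ)+1 := by linarith [Nat.cast_nonneg (α := ℝ) n]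
    rw [intervalIntegral.integral_of_le h1, hnorm _ _ one_pos]
    exact key _ _ one_pos h1
  have : IntegrableOn (fun x => u x ^ 2) (Ioc (0:ℝ) 1 ∪ Ioi 1) := hpart1.union hpart2
  rwa [Ioc_union_Ioi_eq_Ioi zero_le_one] at this

/-- the derivative of `w = √r · u` -/
noncomputable def gw (u : ℝ → ℝ) : ℝ → ℝ :=
  fun r => u r / (2 * Real.sqrt r) + Real.sqrt r * deriv u r

lemma hasDerivAt_w (hu : ContDiffOn ℝ 1 u (Ioi 0)) {r : ℝ} (hr : 0 < r) :
    HasDerivAt (fun x => Real.sqrt x * u x) (gw u r) r := by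
  have h1 := (Real.hasDerivAt_sqrt hr.ne').mul (hasDerivAt_of_cdo hu hr)
  refine h1.congr_deriv ?_
  rw [gw]
  field_simp

lemma gw_continuousOn (hu : ContDiffOn ℝ 1 u (Ioi 0)) : ContinuousOn (gw u) (Ioi 0) := by
  apply ContinuousOn.add
  · apply ContinuousOn.div hu.continuousOn
    · exact continuousOn_const.mul (Real.continuous_sqrt.continuousOn)
    · intro x hx
      have : (0:ℝ) < Real.sqrt x := Real.sqrt_pos.mpr hx
      positivity
  · exact Real.continuous_sqrt.continuousOn.mul (continuousOn_deriv_of_cdo hu)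

lemma gw_sq {r : ℝ} (hr : 0 < r) :
    r * gw u r ^ 2 = u r ^ 2 / 4 + r * u r * deriv u r + r^2 * (deriv u r)^2 := by
  have hs : Real.sqrt r ^ 2 = r := Real.sq_sqrt hr.le
  have hs0 : Real.sqrt r ≠ 0 := ne_of_gt (Real.sqrt_pos.mpr hr)
  have hgw : gw u r = (u r + 2*r*deriv u r)/(2*Real.sqrt r) := by
    rw [gw]
    field_simp
    linear_combination 2 * deriv u r * hs
  rw [hgw, div_pow, show (2*Real.sqrt r)^2 = 4*r by rw [mul_pow, hs]; ring]
  field_simp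
  ring

lemma integrableOn_rgw2 (hu : ContDiffOn ℝ 1 u (Ioi 0)) (hlim : Tendsto u atTop (nhds 0))
    (hE : IntegrableOn (fun x => x^2 * (deriv u x)^2) (Ioi 0)) :
    IntegrableOn (fun r => r * gw u r ^ 2) (Ioi 0) := by
  have hA := sq_integrable hu hlim hE
  have hdom : IntegrableOn (fun r => u r ^ 2 / 2 + 2 * (r^2 * (deriv u r)^2)) (Ioi 0) :=
    ((hA.div_const 2).add (hE.const_mul 2))
  apply Integrable.mono' hdom
  · apply ContinuousOn.aestronglyMeasurable _ measurableSet_Ioi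
    exact (continuousOn_id' _).mul ((gw_continuousOn hu).pow 2)
  · filter_upwards [ae_restrict_mem measurableSet_Ioi] with r hr
    have hr0 : (0:ℝ) < r := hr
    have h1 : r * gw u r ^ 2 = u r ^ 2 / 4 + r * u r * deriv u r + r^2*(deriv u r)^2 := gw_sq hr0
    rw [Real.norm_eq_abs, abs_of_nonneg (by positivity : (0:ℝ) ≤ r * gw u r ^ 2), h1]
    nlinarith [sq_nonneg (u r / 2 - r * deriv u r), sq_nonneg (u r / 2 + r * deriv u r)]

/-- the key energy bound `G ≤ E - A/4` -/
lemma gw_energy_le (hu : ContDiffOn ℝ 1 u (Ioi 0)) (hlim : Tendsto u atTop (nhds 0))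
    (hE : IntegrableOn (fun x => x^2 * (deriv u x)^2) (Ioi 0)) :
    ∫ r in Ioi (0:ℝ), r * gw u r ^ 2
      ≤ (∫ x in Ioi (0:ℝ), x^2 * (deriv u x)^2) - (∫ x in Ioi (0:ℝ), u x ^ 2) / 4 := by
  have hA := sq_integrable hu hlim hE
  have hG := integrableOn_rgw2 hu hlim hE
  set εs : ℕ → ℝ := fun n => ((n:ℝ)+1)⁻¹ with hεs
  set Rs : ℕ → ℝ := fun n => (n:ℝ)+1 with hRs
  have hεs0 : ∀ n, 0 < εs n := fun n => by positivity
  have hεlim : Tendsto εs atTop (nhds 0) :=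
    tendsto_one_div_add_atTop_nhds_zero_nat.congr (fun n => by rw [one_div])
  have hRlim : Tendsto Rs atTop atTop :=
    tendsto_atTop_add_const_right _ _ tendsto_natCast_atTop_atTop
  have hεR : ∀ n, εs n ≤ Rs n := by
    intro n
    have h1 : (1:ℝ) ≤ (n:ℝ)+1 := by linarith [Nat.cast_nonneg (α := ℝ) n]
    calc εs n ≤ 1 := by rw [hεs]; exact inv_le_one_of_one_le₀ h1
      _ ≤ Rs n := h1
  -- limits
  have t1 := tendsto_setIntegral_Ioc_base hG (fun n => (hεs0 n).le) hεlim hRlim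
  have t2 := tendsto_setIntegral_Ioc_base hE (fun n => (hεs0 n).le) hεlim hRlim
  have t3 := tendsto_setIntegral_Ioc_base hA (fun n => (hεs0 n).le) hεlim hRlim
  have t4 : Tendsto (fun n => ∫ s in Ioi (Rs n), s^2*(deriv u s)^2) atTop (nhds 0) :=
    (tail_tendsto_zero hE (fun x _ => by positivity)).comp hRlim
  -- pointwise inequality for each n
  have key : ∀ a b : ℝ, 0 < a → a ≤ b → ∫ r in Ioc a b, r * gw u r ^ 2
      ≤ (∫ x in Ioc a b, x^2*(deriv u x)^2)
        - (∫ x in Ioc a b, u x ^ 2)/4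
        + (∫ s in Ioi b, s^2*(deriv u s)^2)/2 := by
    intro a b ha hab
    have hb : 0 < b := lt_of_lt_of_le ha hab
    have hucont := hu.continuousOn
    have hu'cont := continuousOn_deriv_of_cdo hu
    have hu2 : IntegrableOn (fun x => u x ^ 2) (Ioc a b) := cont_integrableOn ha (hucont.pow 2)
    have hxuu' : IntegrableOn (fun x => x * u x * deriv u x) (Ioc a b) :=
      cont_integrableOn ha (((continuousOn_id' _).mul hucont).mul hu'cont)
    have hx2u'2 : IntegrableOn (fun x => x^2*(deriv u x)^2) (Ioc a b) :=
      cont_integrableOn ha ((continuousOn_pow 2).mul (hu'cont.pow 2))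
    -- FTC for boundary term
    have hftc : ∫ x in a..b, (u x ^ 2 + 2 * x * u x * deriv u x)
        = b * u b ^ 2 - a * u a ^ 2 := by
      apply intervalIntegral.integral_eq_sub_of_hasDerivAt
      · intro x hx
        rw [uIcc_of_le hab] at hx
        exact hasDerivAt_xu2 hu (lt_of_lt_of_le ha hx.1)
      · apply ContinuousOn.intervalIntegrable
        apply ContinuousOn.mono (s := Ioi 0)
        · exact (hucont.pow 2).add
            (((continuousOn_const.mul (continuousOn_id' _)).mul hucont).mul hu'cont)
        · rw [uIcc_of_le hab]; exact fun x hx => lt_of_lt_of_le ha hx.1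
    rw [intervalIntegral.integral_of_le hab] at hftc
    have hsplit1 : ∫ x in Ioc a b, (u x ^ 2 + 2 * x * u x * deriv u x)
        = (∫ x in Ioc a b, u x ^ 2) + 2 * ∫ x in Ioc a b, x * u x * deriv u x := by
      rw [integral_add hu2 (Integrable.congr (hxuu'.const_mul 2) (ae_of_all _ fun x => by ring))]
      congr 1
      rw [← integral_const_mul]
      exact setIntegral_congr_fun measurableSet_Ioc (fun x _ => by ring)
    have hcross : ∫ x in Ioc a b, x * u x * deriv u x
        = (b * u b ^ 2 - a * u a ^ 2)/2 - (∫ x in Ioc a b, u x ^ 2)/2 := by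
      have := hftc
      rw [hsplit1] at this
      linarith
    -- expand the integrand
    have hexp : ∫ r in Ioc a b, r * gw u r ^ 2
        = (∫ x in Ioc a b, u x ^ 2)/4 + (∫ x in Ioc a b, x * u x * deriv u x)
          + ∫ x in Ioc a b, x^2*(deriv u x)^2 := by
      calc ∫ r in Ioc a b, r * gw u r ^ 2
          = ∫ x in Ioc a b, (u x ^ 2/4 + x * u x * deriv u x + x^2*(deriv u x)^2) :=
            setIntegral_congr_fun measurableSet_Ioc
              (fun x hx => gw_sq (lt_trans ha hx.1))
        _ = _ := by
            have i1 : IntegrableOn (fun x => u x ^ 2/4 + x * u x * deriv u x) (Ioc a b) := by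
              exact (hu2.div_const 4).add hxuu'
            have i2 : IntegrableOn (fun x => u x ^ 2/4) (Ioc a b) := hu2.div_const 4
            rw [integral_add i1 hx2u'2, integral_add i2 hxuu', integral_div]
    have hbdry : b * u b ^ 2 ≤ ∫ s in Ioi b, s^2*(deriv u s)^2 := tail_bound hu hlim hE hb
    have hbdry0 : 0 ≤ a * u a ^ 2 := by positivity
    rw [hexp, hcross]
    linarith
  -- pass to the limit
  have hlim_left := t1
  have hlim_right : Tendsto (fun n => (∫ x in Ioc (εs n) (Rs n), x^2*(deriv u x)^2)
      - (∫ x in Ioc (εs n) (Rs n), u x ^ 2)/4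
      + (∫ s in Ioi (Rs n), s^2*(deriv u s)^2)/2) atTop
      (nhds ((∫ x in Ioi (0:ℝ), x^2*(deriv u x)^2) - (∫ x in Ioi (0:ℝ), u x ^ 2)/4 + 0/2)) :=
    ((t2.sub (t3.div_const 4)).add (t4.div_const 2))
  have := le_of_tendsto_of_tendsto' hlim_left hlim_right
    (fun n => key (εs n) (Rs n) (hεs0 n) (hεR n))
  simpa using this

lemma w_tendsto_atTop (hu : ContDiffOn ℝ 1 u (Ioi 0)) (hlim : Tendsto u atTop (nhds 0))
    (hE : IntegrableOn (fun x => x^2 * (deriv u x)^2) (Ioi 0)) :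
    Tendsto (fun r => Real.sqrt r * u r) atTop (nhds 0) := by
  have hB := tail_tendsto_zero hE (fun x _ => by positivity)
  rw [Metric.tendsto_atTop] at hB ⊢
  intro ε hε
  obtain ⟨N, hN⟩ := hB (ε^2) (by positivity)
  refine ⟨max N 1, fun r hr => ?_⟩
  have hr1 : (1:ℝ) ≤ r := le_trans (le_max_right N 1) hr
  have hr0 : (0:ℝ) < r := lt_of_lt_of_le one_pos hr1
  have hBr := hN r (le_trans (le_max_left N 1) hr)
  rw [Real.dist_eq, sub_zero] at hBr ⊢
  have hBnn : 0 ≤ ∫ x in Ioi r, x^2*(deriv u x)^2 :=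
    setIntegral_nonneg measurableSet_Ioi (fun x _ => by positivity)
  rw [abs_of_nonneg hBnn] at hBr
  have htail := tail_bound hu hlim hE hr0
  have h1 : |Real.sqrt r * u r| = Real.sqrt (r * u r ^ 2) := by
    rw [Real.sqrt_mul hr0.le, Real.sqrt_sq_eq_abs, abs_mul,
      abs_of_nonneg (Real.sqrt_nonneg r)]
  rw [h1]
  calc Real.sqrt (r * u r^2) ≤ Real.sqrt (∫ x in Ioi r, x^2*(deriv u x)^2) :=
        Real.sqrt_le_sqrt htail
    _ < Real.sqrt (ε^2) := Real.sqrt_lt_sqrt hBnn hBr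
    _ = ε := Real.sqrt_sq hε.le

lemma exists_w_max (hu : ContDiffOn ℝ 1 u (Ioi 0)) (hlim : Tendsto u atTop (nhds 0))
    (hE : IntegrableOn (fun x => x^2 * (deriv u x)^2) (Ioi 0))
    (hne : ∃ r ∈ Ioi (0:ℝ), u r ≠ 0) :
    ∃ r₀ ∈ Ioi (0:ℝ), 0 < |Real.sqrt r₀ * u r₀| ∧
      ∀ r ∈ Ioi (0:ℝ), |Real.sqrt r * u r| ≤ |Real.sqrt r₀ * u r₀| := by
  obtain ⟨r₁, hr₁, hur₁⟩ := hne
  set w : ℝ → ℝ := fun r => Real.sqrt r * u r with hw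
  have hr₁0 : (0:ℝ) < r₁ := hr₁
  have hc : 0 < |w r₁| := by
    rw [hw, abs_mul]
    apply mul_pos
    · rw [abs_of_nonneg (Real.sqrt_nonneg r₁)]
      exact Real.sqrt_pos.mpr hr₁0
    · exact abs_pos.mpr hur₁
  set c := |w r₁| with hcdef
  -- small near zero
  have h0 := sqrt_mul_tendsto_zero hu hE
  rw [Metric.tendsto_nhdsWithin_nhds] at h0
  obtain ⟨δ, hδ0, hδ⟩ := h0 c hc
  -- small near infinity
  have hT := w_tendsto_atTop hu hlim hE
  rw [Metric.tendsto_atTop] at hT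
  obtain ⟨b, hb⟩ := hT c hc
  set lo := min (δ/2) r₁ with hlo
  set hi := max b r₁ with hhi
  have hlo0 : 0 < lo := lt_min (by linarith) hr₁0
  have hlohi : lo ≤ hi := le_trans (min_le_right _ _) (le_max_right _ _)
  have hwcont : ContinuousOn (fun r => |w r|) (Icc lo hi) := by
    apply ContinuousOn.abs
    apply ContinuousOn.mono (s := Ioi 0)
    · exact Real.continuous_sqrt.continuousOn.mul hu.continuousOn
    · exact fun x hx => lt_of_lt_of_le hlo0 hx.1
  obtain ⟨r₀, hr₀mem, hmax⟩ := (isCompact_Icc).exists_isMaxOn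
    (nonempty_Icc.mpr hlohi) hwcont
  have hr₀ : r₀ ∈ Ioi (0:ℝ) := lt_of_lt_of_le hlo0 hr₀mem.1
  have hr₁mem : r₁ ∈ Icc lo hi := ⟨min_le_right _ _, le_max_right _ _⟩
  have hcr₀ : c ≤ |w r₀| := hmax hr₁mem
  refine ⟨r₀, hr₀, lt_of_lt_of_le hc hcr₀, fun r hr => ?_⟩
  rcases le_or_gt r hi with h1 | h1
  · rcases le_or_gt lo r with h2 | h2
    · exact hmax ⟨h2, h1⟩
    · have hrδ : dist r 0 < δ := by
        rw [Real.dist_eq, sub_zero, abs_of_pos hr.out]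
        calc r < lo := h2
          _ ≤ δ/2 := min_le_left _ _
          _ < δ := by linarith
      have := hδ hr hrδ
      rw [Real.dist_eq, sub_zero] at this
      exact le_trans this.le hcr₀
  · have hrb : b ≤ r := le_trans (le_max_left _ _) h1.le
    have := hb r hrb
    rw [Real.dist_eq, sub_zero] at this
    exact le_trans this.le hcr₀

noncomputable def Ffun (k : ℝ) : ℝ → ℝ :=
  fun s => s^2 * Real.sqrt (k^4 - s^4)/4 + k^4/4 * Real.arcsin (s^2/k^2)

noncomputable def ffun (k : ℝ) : ℝ → ℝ := fun s => s * Real.sqrt (k^4 - s^4)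

lemma Ffun_zero (k : ℝ) : Ffun k 0 = 0 := by simp [Ffun]

lemma Ffun_continuous (k : ℝ) : Continuous (Ffun k) := by
  unfold Ffun
  have h1 : Continuous fun s : ℝ => Real.arcsin (s^2/k^2) :=
    Real.continuous_arcsin.comp (by fun_prop)
  have h2 : Continuous fun s : ℝ => Real.sqrt (k^4 - s^4) :=
    Real.continuous_sqrt.comp (by fun_prop)
  fun_prop

lemma Ffun_abs (k s : ℝ) : Ffun k |s| = Ffun k s := by
  have h2 : |s|^2 = s^2 := sq_abs s
  have h4 : |s|^4 = s^4 := by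
    rw [show (4:ℕ) = 2*2 from rfl, pow_mul, pow_mul, sq_abs]
  simp only [Ffun, h2, h4]

lemma hasDerivAt_Ffun {k s : ℝ} (hk : 0 < k) (hs : s^2 < k^2) :
    HasDerivAt (Ffun k) (ffun k s) s := by
  have hs4 : s^4 < k^4 := by
    calc s^4 = (s^2)^2 := by ring
      _ < (k^2)^2 := by nlinarith [sq_nonneg s]
      _ = k^4 := by ring
  have hq : 0 < k^4 - s^4 := by linarith
  set q := Real.sqrt (k^4 - s^4) with hqdef
  have hq0 : 0 < q := Real.sqrt_pos.mpr hq
  have hqsq : q^2 = k^4 - s^4 := Real.sq_sqrt hq.le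
  -- derivative of the sqrt part
  have h1 : HasDerivAt (fun x : ℝ => k^4 - x^4) (-(4*s^3)) s := by
    simpa using (hasDerivAt_pow 4 s).const_sub (k^4)
  have h2 : HasDerivAt (fun x : ℝ => Real.sqrt (k^4 - x^4)) (1/(2*q) * -(4*s^3)) s :=
    (Real.hasDerivAt_sqrt (ne_of_gt hq)).comp s h1
  have h3 : HasDerivAt (fun x : ℝ => x^2) (2*s) s := by
    simpa using hasDerivAt_pow 2 s
  have h4 : HasDerivAt (fun x : ℝ => x^2 * Real.sqrt (k^4 - x^4)/4)
      ((2*s*q + s^2*(1/(2*q) * -(4*s^3)))/4) s := (h3.mul h2).div_const 4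
  -- derivative of the arcsin part
  have hx1 : s^2/k^2 ≠ -1 := by
    have : (0:ℝ) ≤ s^2/k^2 := by positivity
    linarith
  have hx2 : s^2/k^2 ≠ 1 := by
    have : s^2/k^2 < 1 := by
      rw [div_lt_one (by positivity)]
      exact hs
    linarith
  have h5 : HasDerivAt (fun x : ℝ => x^2/k^2) (2*s/k^2) s := h3.div_const (k^2)
  have h6 : HasDerivAt (fun x : ℝ => Real.arcsin (x^2/k^2))
      (1/Real.sqrt (1 - (s^2/k^2)^2) * (2*s/k^2)) s :=
    by have := (Real.hasDerivAt_arcsin hx1 hx2).comp s h5; exact this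
  have h7 : HasDerivAt (fun x : ℝ => k^4/4 * Real.arcsin (x^2/k^2))
      (k^4/4 * (1/Real.sqrt (1 - (s^2/k^2)^2) * (2*s/k^2))) s := h6.const_mul (k^4/4)
  have htotal := h4.add h7
  have hsqrt_eq : Real.sqrt (1 - (s^2/k^2)^2) = q/k^2 := by
    have : 1 - (s^2/k^2)^2 = (k^4 - s^4)/k^4 := by
      field_simp
    rw [this, Real.sqrt_div hq.le,
      show Real.sqrt (k^4) = k^2 from by
        rw [show (k^4:ℝ) = (k^2)^2 by ring, Real.sqrt_sq (by positivity)]]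
  refine htotal.congr_deriv ?_
  have hk4 : k^4 = q^2 + s^4 := by linarith [hqsq]
  rw [hsqrt_eq, ffun]
  rw [hk4]
  have hk2 : (k:ℝ)^2 ≠ 0 := by positivity
  field_simp
  rw [add_sub_cancel_right, Real.sqrt_sq hq0.le]
  ring

lemma sq_expand_aux {r c σ : ℝ} (hr : 0 < r) (hσ : σ^2 = 1) (t X Y : ℝ)
    (ht0 : t ≠ 0) (ht2 : t^2 = r) :
    (t*X - σ*c*Y/t)^2 = r*X^2 + c^2*Y^2/r - 2*σ*c*(Y*X) := by
  rw [← ht2]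
  field_simp
  linear_combination (c^2*Y^2) * hσ

lemma nagy_ineq (hu : ContDiffOn ℝ 1 u (Ioi 0)) (hlim : Tendsto u atTop (nhds 0))
    (hE : IntegrableOn (fun x => x^2 * (deriv u x)^2) (Ioi 0))
    (hP : IntegrableOn (fun x => x^2 * u x ^ 6) (Ioi 0))
    {r₀ c k : ℝ} (hr₀ : r₀ ∈ Ioi (0:ℝ)) (hc : 0 < c)
    (hmax : ∀ r ∈ Ioi (0:ℝ), |Real.sqrt r * u r| ≤ |Real.sqrt r₀ * u r₀|)
    (hk : |Real.sqrt r₀ * u r₀| < k) :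
    4*c*(Ffun k (|Real.sqrt r₀ * u r₀|))
      ≤ (∫ r in Ioi (0:ℝ), r * gw u r ^ 2)
        + c^2 * (k^4 * (∫ x in Ioi (0:ℝ), u x ^ 2) - ∫ x in Ioi (0:ℝ), x^2 * u x ^ 6) := by
  have hr₀0 : (0:ℝ) < r₀ := hr₀
  set w : ℝ → ℝ := fun r => Real.sqrt r * u r with hw
  set m := |w r₀| with hm
  have hm0 : 0 ≤ m := abs_nonneg _
  have hk0 : 0 < k := lt_of_le_of_lt hm0 hk
  have hA := sq_integrable hu hlim hE
  have hGint := integrableOn_rgw2 hu hlim hE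
  have hsqlt : ∀ r ∈ Ioi (0:ℝ), (w r)^2 < k^2 := by
    intro r hr
    calc (w r)^2 = |w r|^2 := (sq_abs _).symm
      _ ≤ m^2 := by
          apply pow_le_pow_left₀ (abs_nonneg _) (hmax r hr)
      _ < k^2 := by nlinarith
  have hw4 : ∀ r ∈ Ioi (0:ℝ), (w r)^4 ≤ k^4 := by
    intro r hr
    have := hsqlt r hr
    nlinarith [sq_nonneg (w r), sq_nonneg k]
  -- pointwise identification of the potential term
  have hfw : ∀ r ∈ Ioi (0:ℝ), c^2*(k^4 * u r^2 - r^2 * u r^6)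
      = c^2 * (ffun k (w r))^2 / r := by
    intro r hr
    have hr0 : (0:ℝ) < r := hr
    have hs2 : (w r)^2 = r * u r^2 := by
      rw [hw]; rw [mul_pow, Real.sq_sqrt hr0.le]
    have hs4 : (w r)^4 = r^2 * u r^4 := by
      have : (w r)^4 = ((w r)^2)^2 := by ring
      rw [this, hs2]; ring
    have hffsq : (ffun k (w r))^2 = (w r)^2 * (k^4 - (w r)^4) := by
      rw [ffun, mul_pow, Real.sq_sqrt (by linarith [hw4 r hr])]
    rw [hffsq, hs2, hs4]
    field_simp
  set plus : ℝ → ℝ := fun r => r * gw u r ^ 2 + c^2*(k^4 * u r^2 - r^2 * u r^6) with hplus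
  have hplus_int : IntegrableOn plus (Ioi 0) :=
    hGint.add (((hA.const_mul (k^4)).sub hP).const_mul (c^2))
  have hplus_nn : ∀ r ∈ Ioi (0:ℝ), 0 ≤ plus r := by
    intro r hr
    have hr0 : (0:ℝ) < r := hr
    simp only [hplus]
    rw [hfw r hr]
    positivity
  set φ : ℝ → ℝ := fun r => Ffun k (w r) with hφ
  have hφd : ∀ r ∈ Ioi (0:ℝ), HasDerivAt φ (ffun k (w r) * gw u r) r := by
    intro r hr
    exact (hasDerivAt_Ffun hk0 (hsqlt r hr)).comp r (hasDerivAt_w hu hr)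
  have hwcont : ContinuousOn w (Ioi 0) :=
    Real.continuous_sqrt.continuousOn.mul hu.continuousOn
  have hffcont : ContinuousOn (fun r => ffun k (w r) * gw u r) (Ioi 0) := by
    apply ContinuousOn.mul _ (gw_continuousOn hu)
    have hcf : Continuous (ffun k) := by
      unfold ffun
      have : Continuous fun s : ℝ => Real.sqrt (k^4 - s^4) :=
        Real.continuous_sqrt.comp (by fun_prop)
      fun_prop
    exact hcf.comp_continuousOn hwcont
  -- the two-sided local estimate
  have hstep : ∀ a b : ℝ, 0 < a → a ≤ b →
      |2*c*(φ b - φ a)| ≤ ∫ r in Ioc a b, plus r := by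
    intro a b ha hab
    have hIoi : Ioc a b ⊆ Ioi 0 := fun x hx => lt_trans ha hx.1
    have hcross_int : IntegrableOn (fun r => ffun k (w r) * gw u r) (Ioc a b) :=
      cont_integrableOn ha hffcont
    have hcross_ftc : ∫ r in Ioc a b, ffun k (w r) * gw u r = φ b - φ a := by
      rw [← intervalIntegral.integral_of_le hab]
      apply intervalIntegral.integral_eq_sub_of_hasDerivAt
      · intro x hx
        rw [uIcc_of_le hab] at hx
        exact hφd x (lt_of_lt_of_le ha hx.1)
      · apply ContinuousOn.intervalIntegrable
        apply hffcont.mono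
        rw [uIcc_of_le hab]
        exact fun x hx => lt_of_lt_of_le ha hx.1
    have both : ∀ σ : ℝ, σ^2 = 1 → 2*σ*c*(φ b - φ a) ≤ ∫ r in Ioc a b, plus r := by
      intro σ hσ
      have hsq0 : 0 ≤ ∫ r in Ioc a b,
          (Real.sqrt r * gw u r - σ*c*(ffun k (w r))/Real.sqrt r)^2 :=
        setIntegral_nonneg measurableSet_Ioc (fun x _ => sq_nonneg _)
      have hexp : ∫ r in Ioc a b,
          (Real.sqrt r * gw u r - σ*c*(ffun k (w r))/Real.sqrt r)^2
          = (∫ r in Ioc a b, plus r)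
            - 2*σ*c*∫ r in Ioc a b, ffun k (w r) * gw u r := by
        calc ∫ r in Ioc a b, (Real.sqrt r * gw u r - σ*c*(ffun k (w r))/Real.sqrt r)^2
            = ∫ r in Ioc a b, (plus r - 2*σ*c*(ffun k (w r) * gw u r)) := by
              apply setIntegral_congr_fun measurableSet_Ioc
              intro r hr
              have hr0 : (0:ℝ) < r := lt_trans ha hr.1
              have ht0 : Real.sqrt r ≠ 0 := ne_of_gt (Real.sqrt_pos.mpr hr0)
              have := sq_expand_aux (c := c) hr0 hσ (Real.sqrt r) (gw u r) (ffun k (w r))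
                ht0 (Real.sq_sqrt hr0.le)
              refine this.trans ?_
              simp only [hplus]
              rw [hfw r hr0]
          _ = _ := by
              rw [integral_sub (hplus_int.mono_set hIoi)
                (Integrable.congr (hcross_int.const_mul (2*σ*c)) (ae_of_all _ fun x => by ring)),
                ← integral_const_mul]
      rw [hexp, hcross_ftc] at hsq0
      linarith
    rw [abs_le']
    constructor
    · have := both 1 (by norm_num)
      linarith
    · have := both (-1) (by norm_num)
      linarith
  -- left piece
  have hwzero : Tendsto w (nhdsWithin 0 (Ioi 0)) (nhds 0) := sqrt_mul_tendsto_zero hu hE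
  have hwtop : Tendsto w atTop (nhds 0) := w_tendsto_atTop hu hlim hE
  have hFcont := Ffun_continuous k
  have hleft : 2*c*(φ r₀) ≤ ∫ r in Ioc (0:ℝ) r₀, plus r := by
    set as : ℕ → ℝ := fun n => r₀ * ((n:ℝ)+1)⁻¹ with has
    have has0 : ∀ n, 0 < as n := fun n => by positivity
    have hasr₀ : ∀ n, as n ≤ r₀ := by
      intro n
      rw [has]
      have h1 : ((n:ℝ)+1)⁻¹ ≤ 1 := inv_le_one_of_one_le₀ (by linarith [Nat.cast_nonneg (α := ℝ) n])
      nlinarith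
    have haslim : Tendsto as atTop (nhds 0) := by
      rw [has]
      have h1 : Tendsto (fun n : ℕ => ((n:ℝ)+1)⁻¹) atTop (nhds 0) :=
        tendsto_one_div_add_atTop_nhds_zero_nat.congr (fun n => by rw [one_div])
      simpa using h1.const_mul r₀
    have haslim' : Tendsto as atTop (nhdsWithin 0 (Ioi 0)) := by
      rw [tendsto_nhdsWithin_iff]
      exact ⟨haslim, Eventually.of_forall (fun n => has0 n)⟩
    have hφas : Tendsto (fun n => φ (as n)) atTop (nhds 0) := by
      have h1 : Tendsto (fun n => w (as n)) atTop (nhds 0) := hwzero.comp haslim'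
      have h2 := (hFcont.tendsto' 0 0 (Ffun_zero k)).comp h1
      exact h2
    have hbound : ∀ n, 2*c*(φ r₀) - 2*c*(φ (as n)) ≤ ∫ r in Ioc (0:ℝ) r₀, plus r := by
      intro n
      have h1 := hstep (as n) r₀ (has0 n) (hasr₀ n)
      have h2 : ∫ r in Ioc (as n) r₀, plus r ≤ ∫ r in Ioc (0:ℝ) r₀, plus r := by
        apply setIntegral_mono_set (hplus_int.mono_set Ioc_subset_Ioi_self)
        · filter_upwards [ae_restrict_mem measurableSet_Ioc] with x hx
          exact hplus_nn x hx.1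
        · exact HasSubset.Subset.eventuallyLE (Ioc_subset_Ioc (has0 n).le le_rfl)
      have h3 : 2*c*(φ r₀ - φ (as n)) ≤ |2*c*(φ r₀ - φ (as n))| := le_abs_self _
      calc 2*c*(φ r₀) - 2*c*(φ (as n)) = 2*c*(φ r₀ - φ (as n)) := by ring
        _ ≤ |2*c*(φ r₀ - φ (as n))| := h3
        _ ≤ ∫ r in Ioc (as n) r₀, plus r := h1
        _ ≤ _ := h2
    have hlim2 : Tendsto (fun n => 2*c*(φ r₀) - 2*c*(φ (as n))) atTop (nhds (2*c*(φ r₀) - 2*c*0)) :=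
      tendsto_const_nhds.sub ((hφas.const_mul (2*c)))
    have := le_of_tendsto hlim2 (Eventually.of_forall hbound)
    simpa using this
  -- right piece
  have hright : 2*c*(φ r₀) ≤ ∫ r in Ioi r₀, plus r := by
    set bs : ℕ → ℝ := fun n => r₀ + (n:ℝ) + 1 with hbs
    have hbs0 : ∀ n, r₀ ≤ bs n := fun n => by
      rw [hbs]; simp only; linarith [Nat.cast_nonneg (α := ℝ) n]
    have hbslim : Tendsto bs atTop atTop := by
      rw [hbs]
      apply tendsto_atTop_add_const_right
      exact tendsto_atTop_add_const_left _ _ tendsto_natCast_atTop_atTop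
    have hφbs : Tendsto (fun n => φ (bs n)) atTop (nhds 0) := by
      have h1 : Tendsto (fun n => w (bs n)) atTop (nhds 0) := hwtop.comp hbslim
      exact (hFcont.tendsto' 0 0 (Ffun_zero k)).comp h1
    have hbound : ∀ n, 2*c*(φ r₀) - 2*c*(φ (bs n)) ≤ ∫ r in Ioi r₀, plus r := by
      intro n
      have h1 := hstep r₀ (bs n) hr₀0 (hbs0 n)
      have h2 : ∫ r in Ioc r₀ (bs n), plus r ≤ ∫ r in Ioi r₀, plus r :=
        setIntegral_mono_Ioi Ioc_subset_Ioi_self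
          (hplus_int.mono_set (Ioi_subset_Ioi hr₀0.le))
          (fun x hx => hplus_nn x (lt_trans hr₀0 hx))
      have h3 : -(2*c*(φ (bs n) - φ r₀)) ≤ |2*c*(φ (bs n) - φ r₀)| := neg_le_abs _
      calc 2*c*(φ r₀) - 2*c*(φ (bs n)) = -(2*c*(φ (bs n) - φ r₀)) := by ring
        _ ≤ |2*c*(φ (bs n) - φ r₀)| := h3
        _ ≤ ∫ r in Ioc r₀ (bs n), plus r := h1
        _ ≤ _ := h2
    have hlim2 : Tendsto (fun n => 2*c*(φ r₀) - 2*c*(φ (bs n))) atTop (nhds (2*c*(φ r₀) - 2*c*0)) :=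
      tendsto_const_nhds.sub ((hφbs.const_mul (2*c)))
    have := le_of_tendsto hlim2 (Eventually.of_forall hbound)
    simpa using this
  -- union and evaluation
  have hunion : ∫ r in Ioi (0:ℝ), plus r
      = (∫ r in Ioc (0:ℝ) r₀, plus r) + ∫ r in Ioi r₀, plus r := by
    rw [← setIntegral_union (Ioc_disjoint_Ioi le_rfl) measurableSet_Ioi
      (hplus_int.mono_set Ioc_subset_Ioi_self)
      (hplus_int.mono_set (Ioi_subset_Ioi hr₀0.le)),
      Ioc_union_Ioi_eq_Ioi hr₀0.le]
  have hval : ∫ r in Ioi (0:ℝ), plus r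
      = (∫ r in Ioi (0:ℝ), r * gw u r ^ 2)
        + c^2 * (k^4 * (∫ x in Ioi (0:ℝ), u x ^ 2) - ∫ x in Ioi (0:ℝ), x^2 * u x ^ 6) := by
    simp only [hplus]
    have i4 : IntegrableOn (fun x => k^4 * u x ^ 2 - x^2 * u x ^ 6) (Ioi 0) := by
      exact (hA.const_mul (k^4)).sub hP
    have i3 : IntegrableOn (fun x => c^2 * (k^4 * u x ^ 2 - x^2 * u x ^ 6)) (Ioi 0) := by
      exact i4.const_mul (c^2)
    have i5 : IntegrableOn (fun x => k^4 * u x ^ 2) (Ioi 0) := by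
      exact hA.const_mul (k^4)
    rw [integral_add hGint i3]
    congr 1
    rw [integral_const_mul]
    congr 1
    rw [integral_sub i5 hP, integral_const_mul]
  have hφr₀ : φ r₀ = Ffun k m := by
    simp only [hφ, hm]
    rw [Ffun_abs]
  rw [← hφr₀]
  linarith [hleft, hright, hunion.symm.trans hval]
lemma final_arith {E A P G m : ℝ} (hE0 : 0 ≤ E) (hA0 : 0 ≤ A) (hP0 : 0 ≤ P)
    (hGpos : 0 < G) (hmain : P ≤ m^4*A - Real.pi^2*m^8/(16*G)) (hAGE : A/4 + G ≤ E) :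
    P ≤ (256/(27*Real.pi^2)) * E^3 := by
  have hπ : 0 < Real.pi := Real.pi_pos
  have h1 : P ≤ 4*A^2*G/Real.pi^2 := by
    have expand : 4*A^2*G/Real.pi^2 - (m^4*A - Real.pi^2*m^8/(16*G))
        = (Real.pi^2*m^4 - 8*A*G)^2/(16*G*Real.pi^2) := by
      field_simp
      ring
    have hn : 0 ≤ (Real.pi^2*m^4 - 8*A*G)^2/(16*G*Real.pi^2) := by positivity
    linarith
  have h2 : 27*(A^2*G) ≤ 64*E^3 := by
    have hE3 : (A/4+G)^3 ≤ E^3 := by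
      apply pow_le_pow_left₀ (by positivity) hAGE
    have expand2 : 64*(A/4+G)^3 - 27*(A^2*G) = 16*((A/4-2*G)^2*(A+G)) := by ring
    nlinarith [sq_nonneg (A/4-2*G), hA0, hGpos.le]
  have h3 : 4*A^2*G/Real.pi^2 ≤ (256/(27*Real.pi^2)) * E^3 := by
    rw [div_le_iff₀ (by positivity : (0:ℝ) < Real.pi^2)]
    rw [show (256/(27*Real.pi^2)) * E^3 * Real.pi^2 = 256*E^3/27 from by field_simp]
    rw [le_div_iff₀ (by norm_num : (0:ℝ) < 27)]
    linarith
  linarith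

lemma nagy_limit (hu : ContDiffOn ℝ 1 u (Ioi 0)) (hlim : Tendsto u atTop (nhds 0))
    (hE : IntegrableOn (fun x => x^2 * (deriv u x)^2) (Ioi 0))
    (hP : IntegrableOn (fun x => x^2 * u x ^ 6) (Ioi 0))
    {r₀ c : ℝ} (hr₀ : r₀ ∈ Ioi (0:ℝ)) (hc : 0 < c)
    (hmax : ∀ r ∈ Ioi (0:ℝ), |Real.sqrt r * u r| ≤ |Real.sqrt r₀ * u r₀|)
    (hm : 0 < |Real.sqrt r₀ * u r₀|) :
    Real.pi/2 * c * |Real.sqrt r₀ * u r₀|^4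
      ≤ (∫ r in Ioi (0:ℝ), r * gw u r ^ 2)
        + c^2 * (|Real.sqrt r₀ * u r₀|^4 * (∫ x in Ioi (0:ℝ), u x ^ 2)
          - ∫ x in Ioi (0:ℝ), x^2 * u x ^ 6) := by
  set m := |Real.sqrt r₀ * u r₀| with hmdef
  set A := ∫ x in Ioi (0:ℝ), u x ^ 2 with hA
  set P := ∫ x in Ioi (0:ℝ), x^2 * u x ^ 6 with hPd
  set G := ∫ r in Ioi (0:ℝ), r * gw u r ^ 2 with hG
  set ks : ℕ → ℝ := fun n => m + ((n:ℝ)+1)⁻¹ with hks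
  have hkm : ∀ n, m < ks n := fun n => by
    rw [hks]; simp only; have : (0:ℝ) < ((n:ℝ)+1)⁻¹ := by positivity
    linarith
  have htk : Tendsto ks atTop (nhds m) := by
    rw [hks]
    have h1 : Tendsto (fun n : ℕ => ((n:ℝ)+1)⁻¹) atTop (nhds 0) :=
      tendsto_one_div_add_atTop_nhds_zero_nat.congr (fun n => by rw [one_div])
    simpa using (tendsto_const_nhds (x := m)).add h1
  -- the inequality for each n
  have hineq : ∀ n, 4*c*(Ffun (ks n) m) ≤ G + c^2 * ((ks n)^4 * A - P) :=
    fun n => nagy_ineq hu hlim hE hP hr₀ hc hmax (hkm n)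
  -- limit of LHS
  have hm2 : m^2 ≠ 0 := by positivity
  have hΨ : Tendsto (fun n => Ffun (ks n) m) atTop (nhds (Real.pi * m^4/8)) := by
    have hcont : ContinuousAt (fun k : ℝ => Ffun k m) m := by
      unfold Ffun
      apply ContinuousAt.add
      · apply ContinuousAt.div_const
        apply ContinuousAt.mul continuousAt_const
        exact (Real.continuous_sqrt.continuousAt).comp (by fun_prop)
      · apply ContinuousAt.mul (by fun_prop)
        apply Real.continuous_arcsin.continuousAt.comp
        apply ContinuousAt.div continuousAt_const (by fun_prop)
        positivity
    have hval : Ffun m m = Real.pi * m^4/8 := by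
      unfold Ffun
      rw [sub_self, Real.sqrt_zero, div_self (by positivity : (m:ℝ)^2 ≠ 0), Real.arcsin_one]
      ring
    have := (hcont.tendsto).comp htk
    rw [hval] at this
    exact this
  have hLHS : Tendsto (fun n => 4*c*(Ffun (ks n) m)) atTop (nhds (4*c*(Real.pi * m^4/8))) :=
    hΨ.const_mul (4*c)
  have hRHS : Tendsto (fun n => G + c^2 * ((ks n)^4 * A - P)) atTop
      (nhds (G + c^2 * (m^4 * A - P))) := by
    apply Tendsto.add tendsto_const_nhds
    apply Tendsto.const_mul
    exact (((htk.pow 4).mul_const A).sub tendsto_const_nhds)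
  have := le_of_tendsto_of_tendsto' hLHS hRHS hineq
  calc Real.pi/2 * c * m^4 = 4*c*(Real.pi * m^4/8) := by ring
    _ ≤ G + c^2 * (m^4 * A - P) := this

/-- the sharp radial Sobolev inequality -/
lemma radial_sobolev (hu : ContDiffOn ℝ 1 u (Ioi 0)) (hlim : Tendsto u atTop (nhds 0))
    (hE : IntegrableOn (fun x => x^2 * (deriv u x)^2) (Ioi 0))
    (hP : IntegrableOn (fun x => x^2 * u x ^ 6) (Ioi 0)) :
    ∫ x in Ioi (0:ℝ), x^2 * u x ^ 6
      ≤ (256/(27*Real.pi^2)) * (∫ x in Ioi (0:ℝ), x^2 * (deriv u x)^2)^3 := by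
  set E := ∫ x in Ioi (0:ℝ), x^2 * (deriv u x)^2 with hEd
  set A := ∫ x in Ioi (0:ℝ), u x ^ 2 with hAd
  set P := ∫ x in Ioi (0:ℝ), x^2 * u x ^ 6 with hPd
  set G := ∫ r in Ioi (0:ℝ), r * gw u r ^ 2 with hGd
  have hE0 : 0 ≤ E := setIntegral_nonneg measurableSet_Ioi (fun x _ => by positivity)
  have hA0 : 0 ≤ A := setIntegral_nonneg measurableSet_Ioi (fun x _ => by positivity)
  have hP0 : 0 ≤ P := setIntegral_nonneg measurableSet_Ioi (fun x _ => by positivity)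
  have hG0 : 0 ≤ G := setIntegral_nonneg measurableSet_Ioi (fun x hx => by
    have : (0:ℝ) < x := hx
    positivity)
  have hπ : 0 < Real.pi := Real.pi_pos
  by_cases hz : ∀ r ∈ Ioi (0:ℝ), u r = 0
  · have : P = 0 := by
      rw [hPd]
      rw [setIntegral_congr_fun measurableSet_Ioi
        (fun x hx => by rw [hz x hx]; ring : ∀ x ∈ Ioi (0:ℝ), x^2 * u x ^ 6 = 0)]
      simp
    rw [this]
    positivity
  · push_neg at hz
    obtain ⟨r₀, hr₀, hm, hmax⟩ := exists_w_max hu hlim hE hz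
    set m := |Real.sqrt r₀ * u r₀| with hmdef
    have hm4 : 0 < m^4 := by positivity
    have key : ∀ c : ℝ, 0 < c → Real.pi/2 * c * m^4 ≤ G + c^2 * (m^4 * A - P) :=
      fun c hc => nagy_limit hu hlim hE hP hr₀ hc hmax hm
    have hGA := gw_energy_le hu hlim hE
    -- G must be positive
    have hGpos : 0 < G := by
      rcases lt_or_eq_of_le hG0 with h | h
      · exact h
      · exfalso
        set c := Real.pi/(4*(A+1)) with hcd
        have hA1 : 0 < A + 1 := by linarith
        have hc : 0 < c := by rw [hcd]; positivity
        have h1 := key c hc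
        rw [← h] at h1
        -- π/2 c m⁴ ≤ c²(m⁴A − P) ≤ c² m⁴ A
        have h2 : Real.pi/2 * c * m^4 ≤ c^2 * (m^4 * A) := by
          nlinarith [sq_nonneg c, hP0, hm4]
        have h3 : Real.pi/2 ≤ c * A := by
          have hcc : 0 < c * m^4 := by positivity
          nlinarith
        rw [hcd] at h3
        rw [div_mul_eq_mul_div, le_div_iff₀ (by positivity)] at h3
        nlinarith
    -- optimal choice of c
    set c := 4*G/(Real.pi*m^4) with hcd
    have hc : 0 < c := by rw [hcd]; positivity
    have h1 := key c hc
    have hc2 : c^2 = 16*G^2/(Real.pi^2*m^8) := by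
      rw [hcd]; rw [div_pow]; ring_nf
    have hmain : P ≤ m^4*A - Real.pi^2*m^8/(16*G) := by
      -- from h1 : π/2 c m⁴ ≤ G + c²(m⁴A − P)
      have hπ2 : Real.pi/2 * c * m^4 = 2*G := by
        rw [hcd]; field_simp; ring
      rw [hπ2] at h1
      -- c² P ≤ c² m⁴ A − G
      have h2 : c^2 * P ≤ c^2 * (m^4*A) - G := by nlinarith
      have h3 : (0:ℝ) < c^2 := by positivity
      -- divide by c²
      have h4 : P ≤ m^4*A - G/c^2 := by
        have hgc : G / c^2 * c^2 = G := div_mul_cancel₀ G (ne_of_gt h3)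
        nlinarith [h2, hgc, h3]
      have h5 : G/c^2 = Real.pi^2*m^8/(16*G) := by
        rw [hc2]
        field_simp
      rwa [h5] at h4
    have hAGE : A/4 + G ≤ E := by
      rw [hEd, hAd, hGd]
      linarith [hGA]
    exact final_arith hE0 hA0 hP0 hGpos hmain hAGE

end Sobolev


lemma holder_pointwise {ξ a z : ℝ} (hξ : 0 < ξ) :
    (ξ^2*a^2)^(3/4:ℝ)*(ξ^2*a^6)^(1/12:ℝ)*(ξ^2*|z|^6)^(1/6:ℝ) = ξ^2*a^2*|z| := by
  have hξ0 : (0:ℝ) ≤ ξ := hξ.le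
  have ha2 : a^2 = |a|^2 := (sq_abs a).symm
  have ha6 : a^6 = |a|^6 := by
    rw [← abs_pow]
    exact (abs_of_nonneg (by positivity)).symm
  rw [ha2, ha6]
  have habs : (0:ℝ) ≤ |a| := abs_nonneg a
  have hzabs : (0:ℝ) ≤ |z| := abs_nonneg z
  -- expand each factor
  have e1 : (ξ^2*|a|^2)^(3/4:ℝ) = ξ^(3/2:ℝ) * |a|^(3/2:ℝ) := by
    rw [Real.mul_rpow (by positivity) (by positivity),
      ← Real.rpow_natCast ξ 2, ← Real.rpow_natCast |a| 2,
      ← Real.rpow_mul hξ0, ← Real.rpow_mul habs]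
    norm_num
  have e2 : (ξ^2*|a|^6)^(1/12:ℝ) = ξ^(1/6:ℝ) * |a|^(1/2:ℝ) := by
    rw [Real.mul_rpow (by positivity) (by positivity),
      ← Real.rpow_natCast ξ 2, ← Real.rpow_natCast |a| 6,
      ← Real.rpow_mul hξ0, ← Real.rpow_mul habs]
    norm_num
  have e3 : (ξ^2*|z|^6)^(1/6:ℝ) = ξ^(1/3:ℝ) * |z| := by
    rw [Real.mul_rpow (by positivity) (by positivity),
      ← Real.rpow_natCast ξ 2, ← Real.rpow_natCast |z| 6,
      ← Real.rpow_mul hξ0, ← Real.rpow_mul hzabs]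
    norm_num
  rw [e1, e2, e3]
  have hξc : ξ^(3/2:ℝ) * ξ^(1/6:ℝ) * ξ^(1/3:ℝ) = ξ^2 := by
    rw [← Real.rpow_add hξ, ← Real.rpow_add hξ]
    norm_num
  have hac : |a|^(3/2:ℝ) * |a|^(1/2:ℝ) = |a|^2 := by
    rw [← Real.rpow_add' habs (by norm_num)]
    norm_num
  calc ξ^(3/2:ℝ) * |a|^(3/2:ℝ) * (ξ^(1/6:ℝ) * |a|^(1/2:ℝ)) * (ξ^(1/3:ℝ) * |z|)
      = (ξ^(3/2:ℝ) * ξ^(1/6:ℝ) * ξ^(1/3:ℝ)) * (|a|^(3/2:ℝ) * |a|^(1/2:ℝ)) * |z| := by ring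
    _ = ξ^2 * |a|^2 * |z| := by rw [hξc, hac]

lemma rpow_npow {x : ℝ} (hx : 0 ≤ x) (p : ℝ) (n m : ℕ) (h : p * n = m) :
    (x ^ p)^n = x ^ m := by
  rw [← Real.rpow_natCast (x ^ p) n, ← Real.rpow_mul hx, h, Real.rpow_natCast]

lemma assemble_arith {a s Ps Pz b μ : ℝ} (ha0 : 0 ≤ a) (hs : 0 < s)
    (hPs0 : 0 ≤ Ps) (hPz0 : 0 ≤ Pz) (hμ : 0 < μ)
    (hIle : a + s ≤ s^(3/4:ℝ)*Ps^(1/12:ℝ)*Pz^(1/6:ℝ))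
    (hPsb : Ps ≤ 256/(27*Real.pi^2)*a^3)
    (hPzb : Pz ≤ 256/(27*Real.pi^2)*b^3)
    (hb : b = μ*(a+s)) :
    (3/8)*Real.pi*Real.sqrt 3 ≤ μ*s := by
  have hπ : 0 < Real.pi := Real.pi_pos
  have hC : (0:ℝ) < 256/(27*Real.pi^2) := by positivity
  have hI : (0:ℝ) < a + s := by linarith
  have h12 : (a+s)^12 ≤ s^9 * Ps * Pz^2 := by
    have h1 := pow_le_pow_left₀ hI.le hIle 12
    calc (a+s)^12 ≤ (s^(3/4:ℝ)*Ps^(1/12:ℝ)*Pz^(1/6:ℝ))^12 := h1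
      _ = s^9*Ps^1*Pz^2 := by
          rw [mul_pow, mul_pow, rpow_npow hs.le (3/4) 12 9 (by norm_num),
            rpow_npow hPs0 (1/12) 12 1 (by norm_num),
            rpow_npow hPz0 (1/6) 12 2 (by norm_num)]
      _ = s^9*Ps*Pz^2 := by ring
  have hchain : (a+s)^12 ≤ s^9 * (256/(27*Real.pi^2)*a^3) * (256/(27*Real.pi^2)*b^3)^2 := by
    refine le_trans h12 ?_
    gcongr
  have hX6 : (0:ℝ) < (a+s)^6 := pow_pos hI 6
  have h6 : (a+s)^6 ≤ (256/(27*Real.pi^2))^3*μ^6*(s^9*a^3) := by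
    have h2 : (a+s)^6*(a+s)^6 ≤ ((256/(27*Real.pi^2))^3*μ^6*(s^9*a^3))*(a+s)^6 := by
      calc (a+s)^6*(a+s)^6 = (a+s)^12 := by ring
        _ ≤ s^9 * (256/(27*Real.pi^2)*a^3) * (256/(27*Real.pi^2)*b^3)^2 := hchain
        _ = ((256/(27*Real.pi^2))^3*μ^6*(s^9*a^3))*(a+s)^6 := by rw [hb]; ring
    exact le_of_mul_le_mul_right h2 hX6
  have hsa : 64*(s^3*a^3) ≤ (a+s)^6 := by
    have h1 : 4*(s*a) ≤ (a+s)^2 := by nlinarith [sq_nonneg (a-s)]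
    have h3 := pow_le_pow_left₀ (by positivity : (0:ℝ) ≤ 4*(s*a)) h1 3
    calc 64*(s^3*a^3) = (4*(s*a))^3 := by ring
      _ ≤ ((a+s)^2)^3 := h3
      _ = (a+s)^6 := by ring
  have h64 : 64 ≤ (256/(27*Real.pi^2))^3*(μ*s)^6 := by
    have k1 : (a+s)^6 ≤ ((256/(27*Real.pi^2))^3*μ^6*s^6)*(s^3*a^3) := by
      calc (a+s)^6 ≤ (256/(27*Real.pi^2))^3*μ^6*(s^9*a^3) := h6
        _ = ((256/(27*Real.pi^2))^3*μ^6*s^6)*(s^3*a^3) := by ring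
    have hfac : (0:ℝ) ≤ (256/(27*Real.pi^2))^3*μ^6*s^6 := by positivity
    have k2 : 64*(a+s)^6 ≤ ((256/(27*Real.pi^2))^3*μ^6*s^6)*(a+s)^6 := by
      calc 64*(a+s)^6 ≤ 64*(((256/(27*Real.pi^2))^3*μ^6*s^6)*(s^3*a^3)) := by linarith
        _ = ((256/(27*Real.pi^2))^3*μ^6*s^6)*(64*(s^3*a^3)) := by ring
        _ ≤ ((256/(27*Real.pi^2))^3*μ^6*s^6)*(a+s)^6 := by
            exact mul_le_mul_of_nonneg_left hsa hfac
    have k3 : 64 ≤ (256/(27*Real.pi^2))^3*μ^6*s^6 := le_of_mul_le_mul_right k2 hX6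
    calc (64:ℝ) ≤ (256/(27*Real.pi^2))^3*μ^6*s^6 := k3
      _ = (256/(27*Real.pi^2))^3*(μ*s)^6 := by ring
  have hC3 : (0:ℝ) < (256/(27*Real.pi^2))^3 := by positivity
  have hμs : (0:ℝ) < μ*s := mul_pos hμ hs
  have hT : ((3/8)*Real.pi*Real.sqrt 3)^6 = 64/(256/(27*Real.pi^2))^3 := by
    have h3 : Real.sqrt 3^6 = 27 := by
      rw [show (6:ℕ) = 2*3 from rfl, pow_mul, Real.sq_sqrt (by norm_num : (0:ℝ) ≤ 3)]
      norm_num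
    rw [mul_pow, mul_pow, h3]
    have hπ0 : Real.pi ≠ 0 := ne_of_gt hπ
    field_simp
    ring
  have h5 : ((3/8)*Real.pi*Real.sqrt 3)^6 ≤ (μ*s)^6 := by
    rw [hT, div_le_iff₀ hC3]
    nlinarith [h64]
  have hT0 : (0:ℝ) ≤ (3/8)*Real.pi*Real.sqrt 3 := by positivity
  exact (pow_le_pow_iff_left₀ hT0 hμs.le (by norm_num : (6:ℕ) ≠ 0)).mp h5

/-- The mass lower bound of Theorem 2 (estimate (22)):
`M = μ ∫₀^∞ ξ² S² dξ ≥ (3/8)π√3` for any nontrivial decaying solution satisfying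
the two integral identities obtained from the field equations. -/
theorem soliton_star_mass_lower_bound
    (μ : ℝ) (hμ : 0 < μ) (S Z : ℝ → ℝ)
    (hS : ContDiffOn ℝ 1 S (Set.Ioi 0))
    (hZ : ContDiffOn ℝ 1 Z (Set.Ioi 0))
    (hSne : ∃ ξ ∈ Set.Ioi (0:ℝ), S ξ ≠ 0)
    (hSinf : Tendsto S atTop (nhds 0))
    (hZinf : Tendsto Z atTop (nhds 0))
    (hint1 : IntegrableOn (fun ξ => ξ ^ 2 * ((deriv S ξ) ^ 2 + S ξ ^ 2)) (Set.Ioi 0))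
    (hint2 : IntegrableOn (fun ξ => ξ ^ 2 * (deriv Z ξ) ^ 2) (Set.Ioi 0))
    (hint3 : IntegrableOn (fun ξ => ξ ^ 2 * S ξ ^ 6) (Set.Ioi 0))
    (hint4 : IntegrableOn (fun ξ => ξ ^ 2 * |Z ξ| ^ 6) (Set.Ioi 0))
    (hint5 : IntegrableOn (fun ξ => ξ ^ 2 * S ξ ^ 2 * |Z ξ|) (Set.Ioi 0))
    (hid1 : ∫ ξ in Set.Ioi (0:ℝ), ξ ^ 2 * ((deriv S ξ) ^ 2 + S ξ ^ 2)
          = -∫ ξ in Set.Ioi (0:ℝ), ξ ^ 2 * S ξ ^ 2 * Z ξ)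
    (hid2 : ∫ ξ in Set.Ioi (0:ℝ), ξ ^ 2 * (deriv Z ξ) ^ 2
          = -μ * ∫ ξ in Set.Ioi (0:ℝ), ξ ^ 2 * S ξ ^ 2 * Z ξ) :
    (3/8) * Real.pi * Real.sqrt 3 ≤ μ * ∫ ξ in Set.Ioi (0:ℝ), ξ ^ 2 * S ξ ^ 2 := by
  -- basic continuity / measurability
  have hScont : ContinuousOn S (Ioi 0) := hS.continuousOn
  have hZcont : ContinuousOn Z (Ioi 0) := hZ.continuousOn
  have hS2cont : ContinuousOn (fun ξ : ℝ => ξ^2 * S ξ^2) (Ioi 0) :=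
    (continuousOn_pow 2).mul (hScont.pow 2)
  -- integrability of the two pieces of hint1
  have hS2int : IntegrableOn (fun ξ : ℝ => ξ^2 * S ξ^2) (Ioi 0) := by
    apply Integrable.mono' hint1 (hS2cont.aestronglyMeasurable measurableSet_Ioi)
    filter_upwards with ξ
    rw [Real.norm_eq_abs, abs_of_nonneg (by positivity : (0:ℝ) ≤ ξ^2*S ξ^2)]
    nlinarith [sq_nonneg (ξ * deriv S ξ), sq_nonneg ξ, sq_nonneg (deriv S ξ),
      mul_nonneg (sq_nonneg ξ) (sq_nonneg (deriv S ξ))]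
  have hS'2int : IntegrableOn (fun ξ : ℝ => ξ^2 * (deriv S ξ)^2) (Ioi 0) := by
    apply Integrable.mono' hint1
      (((measurable_id.pow_const 2).mul ((measurable_deriv S).pow_const 2)).aestronglyMeasurable)
    filter_upwards with ξ
    simp only [id_eq]
    show ‖ξ^2*(deriv S ξ)^2‖ ≤ ξ^2*((deriv S ξ)^2 + S ξ^2)
    rw [Real.norm_eq_abs, abs_of_nonneg (by positivity : (0:ℝ) ≤ ξ^2*(deriv S ξ)^2)]
    nlinarith [mul_nonneg (sq_nonneg ξ) (sq_nonneg (S ξ))]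
  -- split the first identity
  have hsplit : ∫ ξ in Ioi (0:ℝ), ξ^2*((deriv S ξ)^2 + S ξ^2)
      = (∫ ξ in Ioi (0:ℝ), ξ^2*(deriv S ξ)^2) + ∫ ξ in Ioi (0:ℝ), ξ^2*S ξ^2 := by
    rw [← integral_add hS'2int hS2int]
    exact setIntegral_congr_fun measurableSet_Ioi (fun ξ _ => by ring)
  have ha0 : 0 ≤ ∫ ξ in Ioi (0:ℝ), ξ^2*(deriv S ξ)^2 :=
    setIntegral_nonneg measurableSet_Ioi (fun x _ => by positivity)
  -- positivity of ∫ ξ² S²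
  have hspos : 0 < ∫ ξ in Ioi (0:ℝ), ξ^2*S ξ^2 := by
    obtain ⟨ξ₀, hξ₀, hSξ₀⟩ := hSne
    apply setIntegral_pos_of_cont hS2cont (fun x _ => by positivity) hξ₀ _ hS2int
    have hξ₀0 : (0:ℝ) < ξ₀ := hξ₀
    have : S ξ₀ ^ 2 > 0 := by positivity
    positivity
  -- the basic identity : a + s = -J
  have hI : (∫ ξ in Ioi (0:ℝ), ξ^2*(deriv S ξ)^2) + (∫ ξ in Ioi (0:ℝ), ξ^2*S ξ^2)
      = -∫ ξ in Ioi (0:ℝ), ξ^2*S ξ^2*Z ξ := by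
    rw [← hsplit]
    exact hid1
  -- |J| bound
  have hJint : IntegrableOn (fun ξ : ℝ => ξ^2*S ξ^2*Z ξ) (Ioi 0) := by
    apply Integrable.mono' hint5
      ((hS2cont.mul hZcont).aestronglyMeasurable measurableSet_Ioi)
    filter_upwards with ξ
    show ‖ξ^2*S ξ^2*Z ξ‖ ≤ ξ^2*S ξ^2*|Z ξ|
    rw [Real.norm_eq_abs, abs_mul, abs_of_nonneg (by positivity : (0:ℝ) ≤ ξ^2*S ξ^2)]
  have hJabs : -(∫ ξ in Ioi (0:ℝ), ξ^2*S ξ^2*Z ξ) ≤ ∫ ξ in Ioi (0:ℝ), ξ^2*S ξ^2*|Z ξ| := by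
    have h1 : -(∫ ξ in Ioi (0:ℝ), ξ^2*S ξ^2*Z ξ) ≤ |∫ ξ in Ioi (0:ℝ), ξ^2*S ξ^2*Z ξ| :=
      neg_le_abs _
    have h2 : |∫ ξ in Ioi (0:ℝ), ξ^2*S ξ^2*Z ξ| ≤ ∫ ξ in Ioi (0:ℝ), |ξ^2*S ξ^2*Z ξ| := by
      rw [← Real.norm_eq_abs]
      exact (norm_integral_le_integral_norm _).trans (le_of_eq (by simp only [Real.norm_eq_abs]))
    have h3 : ∫ ξ in Ioi (0:ℝ), |ξ^2*S ξ^2*Z ξ| = ∫ ξ in Ioi (0:ℝ), ξ^2*S ξ^2*|Z ξ| := by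
      apply setIntegral_congr_fun measurableSet_Ioi
      intro ξ _
      show |ξ^2*S ξ^2*Z ξ| = ξ^2*S ξ^2*|Z ξ|
      rw [abs_mul, abs_of_nonneg (by positivity : (0:ℝ) ≤ ξ^2*S ξ^2)]
    linarith
  -- Hölder inequality
  have hmes1 : AEMeasurable (fun ξ : ℝ => ξ^2*S ξ^2) (volume.restrict (Ioi 0)) :=
    hS2cont.aemeasurable measurableSet_Ioi
  have hmes2 : AEMeasurable (fun ξ : ℝ => ξ^2*S ξ^6) (volume.restrict (Ioi 0)) :=
    ((continuousOn_pow 2).mul (hScont.pow 6)).aemeasurable measurableSet_Ioi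
  have hmes3 : AEMeasurable (fun ξ : ℝ => ξ^2*|Z ξ|^6) (volume.restrict (Ioi 0)) :=
    ((continuousOn_pow 2).mul ((hZcont.abs).pow 6)).aemeasurable measurableSet_Ioi
  have hprod_int : Integrable
      (fun ξ : ℝ => (ξ^2*S ξ^2)^(3/4:ℝ)*(ξ^2*S ξ^6)^(1/12:ℝ)*(ξ^2*|Z ξ|^6)^(1/6:ℝ))
      (volume.restrict (Ioi 0)) := by
    apply Integrable.congr hint5
    filter_upwards [ae_restrict_mem measurableSet_Ioi] with ξ hξ
    exact (holder_pointwise hξ).symm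
  have hHold := integral_rpow3_le (μ := volume.restrict (Ioi 0))
    (f := fun ξ : ℝ => ξ^2*S ξ^2) (g := fun ξ : ℝ => ξ^2*S ξ^6)
    (h := fun ξ : ℝ => ξ^2*|Z ξ|^6)
    (p := 3/4) (q := 1/12) (r := 1/6) (by norm_num) (by norm_num) (by norm_num) (by norm_num)
    hmes1 hmes2 hmes3
    (ae_of_all _ fun ξ => by positivity) (ae_of_all _ fun ξ => by positivity)
    (ae_of_all _ fun ξ => by positivity)
    hS2int hint3 hint4 hprod_int
  have hLcongr : ∫ ξ in Ioi (0:ℝ), (ξ^2*S ξ^2)^(3/4:ℝ)*(ξ^2*S ξ^6)^(1/12:ℝ)*(ξ^2*|Z ξ|^6)^(1/6:ℝ)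
      = ∫ ξ in Ioi (0:ℝ), ξ^2*S ξ^2*|Z ξ| :=
    setIntegral_congr_fun measurableSet_Ioi (fun ξ hξ => holder_pointwise hξ)
  -- Sobolev for S and Z
  have hPs := radial_sobolev hS hSinf hS'2int hint3
  have hz6 : ∀ ξ : ℝ, ξ^2*|Z ξ|^6 = ξ^2*Z ξ^6 := by
    intro ξ
    congr 1
    rw [← abs_pow]
    exact abs_of_nonneg (by positivity)
  have hPZint : IntegrableOn (fun ξ : ℝ => ξ^2*Z ξ^6) (Ioi 0) :=
    hint4.congr_fun (fun ξ _ => hz6 ξ) measurableSet_Ioi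
  have hPz := radial_sobolev hZ hZinf hint2 hPZint
  have hPzeq : ∫ ξ in Ioi (0:ℝ), ξ^2*|Z ξ|^6 = ∫ ξ in Ioi (0:ℝ), ξ^2*Z ξ^6 :=
    setIntegral_congr_fun measurableSet_Ioi (fun ξ _ => hz6 ξ)
  -- assemble
  have hPs0 : 0 ≤ ∫ ξ in Ioi (0:ℝ), ξ^2*S ξ^6 :=
    setIntegral_nonneg measurableSet_Ioi (fun x _ => by positivity)
  have hPz0 : 0 ≤ ∫ ξ in Ioi (0:ℝ), ξ^2*|Z ξ|^6 :=
    setIntegral_nonneg measurableSet_Ioi (fun x _ => by positivity)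
  apply assemble_arith ha0 hspos hPs0 hPz0 hμ
  · -- a + s ≤ Hölder product
    calc (∫ ξ in Ioi (0:ℝ), ξ^2*(deriv S ξ)^2) + (∫ ξ in Ioi (0:ℝ), ξ^2*S ξ^2)
        = -(∫ ξ in Ioi (0:ℝ), ξ^2*S ξ^2*Z ξ) := hI
      _ ≤ ∫ ξ in Ioi (0:ℝ), ξ^2*S ξ^2*|Z ξ| := hJabs
      _ = ∫ ξ in Ioi (0:ℝ), (ξ^2*S ξ^2)^(3/4:ℝ)*(ξ^2*S ξ^6)^(1/12:ℝ)*(ξ^2*|Z ξ|^6)^(1/6:ℝ) :=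
          hLcongr.symm
      _ ≤ _ := hHold
  · exact hPs
  · rw [hPzeq]
    calc ∫ ξ in Ioi (0:ℝ), ξ^2*Z ξ^6
        ≤ 256/(27*Real.pi^2) * (∫ ξ in Ioi (0:ℝ), ξ^2*(deriv Z ξ)^2)^3 := hPz
      _ = _ := rfl
  · -- b = μ (a+s)
    rw [hI]
    rw [hid2]
    ring
end

section
/- Let μ > 0 and let S, Z : [0,∞) → ℝ be twice continuously differentiable functions solving the reduced soliton-star system S''(ξ) + (2/ξ)S'(ξ) − S(ξ) = S(ξ)Z(ξ) and Z''(ξ) + (2/ξ)Z'(ξ) = μ S(ξ)² for ξ > 0. Assume there exist constants C, a > 0 such that |S(ξ)| + |S'(ξ)| ≤ C e^{−aξ} for all ξ ≥ 0, and that ξZ(ξ) and ξ²Z'(ξ) are bounded on (0,∞) with Z(ξ) → 0 as ξ → ∞. Then ∫₀^∞ ξ²(S'(ξ)² + S(ξ)²) dξ = −∫₀^∞ ξ² S(ξ)² Z(ξ) dξ and ∫₀^∞ ξ² Z'(ξ)² dξ = −μ ∫₀^∞ ξ² S(ξ)² Z(ξ) dξ. -/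
open MeasureTheory Filter Set Topology

lemma sss_aux_hasDeriv (f : ℝ → ℝ) (hf : ContDiffOn ℝ 2 f (Set.Ici 0)) {x : ℝ} (hx : 0 < x) :
    HasDerivAt (fun ξ => ξ ^ 2 * deriv f ξ * f ξ)
      (x ^ 2 * (deriv (deriv f) x + (2 / x) * deriv f x) * f x + x ^ 2 * (deriv f x) ^ 2) x := by
  have hf1 : ContDiffOn ℝ 1 (deriv f) (Set.Ioi 0) :=
    (hf.mono Set.Ioi_subset_Ici_self).deriv_of_isOpen isOpen_Ioi (by norm_num)
  have h2 : HasDerivAt (deriv f) (deriv (deriv f) x) x := by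
    have := ((hf1.differentiableOn one_ne_zero) x hx).differentiableAt (isOpen_Ioi.mem_nhds hx)
    exact this.hasDerivAt
  have h1 : HasDerivAt f (deriv f x) x := by
    have := ((hf.differentiableOn (by norm_num)) x (Set.mem_Ici.2 hx.le)).differentiableAt
      (Ici_mem_nhds hx)
    exact this.hasDerivAt
  have h3 := ((hasDerivAt_pow 2 x).mul h2).mul h1
  refine h3.congr_deriv ?_
  have hx0 : x ≠ 0 := ne_of_gt hx
  simp only [Pi.mul_apply]
  field_simp
  ring

lemma sss_aux_integrable_pow_exp (n : ℕ) {b : ℝ} (hb : 0 < b) :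
    MeasureTheory.IntegrableOn (fun ξ : ℝ => ξ ^ n * Real.exp (-b * ξ)) (Set.Ioi 0) := by
  have h := integrableOn_rpow_mul_exp_neg_mul_rpow (s := (n : ℝ)) (p := 1)
    (by exact_mod_cast neg_one_lt_zero.trans_le (Nat.cast_nonneg n)) zero_lt_one hb
  refine h.congr_fun (fun x hx => ?_) measurableSet_Ioi
  simp only [Real.rpow_natCast, Real.rpow_one]

/-- The integral identities (equation (31)) obtained by multiplying the reduced
soliton-star equations by `S` and `Z` respectively and integrating by parts. -/
theorem soliton_star_integral_identities
    (μ : ℝ) (hμ : 0 < μ) (S Z : ℝ → ℝ)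
    (hS : ContDiffOn ℝ 2 S (Set.Ici 0))
    (hZ : ContDiffOn ℝ 2 Z (Set.Ici 0))
    (heqS : ∀ ξ ∈ Set.Ioi (0:ℝ),
      deriv (deriv S) ξ + (2/ξ) * deriv S ξ - S ξ = S ξ * Z ξ)
    (heqZ : ∀ ξ ∈ Set.Ioi (0:ℝ),
      deriv (deriv Z) ξ + (2/ξ) * deriv Z ξ = μ * S ξ ^ 2)
    (hSdec : ∃ C > 0, ∃ a > 0, ∀ ξ ≥ (0:ℝ),
      |S ξ| + |deriv S ξ| ≤ C * Real.exp (-a * ξ))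
    (hZbd : ∃ B : ℝ, ∀ ξ ∈ Set.Ioi (0:ℝ),
      |ξ * Z ξ| ≤ B ∧ |ξ ^ 2 * deriv Z ξ| ≤ B)
    (hZinf : Tendsto Z atTop (nhds 0)) :
    (∫ ξ in Set.Ioi (0:ℝ), ξ ^ 2 * ((deriv S ξ) ^ 2 + S ξ ^ 2)
        = -∫ ξ in Set.Ioi (0:ℝ), ξ ^ 2 * S ξ ^ 2 * Z ξ) ∧
    (∫ ξ in Set.Ioi (0:ℝ), ξ ^ 2 * (deriv Z ξ) ^ 2
        = -μ * ∫ ξ in Set.Ioi (0:ℝ), ξ ^ 2 * S ξ ^ 2 * Z ξ) := by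
  obtain ⟨C, hC, a, ha, hSd⟩ := hSdec
  obtain ⟨B, hB⟩ := hZbd
  have hB0 : 0 ≤ B := le_trans (abs_nonneg _) (hB 1 (by norm_num)).1
  -- pointwise exponential bounds
  have hSbd : ∀ ξ ≥ (0:ℝ), |S ξ| ≤ C * Real.exp (-a * ξ) := fun ξ hξ =>
    le_trans (le_add_of_nonneg_right (abs_nonneg _)) (hSd ξ hξ)
  have hS'bd : ∀ ξ ≥ (0:ℝ), |deriv S ξ| ≤ C * Real.exp (-a * ξ) := fun ξ hξ =>
    le_trans (le_add_of_nonneg_left (abs_nonneg _)) (hSd ξ hξ)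
  -- continuity facts
  have hScont : ContinuousOn S (Set.Ici 0) := hS.continuousOn
  have hZcont : ContinuousOn Z (Set.Ici 0) := hZ.continuousOn
  have hS'cont : ContinuousOn (deriv S) (Set.Ioi 0) :=
    (hS.mono Set.Ioi_subset_Ici_self).continuousOn_deriv_of_isOpen isOpen_Ioi (by norm_num)
  have hZ'cont : ContinuousOn (deriv Z) (Set.Ioi 0) :=
    (hZ.mono Set.Ioi_subset_Ici_self).continuousOn_deriv_of_isOpen isOpen_Ioi (by norm_num)
  set D : ℝ → ℝ := derivWithin Z (Set.Ici 0) with hD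
  have hDcont : ContinuousOn D (Set.Ici 0) :=
    hZ.continuousOn_derivWithin (uniqueDiffOn_Ici 0) (by norm_num)
  have hDeq : ∀ x : ℝ, 0 < x → D x = deriv Z x := fun x hx =>
    derivWithin_of_mem_nhds (Ici_mem_nhds hx)
  -- the exp-square rewrite
  have hexp2 : ∀ x : ℝ, (Real.exp (-a * x)) ^ 2 = Real.exp (-(2 * a) * x) := by
    intro x; rw [sq, ← Real.exp_add]; ring_nf
  -- derivative identities
  have hFS : ∀ x ∈ Set.Ioi (0:ℝ), HasDerivAt (fun ξ => ξ ^ 2 * deriv S ξ * S ξ)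
      (x ^ 2 * ((deriv S x) ^ 2 + S x ^ 2) + x ^ 2 * S x ^ 2 * Z x) x := by
    intro x hx
    have hx' : (0:ℝ) < x := hx
    have h := sss_aux_hasDeriv S hS hx'
    have he : deriv (deriv S) x + (2 / x) * deriv S x = S x + S x * Z x := by
      have := heqS x hx; linarith
    rw [he] at h
    convert h using 1; ring
  have hFZ : ∀ x ∈ Set.Ioi (0:ℝ), HasDerivAt (fun ξ => ξ ^ 2 * deriv Z ξ * Z ξ)
      (x ^ 2 * (deriv Z x) ^ 2 + μ * (x ^ 2 * S x ^ 2 * Z x)) x := by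
    intro x hx
    have hx' : (0:ℝ) < x := hx
    have h := sss_aux_hasDeriv Z hZ hx'
    rw [heqZ x hx] at h
    convert h using 1; ring
  -- Integrability of the three pieces
  have I1 : IntegrableOn (fun ξ : ℝ => ξ ^ 2 * ((deriv S ξ) ^ 2 + S ξ ^ 2)) (Set.Ioi 0) := by
    have hmeas : AEStronglyMeasurable (fun ξ : ℝ => ξ ^ 2 * ((deriv S ξ) ^ 2 + S ξ ^ 2))
        (volume.restrict (Set.Ioi 0)) := by
      apply ContinuousOn.aestronglyMeasurable ?_ measurableSet_Ioi
      exact (continuousOn_id.pow 2).mul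
        (((hS'cont.pow 2)).add ((hScont.mono Set.Ioi_subset_Ici_self).pow 2))
    refine (((sss_aux_integrable_pow_exp 2 (by linarith : (0:ℝ) < 2 * a)).const_mul
      (C ^ 2)).mono' hmeas ?_)
    filter_upwards [ae_restrict_mem measurableSet_Ioi] with x hx
    have hx0 : (0:ℝ) ≤ x := le_of_lt hx
    have h1 := hSbd x hx0
    have h2 := hS'bd x hx0
    have hkey : (deriv S x) ^ 2 + S x ^ 2 ≤ C ^ 2 * Real.exp (-(2 * a) * x) := by
      have hsum := hSd x hx0
      have h3 : (deriv S x) ^ 2 + S x ^ 2 ≤ (|S x| + |deriv S x|) ^ 2 := by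
        nlinarith [abs_nonneg (S x), abs_nonneg (deriv S x), sq_abs (S x),
          sq_abs (deriv S x), abs_mul_abs_self (S x)]
      calc (deriv S x) ^ 2 + S x ^ 2 ≤ (|S x| + |deriv S x|) ^ 2 := h3
        _ ≤ (C * Real.exp (-a * x)) ^ 2 := by
            apply pow_le_pow_left₀ (by positivity) hsum
        _ = C ^ 2 * Real.exp (-(2 * a) * x) := by rw [mul_pow, hexp2]
    rw [Real.norm_eq_abs, abs_mul, abs_of_nonneg (by positivity : (0:ℝ) ≤ x ^ 2),
      abs_of_nonneg (by positivity : (0:ℝ) ≤ (deriv S x) ^ 2 + S x ^ 2)]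
    calc x ^ 2 * ((deriv S x) ^ 2 + S x ^ 2)
        ≤ x ^ 2 * (C ^ 2 * Real.exp (-(2 * a) * x)) := by
          apply mul_le_mul_of_nonneg_left hkey (by positivity)
      _ = C ^ 2 * (x ^ 2 * Real.exp (-(2 * a) * x)) := by ring
  have I2 : IntegrableOn (fun ξ : ℝ => ξ ^ 2 * S ξ ^ 2 * Z ξ) (Set.Ioi 0) := by
    have hmeas : AEStronglyMeasurable (fun ξ : ℝ => ξ ^ 2 * S ξ ^ 2 * Z ξ)
        (volume.restrict (Set.Ioi 0)) := by
      apply ContinuousOn.aestronglyMeasurable ?_ measurableSet_Ioi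
      exact ((continuousOn_id.pow 2).mul
        ((hScont.mono Set.Ioi_subset_Ici_self).pow 2)).mul
        (hZcont.mono Set.Ioi_subset_Ici_self)
    refine (((sss_aux_integrable_pow_exp 1 (by linarith : (0:ℝ) < 2 * a)).const_mul
      (B * C ^ 2)).mono' hmeas ?_)
    filter_upwards [ae_restrict_mem measurableSet_Ioi] with x hx
    have hx0 : (0:ℝ) < x := hx
    have h1 := hSbd x hx0.le
    have hZx := (hB x hx).1
    have hS2 : S x ^ 2 ≤ C ^ 2 * Real.exp (-(2 * a) * x) := by
      calc S x ^ 2 = |S x| ^ 2 := (sq_abs _).symm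
        _ ≤ (C * Real.exp (-a * x)) ^ 2 := pow_le_pow_left₀ (abs_nonneg _) h1 2
        _ = C ^ 2 * Real.exp (-(2 * a) * x) := by rw [mul_pow, hexp2]
    have : |x ^ 2 * S x ^ 2 * Z x| = |x * Z x| * (x * S x ^ 2) := by
      rw [abs_mul, abs_mul, abs_of_nonneg (by positivity : (0:ℝ) ≤ x ^ 2),
        abs_of_nonneg (by positivity : (0:ℝ) ≤ S x ^ 2)]
      rw [abs_mul, abs_of_nonneg hx0.le]
      ring
    rw [Real.norm_eq_abs, this]
    calc |x * Z x| * (x * S x ^ 2) ≤ B * (x * (C ^ 2 * Real.exp (-(2 * a) * x))) := by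
          apply mul_le_mul hZx ?_ (by positivity) hB0
          exact mul_le_mul_of_nonneg_left hS2 hx0.le
      _ = B * C ^ 2 * (x ^ 1 * Real.exp (-(2 * a) * x)) := by ring
  have I3 : IntegrableOn (fun ξ : ℝ => ξ ^ 2 * (deriv Z ξ) ^ 2) (Set.Ioi 0) := by
    have hmeas : ContinuousOn (fun ξ : ℝ => ξ ^ 2 * (deriv Z ξ) ^ 2) (Set.Ioi 0) :=
      (continuousOn_id.pow 2).mul (hZ'cont.pow 2)
    have hsplit : Set.Ioc (0:ℝ) 1 ∪ Set.Ioi 1 = Set.Ioi 0 := Set.Ioc_union_Ioi_eq_Ioi zero_le_one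
    rw [← hsplit]
    apply IntegrableOn.union
    · -- on Ioc 0 1 : bounded since derivWithin is continuous on the compact [0,1]
      obtain ⟨M, hM⟩ := (isCompact_Icc (a := (0:ℝ)) (b := 1)).exists_bound_of_continuousOn
        (hDcont.mono (by intro x hx; exact hx.1))
      have hmeas' : AEStronglyMeasurable (fun ξ : ℝ => ξ ^ 2 * (deriv Z ξ) ^ 2)
          (volume.restrict (Set.Ioc 0 1)) :=
        ContinuousOn.aestronglyMeasurable (hmeas.mono (Set.Ioc_subset_Ioi_self)) measurableSet_Ioc
      refine (integrableOn_const (C := M ^ 2) measure_Ioc_lt_top.ne).mono' hmeas' ?_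
      filter_upwards [ae_restrict_mem measurableSet_Ioc] with x hx
      have hx0 : (0:ℝ) < x := hx.1
      have hDx := hM x ⟨hx0.le, hx.2⟩
      rw [← hDeq x hx0] at *
      rw [Real.norm_eq_abs, abs_mul, abs_of_nonneg (by positivity : (0:ℝ) ≤ x ^ 2),
        abs_of_nonneg (by positivity : (0:ℝ) ≤ (D x) ^ 2)]
      calc x ^ 2 * D x ^ 2 ≤ 1 * M ^ 2 := by
            apply mul_le_mul ?_ ?_ (by positivity) (by norm_num)
            · nlinarith [hx.2, hx0]
            · have := abs_nonneg (D x)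
              rw [Real.norm_eq_abs] at hDx
              nlinarith [sq_abs (D x)]
        _ = M ^ 2 := one_mul _
    · -- on Ioi 1 : bounded by B^2 * x^(-2)
      have hmeas' : AEStronglyMeasurable (fun ξ : ℝ => ξ ^ 2 * (deriv Z ξ) ^ 2)
          (volume.restrict (Set.Ioi 1)) :=
        ContinuousOn.aestronglyMeasurable
          (hmeas.mono (fun x hx => show (0:ℝ) < x from lt_trans zero_lt_one hx)) measurableSet_Ioi
      refine (((integrableOn_Ioi_rpow_of_lt (by norm_num : (-2:ℝ) < -1)
        zero_lt_one).const_mul (B ^ 2)).mono' hmeas' ?_)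
      filter_upwards [ae_restrict_mem measurableSet_Ioi] with x hx
      have hx1 : (1:ℝ) < x := hx
      have hx0 : (0:ℝ) < x := lt_trans zero_lt_one hx1
      have hZ'x := (hB x (Set.mem_Ioi.2 hx0)).2
      have hrpow : x ^ (-2:ℝ) = (x ^ 2)⁻¹ := by
        rw [show (-2:ℝ) = -((2:ℕ):ℝ) by norm_num, Real.rpow_neg hx0.le, Real.rpow_natCast]
      rw [Real.norm_eq_abs, abs_mul, abs_of_nonneg (by positivity : (0:ℝ) ≤ x ^ 2),
        abs_of_nonneg (by positivity : (0:ℝ) ≤ (deriv Z x) ^ 2), hrpow]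
      rw [← sub_nonneg]
      have key : B ^ 2 * (x ^ 2)⁻¹ - x ^ 2 * (deriv Z x) ^ 2
          = (B ^ 2 - (x ^ 2 * deriv Z x) ^ 2) * (x ^ 2)⁻¹ := by
        field_simp
      rw [key]
      apply mul_nonneg ?_ (by positivity)
      nlinarith [sq_abs (x ^ 2 * deriv Z x), abs_nonneg (x ^ 2 * deriv Z x)]
  -- limits at infinity
  have hg0 : Tendsto (fun x : ℝ => ((2*a)*x) ^ 2 * Real.exp (-((2*a)*x))) atTop (𝓝 0) :=
    (Real.tendsto_pow_mul_exp_neg_atTop_nhds_zero 2).comp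
      (tendsto_id.const_mul_atTop (by linarith))
  have hg : Tendsto (fun x : ℝ => C ^ 2 * (x ^ 2 * Real.exp (-(2*a) * x))) atTop (𝓝 0) := by
    have h := hg0.const_mul (C ^ 2 / (2*a) ^ 2)
    rw [mul_zero] at h
    refine h.congr (fun x => ?_)
    have : -((2*a)*x) = -(2*a) * x := by ring
    rw [this]
    field_simp
  have LS : Tendsto (fun ξ : ℝ => ξ ^ 2 * deriv S ξ * S ξ) atTop (𝓝 0) := by
    apply squeeze_zero_norm' ?_ hg
    filter_upwards [eventually_ge_atTop (0:ℝ)] with x hx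
    rw [Real.norm_eq_abs, abs_mul, abs_mul, abs_of_nonneg (pow_nonneg hx 2)]
    have h := mul_le_mul (mul_le_mul_of_nonneg_left (hS'bd x hx) (pow_nonneg hx 2))
      (hSbd x hx) (abs_nonneg _) (by positivity)
    calc x ^ 2 * |deriv S x| * |S x|
        ≤ x ^ 2 * (C * Real.exp (-a * x)) * (C * Real.exp (-a * x)) := h
      _ = C ^ 2 * (x ^ 2 * Real.exp (-(2*a) * x)) := by rw [← hexp2 x]; ring
  have LZ : Tendsto (fun ξ : ℝ => ξ ^ 2 * deriv Z ξ * Z ξ) atTop (𝓝 0) := by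
    have hzz : Tendsto (fun x => B * |Z x|) atTop (𝓝 (B * |(0:ℝ)|)) := hZinf.abs.const_mul B
    rw [abs_zero, mul_zero] at hzz
    apply squeeze_zero_norm' ?_ hzz
    filter_upwards [eventually_gt_atTop (0:ℝ)] with x hx
    rw [Real.norm_eq_abs, abs_mul]
    exact mul_le_mul_of_nonneg_right ((hB x hx).2) (abs_nonneg _)
  -- continuity at 0
  have CS : ContinuousWithinAt (fun ξ : ℝ => ξ ^ 2 * deriv S ξ * S ξ) (Set.Ici 0) 0 := by
    have ht : Tendsto (fun ξ : ℝ => ξ ^ 2 * deriv S ξ * S ξ) (nhdsWithin 0 (Set.Ici 0))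
        (𝓝 0) := by
      apply squeeze_zero_norm' (a := fun x : ℝ => C ^ 2 * x ^ 2) ?_ ?_
      · filter_upwards [self_mem_nhdsWithin] with x hx
        have hx0 : (0:ℝ) ≤ x := hx
        have he : Real.exp (-a * x) ≤ 1 := by
          rw [Real.exp_le_one_iff]
          nlinarith
        have h1 : |deriv S x| ≤ C := le_trans (hS'bd x hx0)
          (by nlinarith [Real.exp_pos (-a * x)])
        have h2 : |S x| ≤ C := le_trans (hSbd x hx0)
          (by nlinarith [Real.exp_pos (-a * x)])
        rw [Real.norm_eq_abs, abs_mul, abs_mul, abs_of_nonneg (pow_nonneg hx0 2)]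
        calc x ^ 2 * |deriv S x| * |S x| ≤ x ^ 2 * C * C := by
              apply mul_le_mul (mul_le_mul_of_nonneg_left h1 (by positivity)) h2
                (abs_nonneg _) (by positivity)
          _ = C ^ 2 * x ^ 2 := by ring
      · have hc : Continuous (fun x : ℝ => C ^ 2 * x ^ 2) := by continuity
        have := (hc.tendsto (0:ℝ)).mono_left (nhdsWithin_le_nhds (s := Set.Ici 0))
        simpa using this
    have h0 : (0:ℝ) ^ 2 * deriv S 0 * S 0 = 0 := by norm_num
    simpa [ContinuousWithinAt, h0] using ht
  have CZ : ContinuousWithinAt (fun ξ : ℝ => ξ ^ 2 * deriv Z ξ * Z ξ) (Set.Ici 0) 0 := by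
    have hcont : ContinuousWithinAt (fun ξ : ℝ => ξ ^ 2 * D ξ * Z ξ) (Set.Ici 0) 0 :=
      ((continuousWithinAt_id.pow 2).mul (hDcont 0 Set.self_mem_Ici)).mul
        (hZcont 0 Set.self_mem_Ici)
    apply hcont.congr
    · intro y hy
      rcases eq_or_lt_of_le (Set.mem_Ici.1 hy) with h | h
      · rw [← h]; norm_num
      · rw [hDeq y h]
    · norm_num
  -- assemble
  have ES := integral_Ioi_of_hasDerivAt_of_tendsto CS hFS (I1.add I2) LS
  rw [MeasureTheory.integral_add I1 I2] at ES
  norm_num at ES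
  have EZ := integral_Ioi_of_hasDerivAt_of_tendsto CZ hFZ (I3.add (I2.const_mul μ)) LZ
  rw [MeasureTheory.integral_add I3 (I2.const_mul μ),
    MeasureTheory.integral_const_mul] at EZ
  norm_num at EZ
  constructor
  · linarith
  · linarith
end

section
/- Let μ > 0 and let S, Z : [0,∞) → ℝ be twice continuously differentiable functions solving the reduced soliton-star system S''(ξ) + (2/ξ)S'(ξ) − S(ξ) = S(ξ)Z(ξ) and Z''(ξ) + (2/ξ)Z'(ξ) = μ S(ξ)² for ξ > 0, with S not identically zero. Assume there exist constants C, a > 0 such that |S(ξ)| + |S'(ξ)| ≤ C e^{−aξ} for all ξ ≥ 0, and that ξZ(ξ) and ξ²Z'(ξ) are bounded on (0,∞) with Z(ξ) → 0 as ξ → ∞. Then ∫₀^∞ ξ² S(ξ)² Z(ξ) dξ < 0. -/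
open MeasureTheory Filter Set

/-- Negativity of `∫ ξ² S² Z dξ` for a nontrivial decaying solution
(Remark after Step 4 of the proof of Theorem 2): it implies the Lagrange
multiplier `λ` is negative. -/
theorem soliton_star_interaction_negative
    (μ : ℝ) (hμ : 0 < μ) (S Z : ℝ → ℝ)
    (hS : ContDiffOn ℝ 2 S (Set.Ici 0))
    (hZ : ContDiffOn ℝ 2 Z (Set.Ici 0))
    (heqS : ∀ ξ ∈ Set.Ioi (0:ℝ),
      deriv (deriv S) ξ + (2/ξ) * deriv S ξ - S ξ = S ξ * Z ξ)
    (heqZ : ∀ ξ ∈ Set.Ioi (0:ℝ),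
      deriv (deriv Z) ξ + (2/ξ) * deriv Z ξ = μ * S ξ ^ 2)
    (hSne : ∃ ξ ≥ (0:ℝ), S ξ ≠ 0)
    (hSdec : ∃ C > 0, ∃ a > 0, ∀ ξ ≥ (0:ℝ),
      |S ξ| + |deriv S ξ| ≤ C * Real.exp (-a * ξ))
    (hZbd : ∃ B : ℝ, ∀ ξ ∈ Set.Ioi (0:ℝ),
      |ξ * Z ξ| ≤ B ∧ |ξ ^ 2 * deriv Z ξ| ≤ B)
    (hZinf : Tendsto Z atTop (nhds 0)) :
    (∫ ξ in Set.Ioi (0:ℝ), ξ ^ 2 * S ξ ^ 2 * Z ξ) < 0 := by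
  obtain ⟨C, hC, a, ha, hdec⟩ := hSdec
  obtain ⟨B, hB⟩ := hZbd
  have hBpos : (0:ℝ) ≤ B := le_trans (abs_nonneg _) (hB 1 (by norm_num)).1
  have hopen : IsOpen (Ioi (0:ℝ)) := isOpen_Ioi
  have hSo : ContDiffOn ℝ 2 S (Ioi 0) := hS.mono Ioi_subset_Ici_self
  have hS1 : ContDiffOn ℝ 1 (deriv S) (Ioi 0) :=
    hSo.deriv_of_isOpen hopen (by norm_num)
  have hdiffS : ∀ ξ ∈ Ioi (0:ℝ), DifferentiableAt ℝ S ξ := fun ξ hξ =>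
    (hSo.differentiableOn (by norm_num)).differentiableAt (hopen.mem_nhds hξ)
  have hdiffS' : ∀ ξ ∈ Ioi (0:ℝ), DifferentiableAt ℝ (deriv S) ξ := fun ξ hξ =>
    (hS1.differentiableOn (by norm_num)).differentiableAt (hopen.mem_nhds hξ)
  have hcontS : ContinuousOn S (Ioi 0) := hSo.continuousOn
  have hcontS' : ContinuousOn (deriv S) (Ioi 0) :=
    hSo.continuousOn_deriv_of_isOpen hopen (by norm_num)
  have hcontZ : ContinuousOn Z (Ioi 0) := (hZ.mono Ioi_subset_Ici_self).continuousOn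
  -- individual decay bounds
  have hSb : ∀ ξ ≥ (0:ℝ), |S ξ| ≤ C * Real.exp (-a * ξ) := fun ξ hξ =>
    le_trans (le_add_of_nonneg_right (abs_nonneg _)) (hdec ξ hξ)
  have hS'b : ∀ ξ ≥ (0:ℝ), |deriv S ξ| ≤ C * Real.exp (-a * ξ) := fun ξ hξ =>
    le_trans (le_add_of_nonneg_left (abs_nonneg _)) (hdec ξ hξ)
  have hexp2 : ∀ ξ : ℝ, Real.exp (-a * ξ) ^ 2 = Real.exp (-(2*a) * ξ) := by
    intro ξ
    rw [← Real.exp_nat_mul]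
    norm_num
    ring_nf
  set F : ℝ → ℝ := fun ξ => ξ ^ 2 * deriv S ξ * S ξ with hFdef
  set g : ℝ → ℝ := fun ξ => ξ ^ 2 * (deriv S ξ) ^ 2 + ξ ^ 2 * (S ξ) ^ 2 with hgdef
  set h : ℝ → ℝ := fun ξ => ξ ^ 2 * S ξ ^ 2 * Z ξ with hhdef
  -- derivative computation
  have hderiv : ∀ ξ ∈ Ioi (0:ℝ), HasDerivAt F (g ξ + h ξ) ξ := by
    intro ξ hξ
    have hξ0 : (ξ:ℝ) ≠ 0 := ne_of_gt hξ
    have h1 : HasDerivAt (fun t : ℝ => t ^ 2) (2 * ξ) ξ := by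
      simpa using hasDerivAt_pow 2 ξ
    have h2 : HasDerivAt (deriv S) (deriv (deriv S) ξ) ξ := (hdiffS' ξ hξ).hasDerivAt
    have h3 : HasDerivAt S (deriv S ξ) ξ := (hdiffS ξ hξ).hasDerivAt
    have H := (h1.mul h2).mul h3
    have hS'' : deriv (deriv S) ξ = S ξ * Z ξ + S ξ - (2/ξ) * deriv S ξ := by
      have := heqS ξ hξ; linarith
    refine H.congr_deriv ?_
    rw [hS'']
    simp only [Pi.mul_apply, hgdef, hhdef]
    field_simp
    ring
  -- integrability of majorants
  have hmaj : ∀ s : ℝ, (-1:ℝ) < s →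
      IntegrableOn (fun x : ℝ => x ^ s * Real.exp (-(2*a) * x)) (Ioi 0) := by
    intro s hs
    have h2a : (0:ℝ) < 2 * a := by positivity
    have := integrableOn_rpow_mul_exp_neg_mul_rpow hs (by norm_num : (0:ℝ) < 1) h2a
    refine IntegrableOn.congr_fun this ?_ measurableSet_Ioi
    intro x hx
    simp [Real.rpow_one]
  have hmaj2 : IntegrableOn (fun x : ℝ => (2 * C ^ 2) * (x ^ 2 * Real.exp (-(2*a) * x)))
      (Ioi 0) := by
    have := (hmaj 2 (by norm_num)).const_mul (2 * C ^ 2)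
    refine IntegrableOn.congr_fun this ?_ measurableSet_Ioi
    intro x hx
    norm_num [Real.rpow_two]
  have hmaj1 : IntegrableOn (fun x : ℝ => (B * C ^ 2) * (x * Real.exp (-(2*a) * x)))
      (Ioi 0) := by
    have := (hmaj 1 (by norm_num)).const_mul (B * C ^ 2)
    refine IntegrableOn.congr_fun this ?_ measurableSet_Ioi
    intro x hx
    norm_num [Real.rpow_one]
  -- integrability of g
  have hcontg : ContinuousOn g (Ioi 0) :=
    ((continuous_pow 2).continuousOn.mul (hcontS'.pow 2)).add
      ((continuous_pow 2).continuousOn.mul (hcontS.pow 2))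
  have hgbound : ∀ x ∈ Ioi (0:ℝ),
      ‖g x‖ ≤ (2 * C ^ 2) * (x ^ 2 * Real.exp (-(2*a) * x)) := by
    intro x hx
    have hx0 : (0:ℝ) ≤ x := le_of_lt hx
    have h1 : (deriv S x) ^ 2 ≤ C ^ 2 * Real.exp (-(2*a) * x) := by
      have := hS'b x hx0
      calc (deriv S x) ^ 2 = |deriv S x| ^ 2 := (sq_abs _).symm
        _ ≤ (C * Real.exp (-a * x)) ^ 2 := by
            exact pow_le_pow_left₀ (abs_nonneg _) this 2
        _ = C ^ 2 * Real.exp (-(2*a) * x) := by rw [mul_pow, hexp2]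
    have h2 : (S x) ^ 2 ≤ C ^ 2 * Real.exp (-(2*a) * x) := by
      have := hSb x hx0
      calc (S x) ^ 2 = |S x| ^ 2 := (sq_abs _).symm
        _ ≤ (C * Real.exp (-a * x)) ^ 2 := by
            exact pow_le_pow_left₀ (abs_nonneg _) this 2
        _ = C ^ 2 * Real.exp (-(2*a) * x) := by rw [mul_pow, hexp2]
    have hge : g x = x ^ 2 * (deriv S x) ^ 2 + x ^ 2 * (S x) ^ 2 := rfl
    have hgnn : 0 ≤ g x := by rw [hge]; positivity
    rw [Real.norm_eq_abs, abs_of_nonneg hgnn, hge]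
    have hx2 : (0:ℝ) ≤ x ^ 2 := by positivity
    nlinarith [mul_le_mul_of_nonneg_left h1 hx2, mul_le_mul_of_nonneg_left h2 hx2]
  have hgint : IntegrableOn g (Ioi 0) := by
    refine hmaj2.mono' (hcontg.aestronglyMeasurable measurableSet_Ioi) ?_
    exact (ae_restrict_iff' measurableSet_Ioi).2 (Filter.Eventually.of_forall hgbound)
  -- integrability of h
  have hconth : ContinuousOn h (Ioi 0) :=
    (((continuous_pow 2).continuousOn.mul (hcontS.pow 2)).mul hcontZ)
  have hhbound : ∀ x ∈ Ioi (0:ℝ),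
      ‖h x‖ ≤ (B * C ^ 2) * (x * Real.exp (-(2*a) * x)) := by
    intro x hx
    have hx0 : (0:ℝ) < x := hx
    have h2 : (S x) ^ 2 ≤ C ^ 2 * Real.exp (-(2*a) * x) := by
      have := hSb x hx0.le
      calc (S x) ^ 2 = |S x| ^ 2 := (sq_abs _).symm
        _ ≤ (C * Real.exp (-a * x)) ^ 2 := by
            exact pow_le_pow_left₀ (abs_nonneg _) this 2
        _ = C ^ 2 * Real.exp (-(2*a) * x) := by rw [mul_pow, hexp2]
    have hZx : |x * Z x| ≤ B := (hB x hx).1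
    have : ‖h x‖ = (x * |x * Z x|) * (S x)^2 := by
      have hhe : h x = x ^ 2 * S x ^ 2 * Z x := rfl
      rw [Real.norm_eq_abs, hhe, abs_mul, abs_mul,
        abs_of_nonneg (sq_nonneg x), abs_of_nonneg (sq_nonneg (S x)),
        abs_mul, abs_of_pos hx0]
      ring
    rw [this]
    calc (x * |x * Z x|) * (S x)^2 ≤ (x * B) * (C ^ 2 * Real.exp (-(2*a) * x)) := by
          apply mul_le_mul
          · exact mul_le_mul_of_nonneg_left hZx hx0.le
          · exact h2
          · positivity
          · positivity
      _ = (B * C ^ 2) * (x * Real.exp (-(2*a) * x)) := by ring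
  have hhint : IntegrableOn h (Ioi 0) := by
    refine hmaj1.mono' (hconth.aestronglyMeasurable measurableSet_Ioi) ?_
    exact (ae_restrict_iff' measurableSet_Ioi).2 (Filter.Eventually.of_forall hhbound)
  -- continuity of F at 0 from the right
  have hF0 : F 0 = 0 := by simp [hFdef]
  have hFcont : ContinuousWithinAt F (Ici 0) 0 := by
    rw [ContinuousWithinAt, hF0]
    have hbound : ∀ x ∈ Ici (0:ℝ), ‖F x‖ ≤ C ^ 2 * x ^ 2 := by
      intro x hx
      have h1 := hS'b x hx
      have h2 := hSb x hx
      have hexple : Real.exp (-a * x) ≤ 1 := by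
        rw [Real.exp_le_one_iff]
        have : 0 ≤ a * x := mul_nonneg ha.le hx
        linarith
      have h1' : |deriv S x| ≤ C := le_trans h1 (by nlinarith)
      have h2' : |S x| ≤ C := le_trans h2 (by nlinarith)
      have : ‖F x‖ = x ^ 2 * (|deriv S x| * |S x|) := by
        rw [Real.norm_eq_abs, hFdef]
        rw [abs_mul, abs_mul, abs_of_nonneg (sq_nonneg x)]
        ring
      rw [this]
      have : |deriv S x| * |S x| ≤ C * C :=
        mul_le_mul h1' h2' (abs_nonneg _) hC.le
      nlinarith [sq_nonneg x]
    refine squeeze_zero_norm' (a := fun x : ℝ => C ^ 2 * x ^ 2) ?_ ?_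
    · exact eventually_nhdsWithin_of_forall hbound
    · have : Tendsto (fun x : ℝ => C ^ 2 * x ^ 2) (nhds 0) (nhds (C ^ 2 * 0 ^ 2)) := by
        exact (continuous_const.mul (continuous_pow 2)).tendsto 0
      simpa using this.mono_left nhdsWithin_le_nhds
  -- F tends to 0 at infinity
  have hFtop : Tendsto F atTop (nhds 0) := by
    have hkey : Tendsto (fun x : ℝ => (2*a*x) ^ 2 * Real.exp (-(2*a*x))) atTop (nhds 0) := by
      have h2a : (0:ℝ) < 2 * a := by positivity
      exact (Real.tendsto_pow_mul_exp_neg_atTop_nhds_zero 2).comp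
        (Tendsto.const_mul_atTop h2a tendsto_id)
    have hkey' : Tendsto (fun x : ℝ => (C ^ 2 / (2*a) ^ 2) * ((2*a*x) ^ 2 * Real.exp (-(2*a*x))))
        atTop (nhds 0) := by
      simpa using hkey.const_mul (C ^ 2 / (2*a) ^ 2)
    refine squeeze_zero_norm' ?_ hkey'
    filter_upwards [eventually_ge_atTop (0:ℝ)] with x hx
    have h1 := hS'b x hx
    have h2 := hSb x hx
    have hF' : ‖F x‖ = x ^ 2 * (|deriv S x| * |S x|) := by
      rw [Real.norm_eq_abs, hFdef]
      rw [abs_mul, abs_mul, abs_of_nonneg (sq_nonneg x)]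
      ring
    have hss : |deriv S x| * |S x| ≤ C ^ 2 * Real.exp (-(2*a)*x) := by
      have := mul_le_mul h1 h2 (abs_nonneg _) (by positivity)
      calc |deriv S x| * |S x| ≤ (C * Real.exp (-a*x)) * (C * Real.exp (-a*x)) := this
        _ = C ^ 2 * Real.exp (-(2*a)*x) := by
            rw [show (C * Real.exp (-a*x)) * (C * Real.exp (-a*x))
                = C ^ 2 * Real.exp (-a*x) ^ 2 by ring, hexp2]
    have ha2 : ((2:ℝ)*a) ^ 2 ≠ 0 := ne_of_gt (by positivity)
    have : (C ^ 2 / (2*a) ^ 2) * ((2*a*x) ^ 2 * Real.exp (-(2*a*x)))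
        = x ^ 2 * (C ^ 2 * Real.exp (-(2*a)*x)) := by
      rw [show -(2*a*x) = -(2*a)*x by ring]
      field_simp
    rw [hF', this]
    have hx2 : (0:ℝ) ≤ x ^ 2 := sq_nonneg x
    exact mul_le_mul_of_nonneg_left hss hx2
  -- FTC
  have hFTC : (∫ x in Ioi (0:ℝ), (g x + h x)) = 0 - F 0 :=
    integral_Ioi_of_hasDerivAt_of_tendsto hFcont hderiv (hgint.add hhint) hFtop
  rw [hF0, sub_zero] at hFTC
  rw [integral_add hgint hhint] at hFTC
  -- find a point ξ₀ > 0 with S ξ₀ ≠ 0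
  obtain ⟨ξ₀, hξ₀pos, hξ₀ne⟩ : ∃ ξ₀ > (0:ℝ), S ξ₀ ≠ 0 := by
    obtain ⟨ξ₁, hξ₁0, hξ₁ne⟩ := hSne
    rcases lt_or_eq_of_le hξ₁0 with hlt | heq
    · exact ⟨ξ₁, hlt, hξ₁ne⟩
    · subst heq
      have hc : ContinuousWithinAt S (Ioi 0) 0 :=
        ((hS.continuousOn) 0 self_mem_Ici).mono Ioi_subset_Ici_self
      have hev : ∀ᶠ x in nhdsWithin 0 (Ioi (0:ℝ)), S x ≠ 0 :=
        hc.eventually (eventually_ne_nhds hξ₁ne)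
      obtain ⟨ξ₀, hmem, hne⟩ := (eventually_mem_nhdsWithin.and hev).exists
      exact ⟨ξ₀, hmem, hne⟩
  -- positivity of ∫ g
  have hgpos : 0 < ∫ x in Ioi (0:ℝ), g x := by
    have hgnn_ae : (0:ℝ → ℝ) ≤ᶠ[ae (volume.restrict (Ioi 0))] g := by
      refine (ae_restrict_iff' measurableSet_Ioi).2 (Filter.Eventually.of_forall ?_)
      intro x hx
      have hge : g x = x ^ 2 * (deriv S x) ^ 2 + x ^ 2 * (S x) ^ 2 := rfl
      simp only [Pi.zero_apply]
      rw [hge]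
      positivity
    rw [setIntegral_pos_iff_support_of_nonneg_ae hgnn_ae hgint]
    · -- positive measure of support
      set V : Set ℝ := Ioi 0 ∩ g ⁻¹' (Ioi 0) with hVdef
      have hVopen : IsOpen V := hcontg.isOpen_inter_preimage hopen isOpen_Ioi
      have hgξ₀ : 0 < g ξ₀ := by
        have hge : g ξ₀ = ξ₀ ^ 2 * (deriv S ξ₀) ^ 2 + ξ₀ ^ 2 * (S ξ₀) ^ 2 := rfl
        have h1 : 0 < ξ₀ ^ 2 * (S ξ₀) ^ 2 := by positivity
        have h2 : 0 ≤ ξ₀ ^ 2 * (deriv S ξ₀) ^ 2 := by positivity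
        rw [hge]; linarith
      have hmem : ξ₀ ∈ V := ⟨hξ₀pos, hgξ₀⟩
      have hVsub : V ⊆ Function.support g ∩ Ioi 0 := by
        intro x hx
        exact ⟨ne_of_gt hx.2, hx.1⟩
      calc (0:ENNReal) < volume V := hVopen.measure_pos volume ⟨ξ₀, hmem⟩
        _ ≤ volume (Function.support g ∩ Ioi 0) := measure_mono hVsub
  have hint_eq : (∫ x in Ioi (0:ℝ), h x) = - ∫ x in Ioi (0:ℝ), g x := by linarith
  have hfin : (∫ x in Ioi (0:ℝ), h x) < 0 := by rw [hint_eq]; linarith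
  exact hfin
end
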